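/- arXiv:1101.4603 — 8 statements merged into one kernel-verified Lean document; each statement's English description precedes it below -/
import Mathlib

section
/- Every monomial x^a y^b (x^q)^c (x^{q+1})^d with a+b+c+d = s equals x^{(b+d)+q(c+d)} y^{(a+c)+q(a+b)}, and as (a,b,c,d) ranges over all quadruples of nonnegative integers with a+b+c+d = s, the resulting set of exponent pairs ((b+d)+q(c+d), (a+c)+q(a+b)) equals {(i+qj, (s-i)+q(s-j)) : 0 ≤ i, j ≤ s}. -/
/-- Every monomial `(y^{q+1})^a (x y^q)^b (x^q y)^c (x^{q+1})^d` with `a+b+c+d = s`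
equals `x^{(b+d)+q(c+d)} y^{(a+c)+q(a+b)}`, and the resulting set of exponent pairs
equals `{(i+qj, (s-i)+q(s-j)) : 0 ≤ i, j ≤ s}`. -/
theorem stmt_1 (q s : ℕ) (hq : 2 ≤ q) :
    (∀ (M : Type) [CommMonoid M] (x y : M) (a b c d : ℕ), a + b + c + d = s →
      (y ^ (q + 1)) ^ a * (x * y ^ q) ^ b * (x ^ q * y) ^ c * (x ^ (q + 1)) ^ d
        = x ^ ((b + d) + q * (c + d)) * y ^ ((a + c) + q * (a + b))) ∧
    {e : ℕ × ℕ | ∃ a b c d : ℕ, a + b + c + d = s ∧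
        e = ((b + d) + q * (c + d), (a + c) + q * (a + b))} =
    {e : ℕ × ℕ | ∃ i j : ℕ, i ≤ s ∧ j ≤ s ∧ e = (i + q * j, (s - i) + q * (s - j))} := by
  constructor
  · intro M _ x y a b c d _
    rw [show (b + d) + q * (c + d) = b + q * c + (q + 1) * d by ring,
      show (a + c) + q * (a + b) = (q + 1) * a + q * b + c by ring,
      mul_pow, mul_pow, ← pow_mul, ← pow_mul, ← pow_mul, ← pow_mul,
      pow_add, pow_add, pow_add, pow_add]
    ac_rfl
  · ext ⟨u, v⟩
    simp only [Set.mem_setOf_eq, Prod.mk.injEq]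
    constructor
    · rintro ⟨a, b, c, d, hs, h1, h2⟩
      refine ⟨b + d, c + d, by omega, by omega, h1, ?_⟩
      rw [h2, show s - (b + d) = a + c by omega, show s - (c + d) = a + b by omega]
    · rintro ⟨i, j, hi, hj, h1, h2⟩
      refine ⟨s - max i j, i - min i j, j - min i j, min i j, by omega, ?_, ?_⟩
      · rw [h1, show i - min i j + min i j = i by omega,
          show j - min i j + min i j = j by omega]
      · rw [h2, show s - max i j + (j - min i j) = s - i by omega,
          show s - max i j + (i - min i j) = s - j by omega]
end

section
/- For an integer 0 ≤ s < q, the evaluation code C_H(s) on the hyperbolic quadric H ⊂ P³ over F_q (given by x₀x₃ − x₁x₂ = 0) has length (q+1)², dimension (s+1)², and minimum distance (q−s+1)². -/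
open MvPolynomial Set Polynomial

set_option linter.unusedSectionVars false
namespace Stmt4Aux

variable {F : Type} [Field F] [Fintype F]

/-- Evaluation of monomial `x^i` on a normalized point of `P¹` (relative to degree `s`). -/
def nu (s i : ℕ) : Option F → F
  | some a => a ^ i
  | none => if i = s then 1 else 0

@[simp] lemma nu_some (s i : ℕ) (a : F) : nu s i (some a) = a ^ i := rfl
@[simp] lemma nu_none (s i : ℕ) : (nu s i (none : Option F)) = if i = s then 1 else 0 := rfl

/-- Segre parametrization of the quadric, with normalized coordinates. -/
def pt : Option F → Option F → Fin 4 → F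
  | some a, some b => ![1, b, a, a * b]
  | some a, none => ![0, 1, 0, a]
  | none, some b => ![0, 0, 1, b]
  | none, none => ![0, 0, 0, 1]

lemma prod_pow_pt {s : ℕ} (u v : Option F) (d : Fin 4 → ℕ)
    (hd : d 0 + d 1 + d 2 + d 3 = s) :
    (∏ i, pt u v i ^ d i) = nu s (d 2 + d 3) u * nu s (d 1 + d 3) v := by
  rw [Fin.prod_univ_four]
  match u, v with
  | some a, some b =>
    simp only [pt, nu, Matrix.cons_val_zero, Matrix.cons_val_one, Matrix.head_cons,
      Matrix.cons_val_two, Matrix.tail_cons, Matrix.cons_val_three]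
    rw [mul_pow, pow_add, pow_add]
    ring
  | some a, none =>
    simp only [pt, nu, Matrix.cons_val_zero, Matrix.cons_val_one, Matrix.head_cons,
      Matrix.cons_val_two, Matrix.tail_cons, Matrix.cons_val_three]
    by_cases h0 : d 0 = 0
    · by_cases h2 : d 2 = 0
      · have : d 1 + d 3 = s := by omega
        simp [h0, h2, this]
      · rw [zero_pow h2]
        have : ¬ (d 1 + d 3 = s) := by omega
        simp [this]
    · rw [zero_pow h0]
      have : ¬ (d 1 + d 3 = s) := by omega
      simp [this]
  | none, some b =>
    simp only [pt, nu, Matrix.cons_val_zero, Matrix.cons_val_one, Matrix.head_cons,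
      Matrix.cons_val_two, Matrix.tail_cons, Matrix.cons_val_three]
    by_cases h0 : d 0 = 0
    · by_cases h1 : d 1 = 0
      · have : d 2 + d 3 = s := by omega
        simp [h0, h1, this]
      · rw [zero_pow h1]
        have : ¬ (d 2 + d 3 = s) := by omega
        simp [this]
    · rw [zero_pow h0]
      have : ¬ (d 2 + d 3 = s) := by omega
      simp [this]
  | none, none =>
    simp only [pt, nu, Matrix.cons_val_zero, Matrix.cons_val_one, Matrix.head_cons,
      Matrix.cons_val_two, Matrix.tail_cons, Matrix.cons_val_three]
    by_cases h0 : d 0 = 0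
    · by_cases h1 : d 1 = 0
      · by_cases h2 : d 2 = 0
        · have h3 : d 3 = s := by omega
          simp [h0, h1, h2, h3]
        · rw [zero_pow h2]
          have : ¬ (d 1 + d 3 = s) := by omega
          simp [this]
      · rw [zero_pow h1]
        have : ¬ (d 2 + d 3 = s) := by omega
        simp [this]
    · rw [zero_pow h0]
      have : ¬ (d 2 + d 3 = s) := by omega
      simp [this]

lemma degree_sum_eq {s : ℕ} {d : Fin 4 →₀ ℕ} (h : d.degree = s) :
    d 0 + d 1 + d 2 + d 3 = s := by
  have : ∑ i : Fin 4, d i = s := by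
    rw [← h, Finsupp.degree]
    exact (Finset.sum_subset (Finset.subset_univ _)
      (fun i _ hi => Finsupp.notMem_support_iff.mp hi)).symm
  rw [Fin.sum_univ_four] at this
  exact this


lemma eval_pt {s : ℕ} {f : MvPolynomial (Fin 4) F} (hf : f.IsHomogeneous s)
    (u v : Option F) :
    MvPolynomial.eval (pt u v) f
      = ∑ d ∈ f.support, f.coeff d * (nu s (d 2 + d 3) u * nu s (d 1 + d 3) v) := by
  rw [MvPolynomial.eval_eq']
  refine Finset.sum_congr rfl fun d hd => ?_
  congr 1
  have hdeg : d.degree = s := by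
    have := hf (MvPolynomial.mem_support_iff.mp hd)
    rw [Finsupp.degree_eq_weight_one]; exact this
  exact prod_pow_pt u v d (degree_sum_eq hdeg)

/-- the bidegree-(s,s) monomial functions on `P¹ × P¹`. -/
def mfun (s : ℕ) (ij : Fin (s + 1) × Fin (s + 1)) : Option F × Option F → F :=
  fun x => nu s ij.1 x.1 * nu s ij.2 x.2

/-- The tensor code. -/
def T (F : Type) [Field F] [Fintype F] (s : ℕ) : Submodule F (Option F × Option F → F) :=
  Submodule.span F (Set.range (mfun s))

/-- The (extended) Reed-Solomon code. -/
def RS (F : Type) [Field F] [Fintype F] (s : ℕ) : Submodule F (Option F → F) :=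
  Submodule.span F (Set.range fun i : Fin (s + 1) => (nu s i : Option F → F))

/-- each `mfun` is the evaluation of a homogeneous monomial of degree `s`. -/
lemma mfun_eq_eval (s : ℕ) (ij : Fin (s + 1) × Fin (s + 1)) :
    ∃ f : MvPolynomial (Fin 4) F, f.IsHomogeneous s ∧
      mfun s ij = fun x : Option F × Option F => MvPolynomial.eval (pt x.1 x.2) f := by
  obtain ⟨⟨i, hi⟩, ⟨j, hj⟩⟩ := ij
  have hi' : i ≤ s := by omega
  have hj' : j ≤ s := by omega
  set g : Fin 4 → ℕ := ![s - max i j, j - min i j, i - min i j, min i j] with hg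
  set d : Fin 4 →₀ ℕ := Finsupp.equivFunOnFinite.symm g with hdd
  have hdi : ∀ k, d k = g k := fun k => rfl
  have hsum : g 0 + g 1 + g 2 + g 3 = s := by
    simp only [hg, Matrix.cons_val_zero, Matrix.cons_val_one, Matrix.head_cons,
      Matrix.cons_val_two, Matrix.tail_cons, Matrix.cons_val_three]
    omega
  have hdeg : d.degree = s := by
    have h4 := degree_sum_eq (d := d) (s := d.degree) rfl
    simp only [hdi] at h4
    omega
  refine ⟨MvPolynomial.monomial d 1, MvPolynomial.isHomogeneous_monomial 1 hdeg, ?_⟩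
  funext x
  rw [MvPolynomial.eval_monomial]
  rw [Finsupp.prod_fintype _ _ (fun k => pow_zero _)]
  have := prod_pow_pt (s := s) x.1 x.2 (fun k => d k) (by simp only [hdi]; exact hsum)
  rw [this]
  have e2 : d 2 + d 3 = i := by simp only [hdi, hg]; simp
  have e3 : d 1 + d 3 = j := by simp only [hdi, hg]; simp
  rw [e2, e3]
  simp [mfun]


/-- The span of the evaluation vectors equals the tensor code. -/
lemma span_eval_eq (s : ℕ) :
    Submodule.span F {w : Option F × Option F → F |
        ∃ f : MvPolynomial (Fin 4) F, f.IsHomogeneous s ∧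
          w = fun x : Option F × Option F => MvPolynomial.eval (pt x.1 x.2) f}
      = T F s := by
  apply le_antisymm
  · rw [Submodule.span_le]
    rintro w ⟨f, hf, rfl⟩
    have : (fun x : Option F × Option F => MvPolynomial.eval (pt x.1 x.2) f)
        = ∑ d ∈ f.support, f.coeff d •
            (fun x : Option F × Option F => nu s (d 2 + d 3) x.1 * nu s (d 1 + d 3) x.2) := by
      funext x
      rw [Finset.sum_apply]
      rw [eval_pt hf x.1 x.2]
      rfl
    rw [this]
    refine Submodule.sum_mem _ fun d hd => Submodule.smul_mem _ _ ?_
    have h2 : d 2 + d 3 ≤ s := by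
      have hdeg : d.degree = s := by
        have := hf (MvPolynomial.mem_support_iff.mp hd)
        rw [Finsupp.degree_eq_weight_one]; exact this
      have := degree_sum_eq hdeg
      omega
    have h1 : d 1 + d 3 ≤ s := by
      have hdeg : d.degree = s := by
        have := hf (MvPolynomial.mem_support_iff.mp hd)
        rw [Finsupp.degree_eq_weight_one]; exact this
      have := degree_sum_eq hdeg
      omega
    exact Submodule.subset_span ⟨(⟨d 2 + d 3, by omega⟩, ⟨d 1 + d 3, by omega⟩), rfl⟩
  · rw [T, Submodule.span_le]
    rintro w ⟨ij, rfl⟩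
    obtain ⟨f, hf, hw⟩ := mfun_eq_eval (F := F) s ij
    exact Submodule.subset_span ⟨f, hf, hw⟩

lemma nu_li {s : ℕ} (hs : s < Fintype.card F) :
    LinearIndependent F (fun i : Fin (s + 1) => (nu s i : Option F → F)) := by
  rw [Fintype.linearIndependent_iff]
  intro g hg i
  set p : Polynomial F := ∑ i : Fin (s + 1), Polynomial.C (g i) * Polynomial.X ^ (i : ℕ)
    with hp
  have heval : ∀ a : F, p.eval a = 0 := by
    intro a
    have := congrFun hg (some a)
    simp only [Finset.sum_apply, Pi.smul_apply, Pi.zero_apply, smul_eq_mul, nu] at this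
    simpa [hp, Polynomial.eval_finset_sum] using this
  have hdeg : p.natDegree ≤ s := by
    refine Polynomial.natDegree_sum_le_of_forall_le _ _ fun i _ => ?_
    refine (Polynomial.natDegree_C_mul_le _ _).trans ?_
    simp only [Polynomial.natDegree_X_pow]
    omega
  have hp0 : p = 0 :=
    Polynomial.eq_zero_of_natDegree_lt_card_of_eval_eq_zero p Function.injective_id
      (fun a => heval a) (by simpa using lt_of_le_of_lt hdeg hs)
  have := congrArg (fun q => Polynomial.coeff q (i : ℕ)) hp0
  simp only [hp, Polynomial.finset_sum_coeff, Polynomial.coeff_C_mul,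
    Polynomial.coeff_X_pow, Polynomial.coeff_zero, mul_ite, mul_one, mul_zero] at this
  simp only [Fin.val_inj, Finset.sum_ite_eq, Finset.mem_univ, if_pos] at this
  exact this


lemma mfun_li {s : ℕ} (hs : s < Fintype.card F) :
    LinearIndependent F (mfun (F := F) s) := by
  have hnu := nu_li (F := F) hs
  rw [Fintype.linearIndependent_iff] at hnu ⊢
  intro g hg ij
  have key : ∀ (j : Fin (s + 1)) (u : Option F), ∑ i : Fin (s + 1), g (i, j) * nu s i u = 0 := by
    intro j u
    have h1 : ∑ jj : Fin (s + 1), (∑ i : Fin (s + 1), g (i, jj) * nu s i u) • (nu s jj : Option F → F) = 0 := by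
      funext v
      have := congrFun hg (u, v)
      simp only [Finset.sum_apply, Pi.smul_apply, Pi.zero_apply, smul_eq_mul, mfun] at this ⊢
      rw [← this, Fintype.sum_prod_type]
      rw [Finset.sum_comm]
      refine Finset.sum_congr rfl fun jj _ => ?_
      rw [Finset.sum_mul]
      refine Finset.sum_congr rfl fun ii _ => ?_
      ring
    exact hnu _ h1 j
  have h2 : ∀ j : Fin (s + 1), ∑ i : Fin (s + 1), g (i, j) • (nu s i : Option F → F) = 0 := by
    intro j
    funext u
    simpa [Finset.sum_apply] using key j u
  have := hnu _ (h2 ij.2) ij.1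
  simpa using this

set_option maxHeartbeats 1000000 in
lemma finrank_T {s : ℕ} (hs : s < Fintype.card F) :
    Module.finrank F (T F s) = (s + 1) ^ 2 := by
  have h := finrank_span_eq_card (R := F) (b := mfun (F := F) s) (mfun_li hs)
  rw [T, h]
  simp [sq]

lemma row_mem_RS {s : ℕ} {M : Option F × Option F → F} (hM : M ∈ T F s) (a : Option F) :
    (fun v => M (a, v)) ∈ RS F s := by
  induction hM using Submodule.span_induction with
  | mem x hx =>
    obtain ⟨ij, rfl⟩ := hx
    have : (fun v => mfun (F := F) s ij (a, v)) = nu s ij.1 a • (nu s ij.2 : Option F → F) := by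
      funext v; simp [mfun]
    rw [this]
    exact Submodule.smul_mem _ _ (Submodule.subset_span ⟨ij.2, rfl⟩)
  | zero => exact Submodule.zero_mem _
  | add x y hx hy ihx ihy => exact Submodule.add_mem _ ihx ihy
  | smul c x hx ihx => exact Submodule.smul_mem _ _ ihx

lemma col_mem_RS {s : ℕ} {M : Option F × Option F → F} (hM : M ∈ T F s) (b : Option F) :
    (fun u => M (u, b)) ∈ RS F s := by
  induction hM using Submodule.span_induction with
  | mem x hx =>
    obtain ⟨ij, rfl⟩ := hx
    have : (fun u => mfun (F := F) s ij (u, b)) = nu s ij.2 b • (nu s ij.1 : Option F → F) := by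
      funext u; simp [mfun]; ring
    rw [this]
    exact Submodule.smul_mem _ _ (Submodule.subset_span ⟨ij.1, rfl⟩)
  | zero => exact Submodule.zero_mem _
  | add x y hx hy ihx ihy => exact Submodule.add_mem _ ihx ihy
  | smul c x hx ihx => exact Submodule.smul_mem _ _ ihx

lemma tensor_mem {s : ℕ} {w₁ w₂ : Option F → F} (h₁ : w₁ ∈ RS F s) (h₂ : w₂ ∈ RS F s) :
    (fun x : Option F × Option F => w₁ x.1 * w₂ x.2) ∈ T F s := by
  induction h₁ using Submodule.span_induction with
  | mem x hx =>
    obtain ⟨i, rfl⟩ := hx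
    induction h₂ using Submodule.span_induction with
    | mem y hy =>
      obtain ⟨j, rfl⟩ := hy
      exact Submodule.subset_span ⟨(i, j), rfl⟩
    | zero =>
      convert Submodule.zero_mem (T F s) using 1
      funext x; simp
    | add y z hy hz ihy ihz =>
      have : (fun x : Option F × Option F => nu s i x.1 * (y + z) x.2)
          = (fun x : Option F × Option F => nu s i x.1 * y x.2)
            + fun x : Option F × Option F => nu s i x.1 * z x.2 := by
        funext x; simp [mul_add]
      rw [this]; exact Submodule.add_mem _ ihy ihz
    | smul c y hy ihy =>
      have : (fun x : Option F × Option F => nu s i x.1 * (c • y) x.2)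
          = c • fun x : Option F × Option F => nu s i x.1 * y x.2 := by
        funext x; simp; ring
      rw [this]; exact Submodule.smul_mem _ _ ihy
  | zero =>
    convert Submodule.zero_mem (T F s) using 1
    funext z; simp
  | add x y hx hy ihx ihy =>
    have : (fun z : Option F × Option F => (x + y) z.1 * w₂ z.2)
        = (fun z : Option F × Option F => x z.1 * w₂ z.2)
          + fun z : Option F × Option F => y z.1 * w₂ z.2 := by
      funext z; simp [add_mul]
    rw [this]; exact Submodule.add_mem _ ihx ihy
  | smul c x hx ihx =>
    have : (fun z : Option F × Option F => (c • x) z.1 * w₂ z.2)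
        = c • fun z : Option F × Option F => x z.1 * w₂ z.2 := by
      funext z; simp [mul_assoc]
    rw [this]; exact Submodule.smul_mem _ _ ihx


lemma ncard_option_pos {P : Option F → Prop} (h : P none) :
    {u : Option F | P u}.ncard = {a : F | P (some a)}.ncard + 1 := by
  have he : {u : Option F | P u} = insert none (Option.some '' {a : F | P (some a)}) := by
    ext u
    cases u with
    | none => simp [h]
    | some a => simp
  rw [he, Set.ncard_insert_of_notMem (by simp),
    Set.ncard_image_of_injective _ (Option.some_injective F)]

lemma ncard_option_neg {P : Option F → Prop} (h : ¬ P none) :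
    {u : Option F | P u}.ncard = {a : F | P (some a)}.ncard := by
  have he : {u : Option F | P u} = Option.some '' {a : F | P (some a)} := by
    ext u
    cases u with
    | none => simp [h]
    | some a => simp
  rw [he, Set.ncard_image_of_injective _ (Option.some_injective F)]

lemma card_eval_zero (p : Polynomial F) (hp : p ≠ 0) :
    {a : F | p.eval a = 0}.ncard ≤ p.natDegree := by
  classical
  have he : {a : F | p.eval a = 0} = ↑p.roots.toFinset := by
    ext a
    simp [Polynomial.mem_roots, hp, Polynomial.IsRoot]
  rw [he, Set.ncard_coe_finset]
  exact (Multiset.toFinset_card_le _).trans (Polynomial.card_roots' p)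

lemma card_eval_ne_zero (p : Polynomial F) (hp : p ≠ 0) :
    Fintype.card F - p.natDegree ≤ {a : F | p.eval a ≠ 0}.ncard := by
  have h1 : {a : F | p.eval a = 0}.ncard + {a : F | p.eval a = 0}ᶜ.ncard = Fintype.card F := by
    rw [Set.ncard_add_ncard_compl, Nat.card_eq_fintype_card]
  have h2 : {a : F | p.eval a = 0}ᶜ = {a : F | p.eval a ≠ 0} := by
    ext a; simp
  rw [h2] at h1
  have h3 := card_eval_zero p hp
  omega

/-- every nonzero element of `RS` has weight at least `q - s + 1`. -/
lemma RS_wt {s : ℕ} (hs : s < Fintype.card F) {w : Option F → F}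
    (hw : w ∈ RS F s) (h0 : w ≠ 0) :
    Fintype.card F - s + 1 ≤ {u : Option F | w u ≠ 0}.ncard := by
  classical
  rw [RS, Submodule.mem_span_range_iff_exists_fun] at hw
  obtain ⟨c, hc⟩ := hw
  set p : Polynomial F := ∑ i : Fin (s + 1), Polynomial.C (c i) * Polynomial.X ^ (i : ℕ)
    with hp
  have hval : ∀ a : F, w (some a) = p.eval a := by
    intro a
    rw [← hc]
    simp [hp, Polynomial.eval_finset_sum, Finset.sum_apply, nu]
  have hnone : w none = c ⟨s, by omega⟩ := by
    rw [← hc]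
    simp only [Finset.sum_apply, Pi.smul_apply, smul_eq_mul, nu]
    rw [Finset.sum_eq_single (⟨s, by omega⟩ : Fin (s + 1))]
    · simp
    · intro i _ hi
      have h' : (i : ℕ) ≠ s := fun h => hi (by ext; simp [h])
      rw [if_neg h', mul_zero]
    · simp
  have hcoeff : p.coeff s = c ⟨s, by omega⟩ := by
    simp only [hp, Polynomial.finset_sum_coeff, Polynomial.coeff_C_mul,
      Polynomial.coeff_X_pow, mul_ite, mul_one, mul_zero]
    rw [Finset.sum_eq_single (⟨s, by omega⟩ : Fin (s + 1))]
    · simp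
    · intro i _ hi
      have h' : (i : ℕ) ≠ s := fun h => hi (by ext; simp [h])
      rw [if_neg (fun h : s = (i : ℕ) => h' h.symm)]
    · simp
  have hdeg : p.natDegree ≤ s := by
    refine Polynomial.natDegree_sum_le_of_forall_le _ _ fun i _ => ?_
    refine (Polynomial.natDegree_C_mul_le _ _).trans ?_
    simp only [Polynomial.natDegree_X_pow]
    omega
  by_cases hcs : w none = 0
  · -- the polynomial is nonzero of degree < s
    have hpne : p ≠ 0 := by
      intro hp0
      apply h0
      funext u
      cases u with
      | none => exact hcs
      | some a => rw [hval a, hp0]; simp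
    have hdeg' : p.natDegree < s := by
      rcases Nat.lt_or_ge p.natDegree s with h | h
      · exact h
      · exfalso
        have : p.natDegree = s := le_antisymm hdeg h
        have hl := Polynomial.leadingCoeff_ne_zero.mpr hpne
        rw [Polynomial.leadingCoeff, this, hcoeff, ← hnone] at hl
        exact hl hcs
    have := card_eval_ne_zero p hpne
    have hset : {a : F | w (some a) ≠ 0} = {a : F | p.eval a ≠ 0} := by
      ext a; simp [hval]
    rw [ncard_option_neg (by simpa using hcs), hset]
    omega
  · have hpne : p ≠ 0 := by
      intro hp0
      apply hcs
      rw [hnone, ← hcoeff, hp0, Polynomial.coeff_zero]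
    have := card_eval_ne_zero p hpne
    have hset : {a : F | w (some a) ≠ 0} = {a : F | p.eval a ≠ 0} := by
      ext a; simp [hval]
    rw [ncard_option_pos (P := fun u => w u ≠ 0) hcs, hset]
    omega

/-- there is a codeword of `RS` of weight exactly `q - s + 1`. -/
lemma RS_exists {s : ℕ} (hs : s < Fintype.card F) :
    ∃ w : Option F → F, w ∈ RS F s ∧ w none = 1 ∧
      {u : Option F | w u ≠ 0}.ncard = Fintype.card F - s + 1 := by
  classical
  obtain ⟨t, -, hts⟩ := Finset.exists_subset_card_eq
    (s := (Finset.univ : Finset F)) (n := s) (by simpa using le_of_lt hs)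
  set p : Polynomial F := ∏ a ∈ t, (Polynomial.X - Polynomial.C a) with hp
  have hmonic : p.Monic := Polynomial.monic_prod_of_monic _ _ fun a _ => Polynomial.monic_X_sub_C a
  have hdeg : p.natDegree = s := by
    rw [hp, Polynomial.natDegree_prod _ _ fun a _ => Polynomial.X_sub_C_ne_zero a]
    simp [hts]
  set w : Option F → F := fun u => Option.elim u 1 fun a => p.eval a with hw
  refine ⟨w, ?_, rfl, ?_⟩
  · rw [RS, Submodule.mem_span_range_iff_exists_fun]
    refine ⟨fun i => p.coeff i, ?_⟩
    funext u
    cases u with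
    | none =>
      simp only [Finset.sum_apply, Pi.smul_apply, smul_eq_mul, nu]
      rw [Finset.sum_eq_single (⟨s, by omega⟩ : Fin (s + 1))]
      · simpa [hw] using by
          have := hmonic.leadingCoeff
          rwa [Polynomial.leadingCoeff, hdeg] at this
      · intro i _ hi
        have h' : (i : ℕ) ≠ s := fun h => hi (by ext; simp [h])
        rw [if_neg h', mul_zero]
      · simp
    | some a =>
      simp only [Finset.sum_apply, Pi.smul_apply, smul_eq_mul, nu_some, hw, Option.elim]
      rw [Polynomial.eval_eq_sum_range' (n := s + 1) (by rw [hdeg]; omega)]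
      rw [← Fin.sum_univ_eq_sum_range]
  · rw [ncard_option_pos (P := fun u => w u ≠ 0) (by simp [hw])]
    have hset : {a : F | w (some a) ≠ 0} = (↑t : Set F)ᶜ := by
      ext a
      simp only [hw, Option.elim, Set.mem_setOf_eq, Set.mem_compl_iff, Finset.coe_sort_coe,
        Finset.mem_coe]
      rw [hp, Polynomial.eval_prod]
      rw [Finset.prod_ne_zero_iff]
      constructor
      · intro h ha
        have := h a ha
        simp at this
      · intro ha b hb
        simp only [Polynomial.eval_sub, Polynomial.eval_X, Polynomial.eval_C, sub_ne_zero]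
        rintro rfl
        exact ha hb
    rw [hset]
    have := Set.ncard_add_ncard_compl (↑t : Set F)
    rw [Set.ncard_coe_finset, Nat.card_eq_fintype_card, hts] at this
    omega


lemma ncard_prod {α β : Type*} (A : Set α) (B : Set β) :
    (A ×ˢ B).ncard = A.ncard * B.ncard := by
  rw [← Nat.card_coe_set_eq, ← Nat.card_coe_set_eq, ← Nat.card_coe_set_eq]
  rw [Nat.card_congr (Equiv.Set.prod A B)]
  exact Nat.card_prod _ _

/-- a minimum-weight codeword of the tensor code. -/
lemma T_exists {s : ℕ} (hs : s < Fintype.card F) :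
    ∃ M : Option F × Option F → F, M ∈ T F s ∧ M ≠ 0 ∧
      {x : Option F × Option F | M x ≠ 0}.ncard = (Fintype.card F - s + 1) ^ 2 := by
  obtain ⟨w, hw, hw1, hwt⟩ := RS_exists (F := F) hs
  refine ⟨fun x => w x.1 * w x.2, tensor_mem hw hw, ?_, ?_⟩
  · intro h
    have := congrFun h (none, none)
    rw [hw1] at this
    simpa using this
  · have hset : {x : Option F × Option F | w x.1 * w x.2 ≠ 0}
        = {u : Option F | w u ≠ 0} ×ˢ {u : Option F | w u ≠ 0} := by
      ext ⟨u, v⟩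
      simp [mul_ne_zero_iff]
    rw [hset, ncard_prod, hwt, sq]

/-- minimum-distance lower bound for the tensor code. -/
lemma T_wt {s : ℕ} (hs : s < Fintype.card F) {M : Option F × Option F → F}
    (hM : M ∈ T F s) (h0 : M ≠ 0) :
    (Fintype.card F - s + 1) ^ 2 ≤ {x : Option F × Option F | M x ≠ 0}.ncard := by
  classical
  set d := Fintype.card F - s + 1 with hd
  obtain ⟨⟨a, b⟩, hab⟩ : ∃ x, M x ≠ 0 := by
    by_contra h
    push_neg at h
    exact h0 (funext fun x => h x)
  -- the row through (a, b)
  have hrow : (fun v => M (a, v)) ∈ RS F s := row_mem_RS hM a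
  have hrow0 : (fun v => M (a, v)) ≠ 0 := by
    intro h
    exact hab (congrFun h b)
  have hB : d ≤ {v : Option F | M (a, v) ≠ 0}.ncard := RS_wt hs hrow hrow0
  -- Finset versions
  set S : Set (Option F × Option F) := {x | M x ≠ 0} with hS
  set Sf : Finset (Option F × Option F) := (Set.toFinite S).toFinset with hSf
  set Bf : Finset (Option F) := (Set.toFinite {v : Option F | M (a, v) ≠ 0}).toFinset with hBf
  have hBcard : d ≤ Bf.card := by
    rwa [hBf, ← Set.ncard_eq_toFinset_card]
  have hcols : ∀ b' ∈ Bf, d ≤ (Sf.filter (fun x => x.2 = b')).card := by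
    intro b' hb'
    have hb'' : M (a, b') ≠ 0 := by
      rw [hBf, Set.Finite.mem_toFinset] at hb'
      exact hb'
    have hcol : (fun u => M (u, b')) ∈ RS F s := col_mem_RS hM b'
    have hcol0 : (fun u => M (u, b')) ≠ 0 := by
      intro h
      exact hb'' (congrFun h a)
    have hA : d ≤ {u : Option F | M (u, b') ≠ 0}.ncard := RS_wt hs hcol hcol0
    have hbij : (Sf.filter (fun x => x.2 = b')).card
        = (Set.toFinite {u : Option F | M (u, b') ≠ 0}).toFinset.card := by
      refine Finset.card_bij' (fun x _ => x.1) (fun u _ => (u, b')) ?_ ?_ ?_ ?_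
      · rintro ⟨u, v⟩ hx
        simp only [Finset.mem_filter, hSf, Set.Finite.mem_toFinset, hS, Set.mem_setOf_eq] at hx
        obtain ⟨h1, rfl⟩ := hx
        rw [Set.Finite.mem_toFinset]
        exact h1
      · intro u hu
        rw [Set.Finite.mem_toFinset] at hu
        simp only [Finset.mem_filter, hSf, Set.Finite.mem_toFinset, hS, Set.mem_setOf_eq]
        exact ⟨hu, trivial⟩
      · rintro ⟨u, v⟩ hx
        simp only [Finset.mem_filter, hSf] at hx
        simp [hx.2]
      · intro u hu
        rfl
    rw [hbij, ← Set.ncard_eq_toFinset_card]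
    exact hA
  have htotal : Sf.card = ∑ b' ∈ (Finset.univ : Finset (Option F)),
      (Sf.filter (fun x => x.2 = b')).card :=
    Finset.card_eq_sum_card_fiberwise (fun x _ => Finset.mem_univ x.2)
  have h1 : ∑ b' ∈ Bf, (Sf.filter (fun x => x.2 = b')).card
      ≤ ∑ b' ∈ (Finset.univ : Finset (Option F)), (Sf.filter (fun x => x.2 = b')).card :=
    Finset.sum_le_sum_of_subset (Finset.subset_univ _)
  have h2 : Bf.card * d ≤ ∑ b' ∈ Bf, (Sf.filter (fun x => x.2 = b')).card := by
    calc Bf.card * d = ∑ _b' ∈ Bf, d := by rw [Finset.sum_const, smul_eq_mul]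
    _ ≤ _ := Finset.sum_le_sum hcols
  have h3 : d * d ≤ Bf.card * d := Nat.mul_le_mul_right d hBcard
  have hScard : S.ncard = Sf.card := Set.ncard_eq_toFinset_card S (Set.toFinite S)
  rw [sq]
  omega


lemma pt_mem (u v : Option F) :
    (∃ i, pt u v i = 1 ∧ ∀ j < i, pt u v j = 0) ∧
      pt u v 0 * pt u v 3 = pt u v 1 * pt u v 2 := by
  match u, v with
  | some a, some b =>
    refine ⟨⟨0, by simp [pt], fun j hj => absurd hj (by simp [Fin.lt_def])⟩, ?_⟩
    simp [pt]
    ring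
  | some a, none =>
    refine ⟨⟨1, by simp [pt], fun j hj => ?_⟩, by simp [pt]⟩
    fin_cases j
    · simp [pt]
    · exact absurd hj (by decide)
    · exact absurd hj (by decide)
    · exact absurd hj (by decide)
  | none, some b =>
    refine ⟨⟨2, by simp [pt], fun j hj => ?_⟩, by simp [pt]⟩
    fin_cases j
    · simp [pt]
    · simp [pt]
    · exact absurd hj (by decide)
    · exact absurd hj (by decide)
  | none, none =>
    refine ⟨⟨3, by simp [pt], fun j hj => ?_⟩, by simp [pt]⟩
    fin_cases j
    · simp [pt]
    · simp [pt]
    · simp [pt]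
    · exact absurd hj (by decide)

lemma pt_injective :
    Function.Injective (fun x : Option F × Option F => pt x.1 x.2) := by
  rintro ⟨u, v⟩ ⟨u', v'⟩ h
  simp only at h
  have h0 := congrFun h 0
  have h1 := congrFun h 1
  have h2 := congrFun h 2
  have h3 := congrFun h 3
  rcases u with _ | a <;> rcases v with _ | b <;> rcases u' with _ | a' <;>
      rcases v' with _ | b' <;>
    simp_all [pt]

lemma pt_surjective {p : Fin 4 → F}
    (hp : (∃ i, p i = 1 ∧ ∀ j < i, p j = 0) ∧ p 0 * p 3 = p 1 * p 2) :
    ∃ u v : Option F, pt u v = p := by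
  obtain ⟨⟨i, hi1, hi0⟩, hq⟩ := hp
  rcases i with ⟨iv, hiv⟩
  interval_cases iv
  · have h1 : p 0 = 1 := hi1
    refine ⟨some (p 2), some (p 1), ?_⟩
    funext j
    have h3 : p 3 = p 1 * p 2 := by
      rw [h1, one_mul] at hq
      exact hq
    fin_cases j <;> simp [pt, h1, h3] <;> ring
  · have h1 : p 1 = 1 := hi1
    have h0 : p 0 = 0 := hi0 0 (by simp [Fin.lt_def])
    have h2 : p 2 = 0 := by
      rw [h0, h1, zero_mul, one_mul] at hq
      exact hq.symm
    refine ⟨some (p 3), none, ?_⟩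
    funext j
    fin_cases j <;> simp [pt, h1, h0, h2]
  · have h1 : p 2 = 1 := hi1
    have h0 : p 0 = 0 := hi0 0 (by simp [Fin.lt_def])
    have h1' : p 1 = 0 := hi0 1 (by simp [Fin.lt_def])
    refine ⟨none, some (p 3), ?_⟩
    funext j
    fin_cases j <;> simp [pt, h1, h0, h1']
  · have h1 : p 3 = 1 := hi1
    have h0 : p 0 = 0 := hi0 0 (by norm_num [Fin.lt_def])
    have h1' : p 1 = 0 := hi0 1 (by norm_num [Fin.lt_def])
    have h2 : p 2 = 0 := hi0 2 (by norm_num [Fin.lt_def])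
    refine ⟨none, none, ?_⟩
    funext j
    fin_cases j <;> simp [pt, h1, h0, h1', h2]

end Stmt4Aux


/-- For `0 ≤ s < q`, the evaluation code `C_H(s)` on the hyperbolic quadric
`H : x₀x₃ = x₁x₂` in `P³` over `F_q` has length `(q+1)²`, dimension `(s+1)²`
and minimum distance `(q-s+1)²`. -/
theorem stmt_4 (F : Type) [Field F] [Fintype F] (q s : ℕ)
    (hq : Fintype.card F = q) (hs : s < q) :
    -- rational points of H, with normalized coordinates
    let H : Set (Fin 4 → F) := {p | (∃ i, p i = 1 ∧ ∀ j < i, p j = 0) ∧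
      p 0 * p 3 = p 1 * p 2}
    -- the code: evaluations of homogeneous forms of degree s at the points of H
    let C : Submodule F (H → F) := Submodule.span F
      {w | ∃ f : MvPolynomial (Fin 4) F, f.IsHomogeneous s ∧
        w = fun p : H => MvPolynomial.eval p.1 f}
    let wt : (H → F) → ℕ := fun c => {p | c p ≠ 0}.ncard
    H.ncard = (q + 1) ^ 2 ∧
    Module.finrank F C = (s + 1) ^ 2 ∧
    (∃ c ∈ C, c ≠ 0 ∧ wt c = (q - s + 1) ^ 2) ∧
    (∀ c ∈ C, c ≠ 0 → (q - s + 1) ^ 2 ≤ wt c) := by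
  classical
  subst hq
  intro H C wt
  have hmem : ∀ x : Option F × Option F, Stmt4Aux.pt x.1 x.2 ∈ H :=
    fun x => Stmt4Aux.pt_mem x.1 x.2
  let g : Option F × Option F → H := fun x => ⟨Stmt4Aux.pt x.1 x.2, hmem x⟩
  have hg : Function.Bijective g := by
    constructor
    · intro x y hxy
      exact Stmt4Aux.pt_injective (congrArg Subtype.val hxy)
    · rintro ⟨p, hp⟩
      obtain ⟨u, v, huv⟩ := Stmt4Aux.pt_surjective hp
      exact ⟨(u, v), Subtype.ext huv⟩
  let e : (Option F × Option F) ≃ H := Equiv.ofBijective g hg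
  let Φ : (H → F) ≃ₗ[F] (Option F × Option F → F) := LinearEquiv.funCongrLeft F F e
  have hmap : C.map (Φ.toLinearMap) = Stmt4Aux.T F s := by
    show Submodule.map _ (Submodule.span F _) = _
    rw [Submodule.map_span]
    rw [← Stmt4Aux.span_eval_eq (F := F) s]
    congr 1
    ext w
    constructor
    · rintro ⟨w', ⟨f, hf, rfl⟩, rfl⟩
      exact ⟨f, hf, rfl⟩
    · rintro ⟨f, hf, rfl⟩
      exact ⟨fun p => MvPolynomial.eval p.1 f, ⟨f, hf, rfl⟩, rfl⟩
  have hwt : ∀ c : H → F, wt c = {x : Option F × Option F | Φ c x ≠ 0}.ncard := by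
    intro c
    show {p : H | c p ≠ 0}.ncard = _
    have himg : {p : H | c p ≠ 0} = g '' {x | c (g x) ≠ 0} := by
      ext p
      constructor
      · intro hp
        obtain ⟨x, hx⟩ := hg.2 p
        exact ⟨x, show c (g x) ≠ 0 by rw [hx]; exact hp, hx⟩
      · rintro ⟨x, hx, rfl⟩
        exact hx
    rw [himg, Set.ncard_image_of_injective _ hg.1]
    rfl
  refine ⟨?_, ?_, ?_, ?_⟩
  · -- length
    have hH : H = Set.range (fun x : Option F × Option F => Stmt4Aux.pt x.1 x.2) := by
      ext p
      constructor
      · intro hp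
        obtain ⟨u, v, huv⟩ := Stmt4Aux.pt_surjective hp
        exact ⟨(u, v), huv⟩
      · rintro ⟨x, rfl⟩
        exact hmem x
    rw [hH, ← Set.image_univ, Set.ncard_image_of_injective _ Stmt4Aux.pt_injective,
      Set.ncard_univ, Nat.card_eq_fintype_card, Fintype.card_prod, Fintype.card_option, sq]
  · -- dimension
    rw [← LinearEquiv.finrank_map_eq Φ C, hmap]
    exact Stmt4Aux.finrank_T hs
  · -- minimum weight codeword
    obtain ⟨M, hMT, hM0, hMwt⟩ := Stmt4Aux.T_exists (F := F) hs
    rw [← hmap] at hMT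
    obtain ⟨c, hcC, hcM⟩ := Submodule.mem_map.mp hMT
    refine ⟨c, hcC, ?_, ?_⟩
    · rintro rfl
      apply hM0
      rw [← hcM]
      simp
    · rw [hwt c]
      have : (Φ c : Option F × Option F → F) = M := hcM
      rw [this]
      exact hMwt
  · -- minimum distance
    intro c hc hc0
    have hmemT : (Φ c : Option F × Option F → F) ∈ Stmt4Aux.T F s := by
      rw [← hmap]
      exact Submodule.mem_map_of_mem hc
    have hne : (Φ c : Option F × Option F → F) ≠ 0 := by
      intro h
      exact hc0 ((LinearEquiv.map_eq_zero_iff Φ).mp h)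
    rw [hwt c]
    exact Stmt4Aux.T_wt hs hmemT hne
end

section
/- For integers 0 ≤ a, b < q, the code on the hyperbolic quadric obtained by evaluating the space F₁(a) ⊗ F₁(b) of bihomogeneous forms of bidegree (a,b) at all F_q-points of P¹ × P¹ has parameters [(q+1)², (a+1)(b+1), (q−a+1)(q−b+1)]. -/
open Polynomial Finset

set_option linter.unusedSectionVars false

variable {F : Type} [Field F] [Fintype F] [DecidableEq F]

/-- normalized coordinates of a point of P¹. -/
def myPt (F : Type) [Zero F] [One F] : Option F → F × F := fun o => o.elim (0, 1) fun t => (1, t)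

/-- evaluation of a degree-`n` homogeneous form with coefficients `d` at `p`. -/
def ev1 (n : ℕ) (d : Fin (n + 1) → F) (p : Option F) : F :=
  ∑ i : Fin (n + 1), d i * ((myPt F p).1 ^ (i : ℕ) * (myPt F p).2 ^ (n - (i : ℕ)))

/-- the associated polynomial. -/
noncomputable def pd (n : ℕ) (d : Fin (n + 1) → F) : F[X] :=
  ∑ i : Fin (n + 1), C (d i) * X ^ (n - (i : ℕ))

lemma pd_coeff (n : ℕ) (d : Fin (n + 1) → F) (k : Fin (n + 1)) :
    (pd n d).coeff (n - (k : ℕ)) = d k := by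
  rw [pd, finset_sum_coeff]
  rw [Finset.sum_eq_single k]
  · simp
  · intro i _ hik
    rw [coeff_C_mul, coeff_X_pow, if_neg, mul_zero]
    intro h
    have : (i:ℕ) = k := by omega
    exact hik (Fin.ext this)
  · simp

lemma pd_natDegree_le (n : ℕ) (d : Fin (n + 1) → F) : (pd n d).natDegree ≤ n := by
  apply Polynomial.natDegree_sum_le_of_forall_le
  intro i _
  apply le_trans (Polynomial.natDegree_C_mul_le _ _)
  simpa using Nat.sub_le n i

lemma pd_ne_zero (n : ℕ) {d : Fin (n + 1) → F} (hd : d ≠ 0) : pd n d ≠ 0 := by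
  intro h
  apply hd
  funext k
  have := pd_coeff n d k
  rw [h, coeff_zero] at this
  exact this.symm

lemma ev1_some (n : ℕ) (d : Fin (n + 1) → F) (t : F) :
    ev1 n d (some t) = (pd n d).eval t := by
  simp [ev1, pd, myPt, eval_finset_sum]

lemma ev1_none (n : ℕ) (d : Fin (n + 1) → F) : ev1 n d none = d 0 := by
  rw [ev1, Finset.sum_eq_single 0]
  · simp [myPt]
  · intro i _ hi
    have : (i : ℕ) ≠ 0 := fun h => hi (Fin.ext h)
    simp [myPt, zero_pow this]
  · simp

lemma card_zeros_le (n : ℕ) {d : Fin (n + 1) → F} (hd : d ≠ 0) :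
    ({p : Option F | ev1 n d p = 0} : Finset (Option F)).card ≤ n := by
  classical
  have hP : pd n d ≠ 0 := pd_ne_zero n hd
  have hroots : (pd n d).roots.toFinset.card ≤ (pd n d).natDegree :=
    le_trans (Multiset.toFinset_card_le _) (Polynomial.card_roots' _)
  by_cases h0 : d 0 = 0
  · -- none may be a zero, but natDegree < n
    rcases Nat.eq_zero_or_pos n with hn | hn
    · subst hn
      exact absurd (_root_.funext fun k => by rw [Fin.fin_one_eq_zero k]; exact h0) hd
    have hdeg : (pd n d).natDegree < n := by
      rcases lt_or_eq_of_le (pd_natDegree_le n d) with h | h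
      · exact h
      · exfalso
        apply hP
        have : (pd n d).leadingCoeff = 0 := by
          rw [Polynomial.leadingCoeff, h]
          have := pd_coeff n d 0
          simpa [h0] using this
        exact Polynomial.leadingCoeff_eq_zero.mp this
    have hsub : ({p : Option F | ev1 n d p = 0} : Finset (Option F)) ⊆
        insert none ((pd n d).roots.toFinset.image some) := by
      intro p hp
      simp only [Finset.mem_filter, Finset.mem_univ, true_and] at hp
      match p with
      | none => exact Finset.mem_insert_self _ _
      | some t =>
        apply Finset.mem_insert_of_mem
        simp only [Finset.mem_image, Multiset.mem_toFinset]
        refine ⟨t, ?_, rfl⟩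
        rw [Polynomial.mem_roots hP]
        exact by rwa [ev1_some] at hp
    calc _ ≤ (insert none ((pd n d).roots.toFinset.image some)).card := Finset.card_le_card hsub
      _ ≤ ((pd n d).roots.toFinset.image some).card + 1 := Finset.card_insert_le _ _
      _ ≤ (pd n d).roots.toFinset.card + 1 := by gcongr; exact Finset.card_image_le
      _ ≤ (pd n d).natDegree + 1 := by gcongr
      _ ≤ n := by omega
  · have hsub : ({p : Option F | ev1 n d p = 0} : Finset (Option F)) ⊆
        (pd n d).roots.toFinset.image some := by
      intro p hp
      simp only [Finset.mem_filter, Finset.mem_univ, true_and] at hp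
      match p with
      | none => exact absurd (ev1_none n d ▸ hp) h0
      | some t =>
        simp only [Finset.mem_image, Multiset.mem_toFinset]
        refine ⟨t, ?_, rfl⟩
        rw [Polynomial.mem_roots hP]
        exact by rwa [ev1_some] at hp
    calc _ ≤ ((pd n d).roots.toFinset.image some).card := Finset.card_le_card hsub
      _ ≤ (pd n d).roots.toFinset.card := Finset.card_image_le
      _ ≤ (pd n d).natDegree := hroots
      _ ≤ n := pd_natDegree_le n d

lemma card_nonzeros_ge (n : ℕ) {d : Fin (n + 1) → F} (hd : d ≠ 0) :
    Fintype.card F + 1 - n ≤ ({p : Option F | ev1 n d p ≠ 0} : Finset (Option F)).card := by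
  classical
  have h := Finset.card_filter_add_card_filter_not
    (s := (univ : Finset (Option F))) (p := fun p => ev1 n d p = 0)
  have hz := card_zeros_le n hd
  have : (univ : Finset (Option F)).card = Fintype.card F + 1 := by
    simp [Finset.card_univ]
  simp only [ne_eq]
  omega

lemma ev1_eq_zero_iff (n : ℕ) (hn : n ≤ Fintype.card F) (d : Fin (n + 1) → F) :
    (∀ p, ev1 n d p = 0) → d = 0 := by
  intro h
  by_contra hd
  have h1 := card_nonzeros_ge n hd
  have h2 : ({p : Option F | ev1 n d p ≠ 0} : Finset (Option F)) = ∅ := by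
    apply Finset.eq_empty_of_forall_notMem
    intro p hp
    simp only [Finset.mem_filter, Finset.mem_univ, true_and] at hp
    exact hp (h p)
  rw [h2] at h1
  simp at h1
  omega

/-- existence of a form with the exact number of zeros -/
lemma exists_exact (n : ℕ) (hn : n ≤ Fintype.card F) :
    ∃ d : Fin (n + 1) → F,
      ({p : Option F | ev1 n d p ≠ 0} : Finset (Option F)).card = Fintype.card F + 1 - n := by
  classical
  obtain ⟨A, -, hA⟩ := Finset.exists_subset_card_eq (s := (univ : Finset F)) (n := n)
    (by simpa using hn)
  set P : F[X] := ∏ x ∈ A, (X - C x) with hPdef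
  have hmonic : P.Monic := monic_prod_of_monic _ _ fun x _ => monic_X_sub_C x
  have hdeg : P.natDegree = n := by
    rw [hPdef, natDegree_prod_of_monic _ _ fun x _ => monic_X_sub_C x]
    simp [hA]
  set d : Fin (n + 1) → F := fun i => P.coeff (n - (i : ℕ)) with hddef
  have hpd : pd n d = P := by
    ext k
    by_cases hk : k ≤ n
    · have : k = n - ((⟨n - k, by omega⟩ : Fin (n + 1)) : ℕ) := by simp; omega
      rw [this, pd_coeff n d]
    · rw [Polynomial.coeff_eq_zero_of_natDegree_lt, Polynomial.coeff_eq_zero_of_natDegree_lt]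
      · omega
      · exact lt_of_le_of_lt (pd_natDegree_le n d) (by omega)
  have heval : ∀ t : F, (P.eval t = 0 ↔ t ∈ A) := by
    intro t
    rw [hPdef, eval_prod, Finset.prod_eq_zero_iff]
    constructor
    · rintro ⟨x, hx, hx0⟩
      simp only [eval_sub, eval_X, eval_C, sub_eq_zero] at hx0
      rwa [hx0]
    · intro ht
      exact ⟨t, ht, by simp⟩
  refine ⟨d, ?_⟩
  have : ({p : Option F | ev1 n d p ≠ 0} : Finset (Option F)) =
      insert none ((univ.filter fun t : F => t ∉ A).image some) := by
    ext p
    match p with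
    | none =>
      simp only [Finset.mem_filter, Finset.mem_univ, true_and, Finset.mem_insert, ne_eq]
      rw [ev1_none]
      have hd0 : d 0 = 1 := by
        rw [hddef]
        show P.coeff (n - 0) = 1
        rw [Nat.sub_zero, ← hdeg]
        exact hmonic.coeff_natDegree
      simp [hd0]
    | some t =>
      simp only [Finset.mem_filter, Finset.mem_univ, true_and, Finset.mem_insert,
        Finset.mem_image]
      rw [ev1_some, hpd]
      constructor
      · intro h
        refine Or.inr ⟨t, ?_, rfl⟩
        have ht : t ∉ A := fun h' => h ((heval t).mpr h')
        simpa using ht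
      · rintro (h | ⟨x, hx, hxt⟩)
        · exact absurd h (by simp)
        · have hx' : x ∉ A := by simpa using hx
          cases hxt
          exact fun h0 => hx' ((heval t).mp h0)
  rw [this, Finset.card_insert_of_notMem (by simp), Finset.card_image_of_injective _
    (Option.some_injective F)]
  rw [Finset.filter_not, Finset.card_sdiff_of_subset (by simp)]
  simp [Finset.filter_mem_eq_inter, Finset.univ_inter, hA]
  omega

/-- 2D evaluation -/
def ev2 (a b : ℕ) (c : Fin (a + 1) × Fin (b + 1) → F) (p : Option F × Option F) : F :=
  ∑ i : Fin (a + 1), ∑ j : Fin (b + 1), c (i, j) *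
    ((myPt F p.1).1 ^ (i : ℕ) * (myPt F p.1).2 ^ (a - (i : ℕ)) *
      (myPt F p.2).1 ^ (j : ℕ) * (myPt F p.2).2 ^ (b - (j : ℕ)))

lemma ev2_eq (a b : ℕ) (c : Fin (a + 1) × Fin (b + 1) → F) (p : Option F × Option F) :
    ev2 a b c p = ev1 b (fun j => ev1 a (fun i => c (i, j)) p.1) p.2 := by
  simp only [ev1, ev2, Finset.sum_mul]
  rw [Finset.sum_comm]
  refine Finset.sum_congr rfl fun j _ => Finset.sum_congr rfl fun i _ => by ring

/-- the evaluation linear map -/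
def Emap (a b : ℕ) : (Fin (a + 1) × Fin (b + 1) → F) →ₗ[F] (Option F × Option F → F) where
  toFun c := fun p => ev2 a b c p
  map_add' c1 c2 := by
    funext p
    simp [ev2, add_mul, Finset.sum_add_distrib]
  map_smul' m c := by
    funext p
    simp [ev2, Finset.mul_sum, mul_assoc]

lemma Emap_inj (a b : ℕ) (ha : a ≤ Fintype.card F) (hb : b ≤ Fintype.card F) :
    Function.Injective (Emap (F := F) a b) := by
  rw [injective_iff_map_eq_zero]
  intro c hc
  have h1 : ∀ p₁ : Option F, (fun j => ev1 a (fun i => c (i, j)) p₁) = 0 := by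
    intro p₁
    apply ev1_eq_zero_iff b hb
    intro p₂
    have := congrFun hc (p₁, p₂)
    rwa [show (Emap a b) c (p₁, p₂) = ev1 b (fun j => ev1 a (fun i => c (i, j)) p₁) p₂ from
      ev2_eq a b c (p₁, p₂), Pi.zero_apply] at this
  have h2 : ∀ j, (fun i => c (i, j)) = 0 := by
    intro j
    apply ev1_eq_zero_iff a ha
    intro p₁
    exact congrFun (h1 p₁) j
  funext ⟨i, j⟩
  exact congrFun (h2 j) i

lemma card_filter_prod {α β : Type*} [Fintype α] [Fintype β] [DecidableEq α] [DecidableEq β]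
    (P : α × β → Prop) [DecidablePred P] :
    (univ.filter P).card = ∑ x : α, (univ.filter fun y => P (x, y)).card := by
  rw [Finset.card_eq_sum_card_fiberwise (f := Prod.fst) (t := univ) (fun x _ => mem_univ _)]
  refine Finset.sum_congr rfl fun x _ => ?_
  apply Finset.card_bij' (fun p _ => p.2) (fun y _ => (x, y)) <;> intros <;>
    simp_all [Finset.mem_filter] <;> aesop

lemma ev2_prod (a b : ℕ) (d : Fin (a + 1) → F) (e : Fin (b + 1) → F) (p : Option F × Option F) :
    ev2 a b (fun ij => d ij.1 * e ij.2) p = ev1 a d p.1 * ev1 b e p.2 := by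
  simp only [ev2, ev1, Finset.sum_mul, Finset.mul_sum]
  rw [Finset.sum_comm]
  refine Finset.sum_congr rfl fun i _ => Finset.sum_congr rfl fun j _ => by ring

lemma ev2NormProd (a b : ℕ) (d : Fin (a + 1) → F) (e : Fin (b + 1) → F) :
    hammingNorm (Emap (F := F) a b fun ij => d ij.1 * e ij.2) =
    (univ.filter fun p₁ : Option F => ev1 a d p₁ ≠ 0).card *
    (univ.filter fun p₂ : Option F => ev1 b e p₂ ≠ 0).card := by
  have h1 : (Emap (F := F) a b fun ij => d ij.1 * e ij.2) = fun p => ev1 a d p.1 * ev1 b e p.2 :=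
    funext (ev2_prod a b d e)
  rw [h1]
  unfold hammingNorm
  rw [show (univ.filter fun p : Option F × Option F =>
        (fun p : Option F × Option F => ev1 a d p.1 * ev1 b e p.2) p ≠ 0) =
      (univ.filter fun p₁ : Option F => ev1 a d p₁ ≠ 0) ×ˢ
        (univ.filter fun p₂ : Option F => ev1 b e p₂ ≠ 0) from ?_, Finset.card_product]
  ext p
  simp [Finset.mem_product, mul_ne_zero_iff]

/-- For `0 ≤ a, b < q`, the code on the hyperbolic quadric obtained by evaluating
bihomogeneous forms of bidegree `(a,b)` at the `(q+1)²` rational points of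
`P¹ × P¹` has parameters `[(q+1)², (a+1)(b+1), (q-a+1)(q-b+1)]`. -/
theorem stmt_5 (F : Type) [Field F] [Fintype F] [DecidableEq F] (q a b : ℕ)
    (hq : Fintype.card F = q) (ha : a < q) (hb : b < q) :
    let pt : Option F → F × F := fun o => o.elim (0, 1) fun t => (1, t)
    let C : Submodule F (Option F × Option F → F) := Submodule.span F
      {w | ∃ c : Fin (a + 1) × Fin (b + 1) → F, w = fun p =>
        ∑ i : Fin (a + 1), ∑ j : Fin (b + 1), c (i, j) *
          ((pt p.1).1 ^ (i : ℕ) * (pt p.1).2 ^ (a - (i : ℕ)) *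
            (pt p.2).1 ^ (j : ℕ) * (pt p.2).2 ^ (b - (j : ℕ)))}
    Fintype.card (Option F × Option F) = (q + 1) ^ 2 ∧
    Module.finrank F C = (a + 1) * (b + 1) ∧
    (∃ c ∈ C, c ≠ 0 ∧ hammingNorm c = (q - a + 1) * (q - b + 1)) ∧
    (∀ c ∈ C, c ≠ 0 → (q - a + 1) * (q - b + 1) ≤ hammingNorm c) := by
  subst hq
  intro pt C
  have hset : {w | ∃ c : Fin (a + 1) × Fin (b + 1) → F, w = fun p =>
      ∑ i : Fin (a + 1), ∑ j : Fin (b + 1), c (i, j) *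
        ((pt p.1).1 ^ (i : ℕ) * (pt p.1).2 ^ (a - (i : ℕ)) *
          (pt p.2).1 ^ (j : ℕ) * (pt p.2).2 ^ (b - (j : ℕ)))} =
      Set.range (Emap (F := F) a b) := by
    ext w
    simp only [Set.mem_setOf_eq, Set.mem_range]
    exact ⟨fun ⟨c, h⟩ => ⟨c, h.symm⟩, fun ⟨c, h⟩ => ⟨c, h.symm⟩⟩
  have hC : C = LinearMap.range (Emap (F := F) a b) := by
    show Submodule.span F _ = _
    rw [hset, ← LinearMap.coe_range, Submodule.span_eq]
  refine ⟨?_, ?_, ?_, ?_⟩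
  · simp [Fintype.card_prod, sq]
  · rw [hC, LinearMap.finrank_range_of_inj (Emap_inj a b (le_of_lt ha) (le_of_lt hb))]
    simp [Module.finrank_pi]
  · -- existence of a minimum-weight codeword
    obtain ⟨d, hd⟩ := exists_exact (F := F) a (le_of_lt ha)
    obtain ⟨e, he⟩ := exists_exact (F := F) b (le_of_lt hb)
    set q := Fintype.card F with hqdef
    have hw : hammingNorm (Emap (F := F) a b fun ij => d ij.1 * e ij.2) =
        (q - a + 1) * (q - b + 1) := by
      rw [ev2NormProd a b d e, hd, he]
      have h1 : q + 1 - a = q - a + 1 := by omega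
      have h2 : q + 1 - b = q - b + 1 := by omega
      rw [h1, h2]
    refine ⟨Emap a b (fun ij => d ij.1 * e ij.2), hC ▸ LinearMap.mem_range_self _ _, ?_, hw⟩
    intro h0
    rw [h0, hammingNorm_zero] at hw
    have : 1 ≤ q - a + 1 := by omega
    have : 1 ≤ q - b + 1 := by omega
    nlinarith [hw.symm]
  · -- lower bound on the weight
    intro c hc hc0
    rw [hC] at hc
    obtain ⟨co, rfl⟩ := hc
    have hj : ∃ j₀ : Fin (b + 1), (fun i => co (i, j₀)) ≠ 0 := by
      by_contra h
      push_neg at h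
      apply hc0
      have : co = 0 := by
        funext ij
        exact congrFun (h ij.2) ij.1
      rw [this, map_zero]
    obtain ⟨j₀, hj₀⟩ := hj
    have hnorm : hammingNorm (Emap (F := F) a b co) =
        ∑ p₁ : Option F, (univ.filter fun p₂ =>
          ev1 b (fun j => ev1 a (fun i => co (i, j)) p₁) p₂ ≠ 0).card := by
      unfold hammingNorm
      rw [show (univ.filter fun p : Option F × Option F => (Emap (F := F) a b co) p ≠ 0) =
          (univ.filter fun p : Option F × Option F =>
            ev1 b (fun j => ev1 a (fun i => co (i, j)) p.1) p.2 ≠ 0) from by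
            ext p; simp [ev2_eq a b co p, show (Emap (F := F) a b co) p = ev2 a b co p from rfl]]
      exact card_filter_prod (fun p : Option F × Option F =>
        ev1 b (fun j => ev1 a (fun i => co (i, j)) p.1) p.2 ≠ 0)
    rw [hnorm]
    classical
    set S := univ.filter (fun p₁ : Option F =>
      (fun j => ev1 a (fun i => co (i, j)) p₁) ≠ (0 : Fin (b + 1) → F)) with hS
    have hS1 : Fintype.card F + 1 - a ≤ S.card := by
      refine le_trans (card_nonzeros_ge a hj₀) (Finset.card_le_card ?_)
      intro p₁ hp₁
      simp only [Finset.mem_filter, Finset.mem_univ, true_and] at hp₁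
      simp only [hS, Finset.mem_filter, Finset.mem_univ, true_and]
      intro h
      exact hp₁ (congrFun h j₀)
    have hS2 : ∀ p₁ ∈ S, Fintype.card F + 1 - b ≤ (univ.filter fun p₂ =>
        ev1 b (fun j => ev1 a (fun i => co (i, j)) p₁) p₂ ≠ 0).card := by
      intro p₁ hp₁
      simp only [hS, Finset.mem_filter, Finset.mem_univ, true_and] at hp₁
      exact card_nonzeros_ge b hp₁
    calc (Fintype.card F - a + 1) * (Fintype.card F - b + 1)
        = (Fintype.card F + 1 - a) * (Fintype.card F + 1 - b) := by
          have h1 : Fintype.card F + 1 - a = Fintype.card F - a + 1 := by omega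
          have h2 : Fintype.card F + 1 - b = Fintype.card F - b + 1 := by omega
          rw [h1, h2]
      _ ≤ S.card * (Fintype.card F + 1 - b) := Nat.mul_le_mul_right _ hS1
      _ = ∑ _p₁ ∈ S, (Fintype.card F + 1 - b) := by rw [Finset.sum_const, smul_eq_mul]
      _ ≤ ∑ p₁ ∈ S, (univ.filter fun p₂ =>
            ev1 b (fun j => ev1 a (fun i => co (i, j)) p₁) p₂ ≠ 0).card := Finset.sum_le_sum hS2
      _ ≤ ∑ p₁ : Option F, (univ.filter fun p₂ =>
            ev1 b (fun j => ev1 a (fun i => co (i, j)) p₁) p₂ ≠ 0).card :=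
        Finset.sum_le_sum_of_subset (Finset.subset_univ S)
end

section
/- Let X be the curve cut out on the hyperbolic quadric H ⊂ P³ over F_q by a surface of degree s < q not containing H. Then the number of F_q-rational points of X is at most 2s(q+1) − s². -/
open MvPolynomial

noncomputable def phiE (m : Fin 4 →₀ ℕ) : Fin 4 →₀ ℕ :=
  Finsupp.equivFunOnFinite.symm ![m 0 + m 1, m 2 + m 3, m 0 + m 2, m 1 + m 3]

noncomputable def redE (m : Fin 4 →₀ ℕ) : Fin 4 →₀ ℕ :=
  Finsupp.equivFunOnFinite.symm
    ![m 0 - min (m 0) (m 3), m 1 + min (m 0) (m 3), m 2 + min (m 0) (m 3), m 3 - min (m 0) (m 3)]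

lemma phiE_apply (m : Fin 4 →₀ ℕ) (i : Fin 4) :
    phiE m i = ![m 0 + m 1, m 2 + m 3, m 0 + m 2, m 1 + m 3] i := rfl

lemma redE_apply (m : Fin 4 →₀ ℕ) (i : Fin 4) :
    redE m i = ![m 0 - min (m 0) (m 3), m 1 + min (m 0) (m 3), m 2 + min (m 0) (m 3),
      m 3 - min (m 0) (m 3)] i := rfl

lemma phiE_redE (m : Fin 4 →₀ ℕ) : phiE (redE m) = phiE m := by
  ext i
  fin_cases i <;>
    simp only [phiE_apply, redE_apply] <;>
    simp [Matrix.cons_val_zero, Matrix.cons_val_one] <;> omega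

lemma redE_reduced (m : Fin 4 →₀ ℕ) : min (redE m 0) (redE m 3) = 0 := by
  simp only [redE_apply]
  simp
  omega

lemma phiE_injOn : Set.InjOn phiE {m : Fin 4 →₀ ℕ | min (m 0) (m 3) = 0} := by
  intro m hm m' hm' h
  have h0 := congrArg (fun g => g 0) h
  have h1 := congrArg (fun g => g 1) h
  have h2 := congrArg (fun g => g 2) h
  have h3 := congrArg (fun g => g 3) h
  simp only [phiE_apply] at h0 h1 h2 h3
  simp at h0 h1 h2 h3
  simp only [Set.mem_setOf_eq] at hm hm'
  ext i
  fin_cases i <;> simp <;> omega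

section Field
variable {F : Type} [Field F]

noncomputable def q4 (F : Type) [Field F] : MvPolynomial (Fin 4) F :=
  X 0 * X 3 - X 1 * X 2

lemma red_mem : ∀ (N : ℕ) (m : Fin 4 →₀ ℕ), m 0 ≤ N → ∀ c : F,
    (monomial m c : MvPolynomial (Fin 4) F) - monomial (redE m) c ∈ Ideal.span {q4 F} := by
  intro N
  induction N with
  | zero =>
    intro m hm c
    have h : redE m = m := by
      ext i; fin_cases i <;> simp [redE_apply] <;> omega
    rw [h]; simp
  | succ N ih =>
    intro m hm c
    by_cases h0 : min (m 0) (m 3) = 0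
    · have h : redE m = m := by
        ext i; fin_cases i <;> simp [redE_apply] <;> omega
      rw [h]; simp
    · set m₂ : Fin 4 →₀ ℕ := Finsupp.equivFunOnFinite.symm ![m 0 - 1, m 1 + 1, m 2 + 1, m 3 - 1]
        with hm2
      set m₃ : Fin 4 →₀ ℕ := Finsupp.equivFunOnFinite.symm ![m 0 - 1, m 1, m 2, m 3 - 1]
        with hm3
      have hm20 : m₂ 0 = m 0 - 1 := rfl
      have hmin : 1 ≤ m 0 ∧ 1 ≤ m 3 := by omega
      have key : (monomial m c : MvPolynomial (Fin 4) F) - monomial m₂ c = q4 F * monomial m₃ c := by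
        have e1 : Finsupp.single (0 : Fin 4) 1 + Finsupp.single (3 : Fin 4) 1 + m₃ = m := by
          ext i; fin_cases i <;>
            simp [hm3, Finsupp.single_apply] <;> omega
        have e2 : Finsupp.single (1 : Fin 4) 1 + Finsupp.single (2 : Fin 4) 1 + m₃ = m₂ := by
          ext i; fin_cases i <;>
            simp [hm3, hm2, Finsupp.single_apply] <;> omega
        have h1 : (X 0 * X 3 : MvPolynomial (Fin 4) F) * monomial m₃ c = monomial m c := by
          rw [X, X, monomial_mul, monomial_mul, one_mul, one_mul, e1]
        have h2 : (X 1 * X 2 : MvPolynomial (Fin 4) F) * monomial m₃ c = monomial m₂ c := by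
          rw [X, X, monomial_mul, monomial_mul, one_mul, one_mul, e2]
        rw [q4, sub_mul, h1, h2]
      have hred : redE m₂ = redE m := by
        ext i; fin_cases i <;> simp [redE_apply, hm2] <;> omega
      have ihm := ih m₂ (by rw [hm20]; omega) c
      have hsplit : (monomial m c : MvPolynomial (Fin 4) F) - monomial (redE m) c
          = (monomial m c - monomial m₂ c) + (monomial m₂ c - monomial (redE m₂) c) := by
        rw [hred]; ring
      rw [hsplit, key]
      exact add_mem (Ideal.mul_mem_right _ _ (Ideal.subset_span (Set.mem_singleton _))) ihm

lemma ker_span (f : MvPolynomial (Fin 4) F)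
    (hG : (AddMonoidAlgebra.mapDomain phiE f : MvPolynomial (Fin 4) F) = 0) :
    f ∈ Ideal.span {q4 F} := by
  classical
  set Rf : MvPolynomial (Fin 4) F := AddMonoidAlgebra.mapDomain redE f with hRfdef
  have hR : Rf = ∑ m ∈ f.support, monomial (redE m) (MvPolynomial.coeff m f) := by
    rw [hRfdef, AddMonoidAlgebra.mapDomain, Finsupp.mapDomain, Finsupp.sum, AddMonoidAlgebra.ofCoeff_sum]
    exact Finset.sum_congr rfl fun m _ => (single_eq_monomial _ _)
  have hsub : f - Rf ∈ Ideal.span {q4 F} := by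
    have hf : f = ∑ m ∈ f.support, monomial m (MvPolynomial.coeff m f) :=
      (support_sum_monomial_coeff f).symm
    have hdiff : f - Rf = ∑ m ∈ f.support,
        ((monomial m (MvPolynomial.coeff m f) : MvPolynomial (Fin 4) F)
          - monomial (redE m) (MvPolynomial.coeff m f)) := by
      rw [Finset.sum_sub_distrib, ← hf, ← hR]
    rw [hdiff]
    exact Ideal.sum_mem _ fun m _ => red_mem (m 0) m le_rfl _
  have hmap : (AddMonoidAlgebra.mapDomain phiE Rf : MvPolynomial (Fin 4) F) = 0 := by
    apply AddMonoidAlgebra.coeff_injective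
    have hc : phiE ∘ redE = phiE := funext phiE_redE
    rw [AddMonoidAlgebra.coeff_mapDomain, hRfdef, AddMonoidAlgebra.coeff_mapDomain,
      ← Finsupp.mapDomain_comp, hc, ← AddMonoidAlgebra.coeff_mapDomain, hG]
  have hRf : Rf = 0 := by
    have hinj := Finsupp.mapDomain_injOn {m : Fin 4 →₀ ℕ | min (m 0) (m 3) = 0}
      (f := phiE) (M := F) phiE_injOn
    apply AddMonoidAlgebra.coeff_injective
    apply hinj ?_ ?_
    · rw [← AddMonoidAlgebra.coeff_mapDomain, hmap]; simp
    · intro m hm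
      have hmem := Finsupp.mapDomain_support (f := redE) (s := AddMonoidAlgebra.coeff f) hm
      rcases Finset.mem_image.mp hmem with ⟨m', _, rfl⟩
      exact redE_reduced m'
    · intro m hm
      simp at hm
  have hfr : f = f - Rf := by rw [hRf, sub_zero]
  rw [hfr]; exact hsub

lemma eval_mapDomain (f : MvPolynomial (Fin 4) F) (v : Fin 4 → F) :
    MvPolynomial.eval v (AddMonoidAlgebra.mapDomain phiE f : MvPolynomial (Fin 4) F)
      = MvPolynomial.eval ![v 0 * v 2, v 0 * v 3, v 1 * v 2, v 1 * v 3] f := by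
  induction f using MvPolynomial.induction_on' with
  | add p q hp hq =>
    rw [AddMonoidAlgebra.mapDomain_add, map_add, map_add, hp, hq]
  | monomial m c =>
    rw [← single_eq_monomial, AddMonoidAlgebra.mapDomain_single, single_eq_monomial,
      single_eq_monomial, eval_monomial, eval_monomial]
    rw [Finsupp.prod_fintype _ _ (fun i => pow_zero _),
      Finsupp.prod_fintype _ _ (fun i => pow_zero _)]
    rw [Fin.prod_univ_four, Fin.prod_univ_four]
    simp only [phiE_apply]
    simp only [Matrix.cons_val_zero, Matrix.cons_val_one, Matrix.head_cons,
      Matrix.cons_val_two, Matrix.tail_cons, Matrix.cons_val_three]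
    ring

lemma bihom {s : ℕ} (f : MvPolynomial (Fin 4) F) (hf : f.IsHomogeneous s) {n : Fin 4 →₀ ℕ}
    (hn : n ∈ MvPolynomial.support (AddMonoidAlgebra.mapDomain phiE f : MvPolynomial (Fin 4) F)) :
    n 0 + n 1 = s ∧ n 2 + n 3 = s := by
  classical
  have hsub := Finsupp.mapDomain_support (f := phiE) (s := AddMonoidAlgebra.coeff f) hn
  rcases Finset.mem_image.mp hsub with ⟨m, hm, rfl⟩
  have hdeg : m 0 + m 1 + m 2 + m 3 = s := by
    have hw : (Finsupp.weight 1) m = s := hf (by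
      rw [← MvPolynomial.mem_support_iff]
      exact hm)
    rw [show (Finsupp.weight 1 : (Fin 4 →₀ ℕ) →+ ℕ) = Finsupp.weight (fun _ => 1) from rfl,
      ← Finsupp.degree_eq_weight_one] at hw
    have hd : Finsupp.degree m = ∑ i : Fin 4, m i := by
      rw [Finsupp.degree]
      exact Finset.sum_subset (Finset.subset_univ _)
        (fun i _ hi => Finsupp.notMem_support_iff.mp hi)
    rw [hd, Fin.sum_univ_four] at hw
    exact hw
  constructor <;> simp only [phiE_apply] <;> simp <;> omega

noncomputable def chartP (G : MvPolynomial (Fin 4) F) (a b : F) : Polynomial F :=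
  ∑ n ∈ G.support, Polynomial.C (MvPolynomial.coeff n G * a ^ n 0 * b ^ n 1) * Polynomial.X ^ n 3

lemma chartP_eval (G : MvPolynomial (Fin 4) F) (a b t : F) :
    (chartP G a b).eval t = MvPolynomial.eval ![a, b, 1, t] G := by
  rw [chartP, Polynomial.eval_finset_sum, MvPolynomial.eval_eq']
  refine Finset.sum_congr rfl fun n _ => ?_
  rw [Fin.prod_univ_four]
  simp only [Matrix.cons_val_zero, Matrix.cons_val_one, Matrix.head_cons,
    Matrix.cons_val_two, Matrix.tail_cons, Matrix.cons_val_three]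
  simp [Polynomial.eval_mul, Polynomial.eval_pow]
  ring

lemma chartP_coeff_s {s : ℕ} (G : MvPolynomial (Fin 4) F)
    (hb : ∀ n ∈ G.support, n 2 + n 3 = s) (a b : F) :
    (chartP G a b).coeff s = MvPolynomial.eval ![a, b, 0, 1] G := by
  rw [chartP, Polynomial.finset_sum_coeff, MvPolynomial.eval_eq']
  refine Finset.sum_congr rfl fun n hn => ?_
  rw [Polynomial.coeff_C_mul, Polynomial.coeff_X_pow, Fin.prod_univ_four]
  simp only [Matrix.cons_val_zero, Matrix.cons_val_one, Matrix.head_cons,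
    Matrix.cons_val_two, Matrix.tail_cons, Matrix.cons_val_three]
  have h := hb n hn
  by_cases h3 : n 3 = s
  · have h2 : n 2 = 0 := by omega
    simp [h3, h2]
    ring
  · have h2 : n 2 ≠ 0 := by omega
    simp [h3, zero_pow h2, Ne.symm h3]

lemma chartP_natDegree {s : ℕ} (G : MvPolynomial (Fin 4) F)
    (hb : ∀ n ∈ G.support, n 2 + n 3 = s) (a b : F) :
    (chartP G a b).natDegree ≤ s := by
  rw [chartP]
  refine Polynomial.natDegree_sum_le_of_forall_le _ _ fun n hn => ?_
  exact (Polynomial.natDegree_C_mul_X_pow_le _ _).trans (by have := hb n hn; omega)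

noncomputable def extrA (G : MvPolynomial (Fin 4) F) (k : ℕ) : Polynomial F :=
  ∑ n ∈ G.support.filter (fun n => n 3 = k),
    Polynomial.C (MvPolynomial.coeff n G) * Polynomial.X ^ n 1

lemma extrA_natDegree {s : ℕ} (G : MvPolynomial (Fin 4) F)
    (hb : ∀ n ∈ G.support, n 0 + n 1 = s) (k : ℕ) :
    (extrA G k).natDegree ≤ s := by
  rw [extrA]
  refine Polynomial.natDegree_sum_le_of_forall_le _ _ fun n hn => ?_
  have := hb n (Finset.mem_filter.mp hn).1
  exact (Polynomial.natDegree_C_mul_X_pow_le _ _).trans (by omega)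

lemma extrA_ne_zero {s : ℕ} (G : MvPolynomial (Fin 4) F) (hG : G ≠ 0)
    (hb : ∀ n ∈ G.support, n 0 + n 1 = s ∧ n 2 + n 3 = s) :
    ∃ k, extrA G k ≠ 0 := by
  obtain ⟨n₀, hn₀⟩ := (MvPolynomial.support_nonempty.mpr hG)
  refine ⟨n₀ 3, fun h => ?_⟩
  have hc : (extrA G (n₀ 3)).coeff (n₀ 1) = MvPolynomial.coeff n₀ G := by
    rw [extrA, Polynomial.finset_sum_coeff]
    have hsingle := Finset.sum_eq_single_of_mem
      (s := G.support.filter (fun n => n 3 = n₀ 3))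
      (f := fun n => (Polynomial.C (MvPolynomial.coeff n G) * Polynomial.X ^ n 1).coeff (n₀ 1))
      n₀ (Finset.mem_filter.mpr ⟨hn₀, rfl⟩) ?_
    · rw [hsingle]; simp
    intro n hn hne
    rcases Finset.mem_filter.mp hn with ⟨hns, h3⟩
    show (Polynomial.C (MvPolynomial.coeff n G) * Polynomial.X ^ n 1).coeff (n₀ 1) = 0
    rw [Polynomial.coeff_C_mul, Polynomial.coeff_X_pow]
    have hne1 : ¬ (n₀ 1 = n 1) := by
      intro h1
      apply hne
      have hbn := hb n hns
      have hbn₀ := hb n₀ hn₀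
      ext i
      fin_cases i <;> simp <;> omega
    simp [hne1]
  rw [h] at hc
  simp at hc
  exact (MvPolynomial.mem_support_iff.mp hn₀) hc.symm

lemma extrA_eval (G : MvPolynomial (Fin 4) F) (k : ℕ) (t : F) :
    (extrA G k).eval t = (chartP G 1 t).coeff k := by
  rw [extrA, chartP, Polynomial.eval_finset_sum, Polynomial.finset_sum_coeff,
    Finset.sum_filter]
  refine Finset.sum_congr rfl fun n _ => ?_
  rw [Polynomial.coeff_C_mul, Polynomial.coeff_X_pow]
  by_cases h3 : n 3 = k
  · simp [h3]
  · simp [h3, Ne.symm h3]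

lemma extrA_coeff_s {s : ℕ} (G : MvPolynomial (Fin 4) F)
    (hb : ∀ n ∈ G.support, n 0 + n 1 = s) (k : ℕ) :
    (extrA G k).coeff s = (chartP G 0 1).coeff k := by
  rw [extrA, chartP, Polynomial.finset_sum_coeff, Polynomial.finset_sum_coeff,
    Finset.sum_filter]
  refine Finset.sum_congr rfl fun n hn => ?_
  have h01 := hb n hn
  rw [Polynomial.coeff_C_mul, Polynomial.coeff_X_pow, Polynomial.coeff_C_mul,
    Polynomial.coeff_X_pow]
  by_cases h3 : n 3 = k
  · simp only [h3, if_pos rfl, eq_self_iff_true, if_true]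
    by_cases h1 : n 1 = s
    · have h0 : n 0 = 0 := by omega
      simp [h1, h0]
    · have h0 : n 0 ≠ 0 := by omega
      simp [Ne.symm h1, zero_pow h0, h1]
  · simp [h3, Ne.symm h3]

variable [Fintype F] [DecidableEq F]

lemma bin_count {s : ℕ} (p : Polynomial F) (hp : p ≠ 0) (hdeg : p.natDegree ≤ s)
    (Z : Option F → Prop) [DecidablePred Z]
    (hZs : ∀ t, Z (some t) → p.eval t = 0) (hZn : Z none → p.coeff s = 0) :
    (Finset.univ.filter Z).card ≤ s := by
  classical
  set R : Finset F := p.roots.toFinset with hR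
  have hRcard : R.card ≤ p.natDegree :=
    (Multiset.toFinset_card_le _).trans (Polynomial.card_roots' p)
  have hsome : ∀ t, Z (some t) → t ∈ R := fun t ht => by
    rw [hR, Multiset.mem_toFinset, Polynomial.mem_roots hp]
    exact hZs t ht
  by_cases hc : p.coeff s = 0
  · have hdeg' : p.natDegree < s := by
      rcases Nat.lt_or_ge p.natDegree s with h | h
      · exact h
      · exfalso
        have hds : p.natDegree = s := le_antisymm hdeg h
        apply hp
        have hlc : p.leadingCoeff = 0 := by
          unfold Polynomial.leadingCoeff
          rw [hds]; exact hc
        exact Polynomial.leadingCoeff_eq_zero.mp hlc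
    have hsubset : Finset.univ.filter Z ⊆ insert none (R.image some) := by
      intro x hx
      rcases x with _ | t
      · exact Finset.mem_insert_self _ _
      · exact Finset.mem_insert_of_mem (Finset.mem_image_of_mem some
          (hsome t (Finset.mem_filter.mp hx).2))
    calc (Finset.univ.filter Z).card ≤ (insert none (R.image some)).card :=
          Finset.card_le_card hsubset
      _ ≤ (R.image some).card + 1 := Finset.card_insert_le _ _
      _ ≤ R.card + 1 := by gcongr; exact Finset.card_image_le
      _ ≤ p.natDegree + 1 := by omega
      _ ≤ s := by omega
  · have hsubset : Finset.univ.filter Z ⊆ R.image some := by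
      intro x hx
      rcases x with _ | t
      · exact absurd (hZn (Finset.mem_filter.mp hx).2) hc
      · exact Finset.mem_image_of_mem some (hsome t (Finset.mem_filter.mp hx).2)
    calc (Finset.univ.filter Z).card ≤ (R.image some).card := Finset.card_le_card hsubset
      _ ≤ R.card := Finset.card_image_le
      _ ≤ s := hRcard.trans hdeg

end Field

def nx {F : Type} [Zero F] [One F] (x : Option F) : F × F := x.elim (0, 1) (fun t => (1, t))

def ptv {F : Type} [Zero F] [One F] [Mul F] (x y : Option F) : Fin 4 → F :=
  ![(nx x).1 * (nx y).1, (nx x).1 * (nx y).2, (nx x).2 * (nx y).1, (nx x).2 * (nx y).2]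

lemma ptv_inj {F : Type} [Field F] : Function.Injective
    (fun w : Option F × Option F => ptv w.1 w.2) := by
  rintro ⟨x, y⟩ ⟨x', y'⟩ h
  simp only at h
  have h0 := congrFun h 0
  have h1 := congrFun h 1
  have h2 := congrFun h 2
  have h3 := congrFun h 3
  rcases x with _ | t <;> rcases y with _ | u <;> rcases x' with _ | t' <;> rcases y' with _ | u' <;>
    simp [ptv, nx] at h0 h1 h2 h3 ⊢ <;> simp_all

open MvPolynomial in
/-- A curve cut out on the hyperbolic quadric `H : x₀x₃ = x₁x₂` in `P³` over `F_q`
by a surface of degree `s < q` not containing `H` has at most `2s(q+1) - s²`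
rational points. -/
theorem stmt_6 (F : Type) [Field F] [Fintype F] (q s : ℕ)
    (hq : Fintype.card F = q) (hs : s < q)
    (f : MvPolynomial (Fin 4) F) (hf : f.IsHomogeneous s)
    (hnc : f ∉ Ideal.span {(X 0 * X 3 - X 1 * X 2 : MvPolynomial (Fin 4) F)}) :
    {p : Fin 4 → F | (∃ i, p i = 1 ∧ ∀ j < i, p j = 0) ∧
        p 0 * p 3 = p 1 * p 2 ∧ MvPolynomial.eval p f = 0}.ncard
      ≤ 2 * s * (q + 1) - s ^ 2 := by
  classical
  set G : MvPolynomial (Fin 4) F := AddMonoidAlgebra.mapDomain phiE f with hGdef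
  have hG0 : G ≠ 0 := by
    intro h
    apply hnc
    have hm := ker_span f (by rw [← hGdef]; exact h)
    rwa [show q4 F = X 0 * X 3 - X 1 * X 2 from rfl] at hm
  have hbi : ∀ n ∈ G.support, n 0 + n 1 = s ∧ n 2 + n 3 = s := fun n hn => bihom f hf hn
  have hb1 : ∀ n ∈ G.support, n 0 + n 1 = s := fun n hn => (hbi n hn).1
  have hb2 : ∀ n ∈ G.support, n 2 + n 3 = s := fun n hn => (hbi n hn).2
  have hevalG : ∀ x y : Option F, MvPolynomial.eval (ptv x y) f
      = MvPolynomial.eval ![(nx x).1, (nx x).2, (nx y).1, (nx y).2] G := by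
    intro x y
    rw [hGdef, eval_mapDomain]
    congr 1
    all_goals (funext i; fin_cases i <;> simp [ptv])
  set Zfin : Finset (Option F × Option F) :=
    Finset.univ.filter (fun w => MvPolynomial.eval (ptv w.1 w.2) f = 0) with hZdef
  have hset : {p : Fin 4 → F | (∃ i, p i = 1 ∧ ∀ j < i, p j = 0) ∧
        p 0 * p 3 = p 1 * p 2 ∧ MvPolynomial.eval p f = 0}
      = ↑(Zfin.image fun w : Option F × Option F => ptv w.1 w.2) := by
    ext v
    simp only [Set.mem_setOf_eq, Finset.coe_image, Set.mem_image, Finset.mem_coe]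
    constructor
    · rintro ⟨⟨i, hi1, hi0⟩, hquad, heval⟩
      fin_cases i
      · have h0 : v 0 = 1 := hi1
        have h3 : v 3 = v 1 * v 2 := by
          have := hquad; rw [h0, one_mul] at this; exact this
        refine ⟨(some (v 2), some (v 1)), ?_, ?_⟩
        · rw [hZdef]
          refine Finset.mem_filter.mpr ⟨Finset.mem_univ _, ?_⟩
          have hv : ptv (some (v 2)) (some (v 1)) = v := by
            funext j; fin_cases j <;> simp [ptv, nx] <;> [skip; skip] <;> first
              | exact h0.symm
              | (rw [h3]; ring)
          rw [hv]; exact heval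
        · funext j; fin_cases j <;> simp [ptv, nx]
          · exact h0.symm
          · rw [h3]; ring
      · have h1 : v 1 = 1 := hi1
        have h0 : v 0 = 0 := hi0 0 (by decide)
        have h2 : v 2 = 0 := by
          have := hquad; rw [h0, h1, zero_mul, one_mul] at this; exact this.symm
        have hv : ptv (some (v 3)) none = v := by
          funext j; fin_cases j <;> simp [ptv, nx]
          · exact h0.symm
          · exact h1.symm
          · exact h2.symm
        refine ⟨(some (v 3), none), ?_, hv⟩
        rw [hZdef]
        refine Finset.mem_filter.mpr ⟨Finset.mem_univ _, ?_⟩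
        rw [hv]; exact heval
      · have h2 : v 2 = 1 := hi1
        have h0 : v 0 = 0 := hi0 0 (by decide)
        have h1 : v 1 = 0 := hi0 1 (by decide)
        have hv : ptv none (some (v 3)) = v := by
          funext j; fin_cases j <;> simp [ptv, nx]
          · exact h0.symm
          · exact h1.symm
          · exact h2.symm
        refine ⟨(none, some (v 3)), ?_, hv⟩
        rw [hZdef]
        refine Finset.mem_filter.mpr ⟨Finset.mem_univ _, ?_⟩
        rw [hv]; exact heval
      · have h3 : v 3 = 1 := hi1
        have h0 : v 0 = 0 := hi0 0 (by decide)
        have h1 : v 1 = 0 := hi0 1 (by decide)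
        have h2 : v 2 = 0 := hi0 2 (by decide)
        have hv : ptv none none = v := by
          funext j; fin_cases j <;> simp [ptv, nx]
          · exact h0.symm
          · exact h1.symm
          · exact h2.symm
          · exact h3.symm
        refine ⟨(none, none), ?_, hv⟩
        rw [hZdef]
        refine Finset.mem_filter.mpr ⟨Finset.mem_univ _, ?_⟩
        rw [hv]; exact heval
    · rintro ⟨⟨x, y⟩, hw, rfl⟩
      rw [hZdef] at hw
      have heval := (Finset.mem_filter.mp hw).2
      refine ⟨?_, ?_, heval⟩
      · rcases x with _ | t <;> rcases y with _ | u
        · exact ⟨3, by simp [ptv, nx], by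
            intro j hj
            fin_cases j <;> first
              | (exfalso; exact absurd hj (by decide))
              | simp [ptv, nx]⟩
        · exact ⟨2, by simp [ptv, nx], by
            intro j hj
            fin_cases j <;> first
              | (exfalso; exact absurd hj (by decide))
              | simp [ptv, nx]⟩
        · exact ⟨1, by simp [ptv, nx], by
            intro j hj
            fin_cases j <;> first
              | (exfalso; exact absurd hj (by decide))
              | simp [ptv, nx]⟩
        · exact ⟨0, by simp [ptv, nx], by
            intro j hj
            fin_cases j <;> first
              | (exfalso; exact absurd hj (by decide))
              | simp [ptv, nx]⟩
      · simp [ptv]; ring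
  rw [hset, Set.ncard_coe_finset, Finset.card_image_of_injective _ ptv_inj]
  -- counting
  have hcard : Zfin.card = ∑ x : Option F,
      (Finset.univ.filter (fun y => MvPolynomial.eval (ptv x y) f = 0)).card := by
    rw [hZdef, Finset.card_filter, Fintype.sum_prod_type]
    exact Finset.sum_congr rfl fun x _ => (Finset.card_filter _ _).symm
  set Bad : Finset (Option F) :=
    Finset.univ.filter (fun x => ∀ y, MvPolynomial.eval (ptv x y) f = 0) with hBdef
  have hgood : ∀ x : Option F, x ∉ Bad →
      (Finset.univ.filter (fun y => MvPolynomial.eval (ptv x y) f = 0)).card ≤ s := by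
    intro x hx
    set p : Polynomial F := chartP G (nx x).1 (nx x).2 with hpdef
    have hpe : ∀ u : F, p.eval u = MvPolynomial.eval (ptv x (some u)) f := by
      intro u
      rw [hpdef, chartP_eval, hevalG x (some u)]
      simp [nx]
    have hpc : p.coeff s = MvPolynomial.eval (ptv x none) f := by
      rw [hpdef, chartP_coeff_s G hb2, hevalG x none]
      simp [nx]
    have hp0 : p ≠ 0 := by
      intro hzero
      apply hx
      rw [hBdef]
      refine Finset.mem_filter.mpr ⟨Finset.mem_univ _, ?_⟩
      intro y
      rcases y with _ | u
      · rw [← hpc, hzero]; simp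
      · rw [← hpe u, hzero]; simp
    exact bin_count p hp0 (chartP_natDegree G hb2 _ _) _
      (fun t ht => by rw [hpe t]; exact ht) (fun hnone => by rw [hpc]; exact hnone)
  have hbad : Bad.card ≤ s := by
    obtain ⟨k, hk⟩ := extrA_ne_zero G hG0 hbi
    rw [hBdef]
    refine bin_count (extrA G k) hk (extrA_natDegree G hb1 k) _ ?_ ?_
    · intro t ht
      have hcz : chartP G 1 t = 0 := by
        apply Polynomial.eq_zero_of_natDegree_lt_card_of_eval_eq_zero' (chartP G 1 t)
          Finset.univ ?_ ?_
        · intro u _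
          rw [chartP_eval]
          have hu := ht (some u)
          rw [hevalG (some t) (some u)] at hu
          simpa [nx] using hu
        · rw [Finset.card_univ, hq]
          exact lt_of_le_of_lt (chartP_natDegree G hb2 _ _) hs
      rw [extrA_eval, hcz]; simp
    · intro hnone
      have hcz : chartP G 0 1 = 0 := by
        apply Polynomial.eq_zero_of_natDegree_lt_card_of_eval_eq_zero' (chartP G 0 1)
          Finset.univ ?_ ?_
        · intro u _
          rw [chartP_eval]
          have hu := hnone (some u)
          rw [hevalG none (some u)] at hu
          simpa [nx] using hu
        · rw [Finset.card_univ, hq]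
          exact lt_of_le_of_lt (chartP_natDegree G hb2 _ _) hs
      rw [extrA_coeff_s G hb1, hcz]; simp
  -- final arithmetic
  have hcards : ∀ x : Option F,
      (Finset.univ.filter (fun y => MvPolynomial.eval (ptv x y) f = 0)).card ≤ q + 1 := by
    intro x
    calc (Finset.univ.filter (fun y => MvPolynomial.eval (ptv x y) f = 0)).card
        ≤ (Finset.univ : Finset (Option F)).card := Finset.card_filter_le _ _
      _ = q + 1 := by rw [Finset.card_univ, Fintype.card_option, hq]
  have hfB : Finset.univ.filter (fun x : Option F => x ∈ Bad) = Bad := by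
    ext z; simp
  have huB : (Finset.univ.filter (fun x : Option F => ¬ x ∈ Bad)).card = q + 1 - Bad.card := by
    rw [Finset.filter_not, Finset.card_sdiff_of_subset (Finset.filter_subset _ _), hfB,
      Finset.card_univ, Fintype.card_option, hq]
  rw [hcard]
  rw [← Finset.sum_filter_add_sum_filter_not (Finset.univ : Finset (Option F))
    (fun x => x ∈ Bad)]
  have h1 : ∑ x ∈ Finset.univ.filter (fun x : Option F => x ∈ Bad),
      (Finset.univ.filter (fun y => MvPolynomial.eval (ptv x y) f = 0)).card
      ≤ Bad.card * (q + 1) := by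
    calc _ ≤ ∑ _x ∈ Finset.univ.filter (fun x : Option F => x ∈ Bad), (q + 1) :=
          Finset.sum_le_sum (fun x _ => hcards x)
      _ = Bad.card * (q + 1) := by rw [Finset.sum_const, hfB, smul_eq_mul]
  have h2 : ∑ x ∈ Finset.univ.filter (fun x : Option F => ¬ x ∈ Bad),
      (Finset.univ.filter (fun y => MvPolynomial.eval (ptv x y) f = 0)).card
      ≤ (q + 1 - Bad.card) * s := by
    calc _ ≤ ∑ _x ∈ Finset.univ.filter (fun x : Option F => ¬ x ∈ Bad), s :=
          Finset.sum_le_sum (fun x hx => hgood x (Finset.mem_filter.mp hx).2)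
      _ = (q + 1 - Bad.card) * s := by rw [Finset.sum_const, huB, smul_eq_mul]
  have htq : Bad.card ≤ q + 1 := by
    calc Bad.card ≤ (Finset.univ : Finset (Option F)).card := Finset.card_le_univ _
      _ = q + 1 := by rw [Finset.card_univ, Fintype.card_option, hq]
  apply Nat.le_sub_of_add_le
  set t := Bad.card
  obtain ⟨d, hd⟩ : ∃ d, s = t + d := ⟨s - t, by omega⟩
  obtain ⟨m, hm⟩ : ∃ m, q + 1 = t + m := ⟨q + 1 - t, by omega⟩
  have hdm : d ≤ m := by omega
  have hq1t : q + 1 - t = m := by omega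
  calc (∑ x ∈ Finset.univ.filter (fun x : Option F => x ∈ Bad),
          (Finset.univ.filter (fun y => MvPolynomial.eval (ptv x y) f = 0)).card
        + ∑ x ∈ Finset.univ.filter (fun x : Option F => ¬ x ∈ Bad),
          (Finset.univ.filter (fun y => MvPolynomial.eval (ptv x y) f = 0)).card) + s ^ 2
      ≤ (t * (q + 1) + (q + 1 - t) * s) + s ^ 2 := by
        have := Nat.add_le_add h1 h2
        omega
    _ ≤ 2 * s * (q + 1) := by
        rw [hq1t, hm, hd]
        have hsq : d * d ≤ d * m := Nat.mul_le_mul_left d hdm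
        ring_nf
        nlinarith [hsq]
end

section
/- A nonzero bihomogeneous form of bidegree (s,s) on P¹ × P¹ over F_q with s < q has exactly 2s(q+1) − s² rational zeros if and only if it factors (up to scalar) as g(u₀,v₀)·h(u₁,v₁) where g and h each split into s distinct linear factors over F_q; equivalently, its zero locus is a union of s lines of each ruling. -/
open Polynomial Finset

namespace Stmt7

variable {F : Type} [Field F]

/-- point of P^1 -/
def Pt (o : Option F) : F × F := o.elim (0, 1) fun t => (1, t)

/-- linear form vanishing exactly at `Pt a` -/
def lf (a : Option F) (v : F × F) : F := (Pt a).2 * v.1 - (Pt a).1 * v.2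

@[simp] lemma Pt_none : (Pt (none : Option F)) = (0, 1) := rfl
@[simp] lemma Pt_some (t : F) : Pt (some t) = (1, t) := rfl

lemma lf_eq_zero_iff (a b : Option F) : lf a (Pt b) = 0 ↔ a = b := by
  cases a <;> cases b <;> simp [lf, Pt, sub_eq_zero, eq_comm]

lemma lf_smul (a : Option F) (t : F) (v : F × F) :
    lf a (t * v.1, t * v.2) = t * lf a v := by
  simp only [lf]; ring

/-- evaluation of the binary form with coefficients `c` -/
def ev (s : ℕ) (c : Fin (s + 1) → F) (v : F × F) : F :=
  ∑ i : Fin (s + 1), c i * (v.1 ^ (i : ℕ) * v.2 ^ (s - (i : ℕ)))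

lemma ev_smul (s : ℕ) (c : Fin (s + 1) → F) (t : F) (v : F × F) :
    ev s c (t * v.1, t * v.2) = t ^ s * ev s c v := by
  simp only [ev, Finset.mul_sum]
  refine Finset.sum_congr rfl fun i _ => ?_
  have h : t ^ (i : ℕ) * t ^ (s - (i : ℕ)) = t ^ s := by
    rw [← pow_add, Nat.add_sub_cancel' (Nat.lt_succ_iff.mp i.2)]
  simp only [mul_pow]
  linear_combination (c i * (v.1 ^ (i : ℕ) * v.2 ^ (s - (i : ℕ)))) * h

lemma ev_x_zero (s : ℕ) (c : Fin (s + 1) → F) (y : F) :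
    ev s c (0, y) = c 0 * y ^ s := by
  rw [ev]
  rw [Fintype.sum_eq_single (0 : Fin (s + 1))]
  · simp
  · intro i hi
    have : (i : ℕ) ≠ 0 := fun h => hi (Fin.ext h)
    simp [zero_pow this]

lemma ev_Pt_none (s : ℕ) (c : Fin (s + 1) → F) : ev s c (Pt none) = c 0 := by
  rw [Pt_none, ev_x_zero]; simp


noncomputable def Pol (s : ℕ) (c : Fin (s + 1) → F) : F[X] :=
  ∑ i : Fin (s + 1), C (c i) * X ^ (s - (i : ℕ))

lemma Pol_coeff (s : ℕ) (c : Fin (s + 1) → F) (i : Fin (s + 1)) :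
    (Pol s c).coeff (s - (i : ℕ)) = c i := by
  rw [Pol, finset_sum_coeff]
  rw [Fintype.sum_eq_single i]
  · simp [coeff_C_mul, coeff_X_pow]
  · intro j hj
    have hji : (j : ℕ) ≠ (i : ℕ) := fun h => hj (Fin.ext h)
    have h1 : (j : ℕ) ≤ s := Nat.lt_succ_iff.mp j.2
    have h2 : (i : ℕ) ≤ s := Nat.lt_succ_iff.mp i.2
    have : ¬ (s - (i : ℕ) = s - (j : ℕ)) := by omega
    simp [coeff_C_mul, coeff_X_pow, this]

lemma Pol_ne_zero {s : ℕ} {c : Fin (s + 1) → F} (hc : c ≠ 0) : Pol s c ≠ 0 := by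
  obtain ⟨i, hi⟩ := Function.ne_iff.mp hc
  intro h
  exact hi (by rw [← Pol_coeff s c i, h, coeff_zero]; rfl)

lemma Pol_natDegree_le (s : ℕ) (c : Fin (s + 1) → F) : (Pol s c).natDegree ≤ s := by
  refine Polynomial.natDegree_sum_le_of_forall_le _ _ fun i _ => ?_
  refine le_trans (natDegree_mul_le) ?_
  simp [natDegree_X_pow]

lemma Pol_natDegree_le' {s : ℕ} {c : Fin (s + 1) → F} (hs : 0 < s) (h0 : c 0 = 0) :
    (Pol s c).natDegree ≤ s - 1 := by
  rw [Polynomial.natDegree_le_iff_coeff_eq_zero]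
  intro m hm
  rcases eq_or_lt_of_le (show s ≤ m by omega) with h | h
  · have := Pol_coeff s c 0
    simp only [Fin.val_zero, Nat.sub_zero] at this
    rw [← h, this, h0]
  · exact coeff_eq_zero_of_natDegree_lt (lt_of_le_of_lt (Pol_natDegree_le s c) h)

lemma Pol_eval (s : ℕ) (c : Fin (s + 1) → F) (t : F) :
    ev s c (Pt (some t)) = (Pol s c).eval t := by
  rw [Pol, eval_finset_sum, ev]
  refine Finset.sum_congr rfl fun i _ => ?_
  simp [Pt]


section Counting
variable [Fintype F] [DecidableEq F]

lemma card_zeros_le {s : ℕ} {c : Fin (s + 1) → F} (hs : 0 < s) (hc : c ≠ 0) :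
    (univ.filter fun a : Option F => ev s c (Pt a) = 0).card ≤ s := by
  classical
  set P := Pol s c with hP
  have hP0 : P ≠ 0 := Pol_ne_zero hc
  set R : Finset F := P.roots.toFinset with hR
  have hRcard : R.card ≤ P.natDegree := by
    refine le_trans (Multiset.toFinset_card_le _) ?_
    simpa using Polynomial.card_roots' P
  have hmem : ∀ t : F, ev s c (Pt (some t)) = 0 → t ∈ R := by
    intro t ht
    rw [hR, Multiset.mem_toFinset, Polynomial.mem_roots hP0]
    rwa [Pol_eval] at ht
  by_cases h0 : c 0 = 0
  · have hsub : (univ.filter fun a : Option F => ev s c (Pt a) = 0) ⊆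
        insert none (R.image some) := by
      intro a ha
      rw [Finset.mem_filter] at ha
      cases a with
      | none => exact Finset.mem_insert_self _ _
      | some t =>
        exact Finset.mem_insert_of_mem (Finset.mem_image_of_mem _ (hmem t ha.2))
    calc (univ.filter fun a : Option F => ev s c (Pt a) = 0).card
        ≤ (insert none (R.image some)).card := Finset.card_le_card hsub
      _ ≤ (R.image some).card + 1 := Finset.card_insert_le _ _
      _ ≤ R.card + 1 := by gcongr; exact Finset.card_image_le
      _ ≤ (s - 1) + 1 := by gcongr; exact le_trans hRcard (Pol_natDegree_le' hs h0)
      _ = s := by omega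
  · have hsub : (univ.filter fun a : Option F => ev s c (Pt a) = 0) ⊆ R.image some := by
      intro a ha
      rw [Finset.mem_filter] at ha
      cases a with
      | none => exact absurd (by rwa [ev_Pt_none] at ha) (by simpa using h0)
      | some t => exact Finset.mem_image_of_mem _ (hmem t ha.2)
    calc (univ.filter fun a : Option F => ev s c (Pt a) = 0).card
        ≤ (R.image some).card := Finset.card_le_card hsub
      _ ≤ R.card := Finset.card_image_le
      _ ≤ s := le_trans hRcard (Pol_natDegree_le s c)

lemma eq_zero_of_forall_zero {q s : ℕ} (hq : Fintype.card F = q) (hs : 0 < s)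
    (hsq : s < q) {c : Fin (s + 1) → F} (h : ∀ a : Option F, ev s c (Pt a) = 0) :
    c = 0 := by
  classical
  by_contra hc
  have h1 := card_zeros_le hs hc
  have h2 : (univ.filter fun a : Option F => ev s c (Pt a) = 0) = univ := by
    refine Finset.filter_true_of_mem fun a _ => h a ▸ rfl
  rw [h2, Finset.card_univ, Fintype.card_option, hq] at h1
  omega

end Counting
open scoped Classical in
lemma prod_option_split {M : Type} [CommMonoid M] (Z : Finset (Option F)) (f : Option F → M) :
    ∏ a ∈ Z, f a =
      (if none ∈ Z then f none else 1) * ∏ t ∈ Z.eraseNone, f (some t) := by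
  classical
  have h1 : ∏ t ∈ Z.eraseNone, f (some t) = ∏ a ∈ Z.erase none, f a := by
    rw [← Finset.map_some_eraseNone Z, Finset.prod_map]
    rfl
  rw [h1]
  by_cases hn : none ∈ Z
  · rw [if_pos hn, Finset.mul_prod_erase _ _ hn]
  · rw [if_neg hn, one_mul, Finset.erase_eq_of_notMem hn]

open scoped Classical in
lemma card_eraseNone' (Z : Finset (Option F)) :
    Z.eraseNone.card = Z.card - (if none ∈ Z then 1 else 0) := by
  classical
  have : Z.eraseNone.card = (Z.erase none).card := by
    rw [← Finset.map_some_eraseNone Z, Finset.card_map]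
  rw [this]
  by_cases hn : none ∈ Z
  · rw [if_pos hn, Finset.card_erase_of_mem hn]
  · rw [if_neg hn, Finset.erase_eq_of_notMem hn]; omega

lemma neg_prod_sub {m : ℕ} (T : Finset F) (hT : T.card = m) (t : F) :
    ∏ u ∈ T, (u - t) = (-1) ^ m * ∏ u ∈ T, (t - u) := by
  calc ∏ u ∈ T, (u - t) = ∏ u ∈ T, (-1) * (t - u) := by
        refine Finset.prod_congr rfl fun u _ => by ring
    _ = (∏ _u ∈ T, (-1 : F)) * ∏ u ∈ T, (t - u) := Finset.prod_mul_distrib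
    _ = (-1) ^ m * ∏ u ∈ T, (t - u) := by rw [Finset.prod_const, hT]

lemma factor {s : ℕ} (hs : 0 < s) {c : Fin (s + 1) → F} (hc : c ≠ 0)
    (Z : Finset (Option F)) (hZ : Z.card = s) (hv : ∀ a ∈ Z, ev s c (Pt a) = 0) :
    ∃ k : F, k ≠ 0 ∧ ∀ v : F × F, ev s c v = k * ∏ a ∈ Z, lf a v := by
  classical
  set P := Pol s c with hPdef
  have hP0 : P ≠ 0 := Pol_ne_zero hc
  set T : Finset F := Z.eraseNone with hTdef
  set m : ℕ := T.card with hmdef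
  have hroots : ∀ t ∈ T, t ∈ P.roots := by
    intro t ht
    rw [Polynomial.mem_roots hP0]
    have := hv (some t) (Finset.mem_eraseNone.mp ht)
    rwa [Pol_eval] at this
  have hle : T.val ≤ P.roots :=
    (Multiset.le_iff_subset T.nodup).mpr fun t ht => hroots t ht
  set d : F[X] := ∏ t ∈ T, (X - C t) with hddef
  have hdvd : d ∣ P := by
    rw [hddef, Finset.prod_eq_multiset_prod]
    exact (Multiset.prod_X_sub_C_dvd_iff_le_roots hP0 T.val).mpr hle
  have hdmonic : d.Monic := Polynomial.monic_prod_of_monic _ _ fun t _ => Polynomial.monic_X_sub_C t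
  have hddeg : d.natDegree = m := by
    rw [hddef, Polynomial.natDegree_prod _ _ fun t _ => Polynomial.X_sub_C_ne_zero t]
    simp [Polynomial.natDegree_X_sub_C, hmdef]
  obtain ⟨u, hPu⟩ := hdvd
  have hu0 : u ≠ 0 := fun h => hP0 (by rw [hPu, h, mul_zero])
  -- degree bookkeeping
  have hmcard : m = s - (if none ∈ Z then 1 else 0) := by
    rw [hmdef, hTdef, card_eraseNone' Z, hZ]
  have hPdeg : P.natDegree ≤ m := by
    rcases Classical.em (none ∈ Z) with hn | hn
    · have h0 : c 0 = 0 := by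
        have := hv none hn; rwa [ev_Pt_none] at this
      rw [hmcard, if_pos hn]
      exact Pol_natDegree_le' hs h0
    · rw [hmcard, if_neg hn]
      simpa using Pol_natDegree_le s c
  have hudeg : u.natDegree = 0 := by
    have := Polynomial.natDegree_mul (hdmonic.ne_zero) hu0
    rw [← hPu, hddeg] at this
    omega
  set k0 : F := u.coeff 0 with hk0def
  have huC : u = C k0 := Polynomial.eq_C_of_natDegree_eq_zero hudeg
  have hk00 : k0 ≠ 0 := by
    intro h; rw [huC, h, map_zero] at hu0; exact hu0 rfl
  have hPfact : P = C k0 * d := by rw [hPu, huC, mul_comm]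
  have heval : ∀ t : F, P.eval t = k0 * ∏ u ∈ T, (t - u) := by
    intro t
    rw [hPfact, Polynomial.eval_mul, Polynomial.eval_C, hddef, Polynomial.eval_prod]
    simp
  refine ⟨k0 * (-1) ^ m, mul_ne_zero hk00 (pow_ne_zero _ (neg_ne_zero.mpr one_ne_zero)), ?_⟩
  rintro ⟨x, y⟩
  by_cases hx : x = 0
  · subst hx
    rw [ev_x_zero, prod_option_split]
    have hlfs : ∀ t : F, lf (some t) ((0 : F), y) = -y := by
      intro t; simp [lf]
    rcases Classical.em (none ∈ Z) with hn | hn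
    · have h0 : c 0 = 0 := by
        have := hv none hn; rwa [ev_Pt_none] at this
      have : lf none ((0 : F), y) = 0 := by simp [lf]
      rw [if_pos hn, this, h0]
      ring
    · have hms : m = s := by rw [hmcard, if_neg hn]; omega
      have hc0 : c 0 = k0 := by
        have h1 : P.coeff s = c 0 := by
          have := Pol_coeff s c 0
          simpa using this
        have h2 : P.coeff s = k0 := by
          rw [hPfact, Polynomial.coeff_C_mul]
          have : d.coeff s = 1 := by
            have := hdmonic.coeff_natDegree
            rwa [hddeg, hms] at this
          rw [this, mul_one]
        rw [← h1, h2]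
      rw [if_neg hn, one_mul, hc0]
      have : ∏ t ∈ T, lf (some t) ((0 : F), y) = (-y) ^ m := by
        rw [Finset.prod_congr rfl fun t _ => hlfs t, Finset.prod_const, hmdef]
      have hmm : (-1 : F) ^ m * (-1) ^ m = 1 := by
        rw [← mul_pow]; norm_num
      rw [this, ← hms, neg_pow]
      linear_combination (-(k0 * y ^ m)) * hmm
  · -- x ≠ 0
    set t : F := y / x with htdef
    have hxy : ((x : F), y) = (x * (1 : F), x * t) := by
      rw [htdef]; field_simp
    rw [hxy]
    have h1 : ev s c (x * (1 : F), x * t) = x ^ s * ev s c ((1 : F), t) := ev_smul s c x (1, t)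
    have h2 : ev s c ((1 : F), t) = P.eval t := Pol_eval s c t
    have h3 : ∏ a ∈ Z, lf a (x * (1 : F), x * t) = x ^ s * ∏ a ∈ Z, lf a ((1 : F), t) := by
      rw [Finset.prod_congr rfl fun a _ => lf_smul a x (1, t), Finset.prod_mul_distrib,
        Finset.prod_const, hZ]
    have h4 : ∏ a ∈ Z, lf a ((1 : F), t) = ∏ u ∈ T, (u - t) := by
      rw [prod_option_split]
      have hlfn : lf (none : Option F) ((1 : F), t) = 1 := by simp [lf]
      have : ∀ u : F, lf (some u) ((1 : F), t) = u - t := by intro u; simp [lf]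
      rw [Finset.prod_congr rfl fun u _ => this u]
      rcases Classical.em (none ∈ Z) with hn | hn
      · rw [if_pos hn, hlfn, one_mul]
      · rw [if_neg hn, one_mul]
    have hmm : (-1 : F) ^ m * (-1) ^ m = 1 := by
      rw [← mul_pow]; norm_num
    rw [h1, h2, heval, h3, h4, neg_prod_sub T hmdef.symm]
    linear_combination (-(k0 * x ^ s * ∏ u ∈ T, (t - u))) * hmm

/-! ### Bihomogeneous forms -/

def Ebi (s : ℕ) (c : Fin (s + 1) × Fin (s + 1) → F) (v w : F × F) : F :=
  ∑ i : Fin (s + 1), ∑ j : Fin (s + 1), c (i, j) *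
    (v.1 ^ (i : ℕ) * v.2 ^ (s - (i : ℕ)) * w.1 ^ (j : ℕ) * w.2 ^ (s - (j : ℕ)))

def Rv (s : ℕ) (c : Fin (s + 1) × Fin (s + 1) → F) (v : F × F) : Fin (s + 1) → F :=
  fun j => ev s (fun i => c (i, j)) v

def Cw (s : ℕ) (c : Fin (s + 1) × Fin (s + 1) → F) (w : F × F) : Fin (s + 1) → F :=
  fun i => ev s (fun j => c (i, j)) w

lemma ev_zero (s : ℕ) (v : F × F) : ev s (0 : Fin (s + 1) → F) v = 0 := by
  simp [ev]

lemma Ebi_eq_R (s : ℕ) (c : Fin (s + 1) × Fin (s + 1) → F) (v w : F × F) :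
    Ebi s c v w = ev s (Rv s c v) w := by
  rw [Ebi, ev]
  simp only [Rv, ev, Finset.sum_mul]
  rw [Finset.sum_comm]
  exact Finset.sum_congr rfl fun i _ => Finset.sum_congr rfl fun j _ => by ring

lemma Ebi_eq_C (s : ℕ) (c : Fin (s + 1) × Fin (s + 1) → F) (v w : F × F) :
    Ebi s c v w = ev s (Cw s c w) v := by
  rw [Ebi, ev]
  simp only [Cw, ev, Finset.sum_mul]
  exact Finset.sum_congr rfl fun i _ => Finset.sum_congr rfl fun j _ => by ring

lemma card_filter_prod {α β : Type} [Fintype α] [Fintype β]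
    (P : α × β → Prop) [DecidablePred P] :
    (univ.filter P).card = ∑ a : α, (univ.filter fun b => P (a, b)).card := by
  rw [Finset.card_filter, Fintype.sum_prod_type]
  exact Finset.sum_congr rfl fun a _ => (Finset.card_filter _ _).symm

lemma card_filter_prod' {α β : Type} [Fintype α] [Fintype β]
    (P : α × β → Prop) [DecidablePred P] :
    (univ.filter P).card = ∑ b : β, (univ.filter fun a => P (a, b)).card := by
  rw [Finset.card_filter, Fintype.sum_prod_type_right]
  exact Finset.sum_congr rfl fun b _ => (Finset.card_filter _ _).symm

open scoped Classical in
lemma reverse_dir [Fintype F] {q s : ℕ} (hq : Fintype.card F = q) (hs0 : 0 < s)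
    (hs : s < q) (c : Fin (s + 1) × Fin (s + 1) → F) (k : F)
    (A B : Fin s ↪ Option F) (hk : k ≠ 0)
    (hfac : ∀ v w : F × F, Ebi s c v w =
      k * (∏ m : Fin s, lf (A m) v) * (∏ m : Fin s, lf (B m) w)) :
    (univ.filter fun p : Option F × Option F => Ebi s c (Pt p.1) (Pt p.2) = 0).card
      = 2 * s * (q + 1) - s ^ 2 := by
  classical
  set SA : Finset (Option F) := univ.image A with hSA
  set SB : Finset (Option F) := univ.image B with hSB
  have hSAcard : SA.card = s := by
    rw [hSA, Finset.card_image_of_injective _ A.injective, Finset.card_univ,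
      Fintype.card_fin]
  have hSBcard : SB.card = s := by
    rw [hSB, Finset.card_image_of_injective _ B.injective, Finset.card_univ,
      Fintype.card_fin]
  have hOpt : Fintype.card (Option F) = q + 1 := by
    rw [Fintype.card_option, hq]
  have hfilter : (univ.filter fun p : Option F × Option F =>
      Ebi s c (Pt p.1) (Pt p.2) = 0) = (SA ×ˢ univ) ∪ (univ ×ˢ SB) := by
    ext ⟨a, b⟩
    rw [Finset.mem_filter, Finset.mem_union, Finset.mem_product, Finset.mem_product]
    simp only [Finset.mem_univ, true_and, and_true]
    rw [hfac (Pt a) (Pt b)]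
    rw [mul_eq_zero, mul_eq_zero]
    rw [Finset.prod_eq_zero_iff, Finset.prod_eq_zero_iff]
    constructor
    · rintro ((hk0 | ⟨m, _, hm⟩) | ⟨m, _, hm⟩)
      · exact absurd hk0 hk
      · left; rw [hSA, Finset.mem_image]
        exact ⟨m, Finset.mem_univ m, (lf_eq_zero_iff _ _).mp hm⟩
      · right; rw [hSB, Finset.mem_image]
        exact ⟨m, Finset.mem_univ m, (lf_eq_zero_iff _ _).mp hm⟩
    · rintro (ha | hb)
      · rw [hSA, Finset.mem_image] at ha
        obtain ⟨m, _, hm⟩ := ha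
        exact Or.inl (Or.inr ⟨m, Finset.mem_univ m, (lf_eq_zero_iff _ _).mpr hm⟩)
      · rw [hSB, Finset.mem_image] at hb
        obtain ⟨m, _, hm⟩ := hb
        exact Or.inr ⟨m, Finset.mem_univ m, (lf_eq_zero_iff _ _).mpr hm⟩
  rw [hfilter]
  have hinter : (SA ×ˢ (univ : Finset (Option F))) ∩ ((univ : Finset (Option F)) ×ˢ SB)
      = SA ×ˢ SB := by
    ext ⟨a, b⟩
    simp only [Finset.mem_inter, Finset.mem_product, Finset.mem_univ, true_and, and_true]
  have hcui := Finset.card_union_add_card_inter (SA ×ˢ (univ : Finset (Option F)))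
    ((univ : Finset (Option F)) ×ˢ SB)
  rw [hinter] at hcui
  rw [Finset.card_product, Finset.card_product, Finset.card_product, Finset.card_univ,
    hOpt, hSAcard, hSBcard] at hcui
  have hle : s * s ≤ s * (q + 1) := Nat.mul_le_mul_left _ (by omega)
  have : ((SA ×ˢ (univ : Finset (Option F))) ∪ ((univ : Finset (Option F)) ×ˢ SB)).card
      + s ^ 2 = 2 * s * (q + 1) := by
    rw [pow_two]
    calc _ = s * (q + 1) + (q + 1) * s := hcui
      _ = 2 * s * (q + 1) := by ring
  exact Nat.eq_sub_of_add_eq this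

set_option maxHeartbeats 1000000 in
open scoped Classical in
lemma forward_dir [Fintype F] {q s : ℕ} (hq : Fintype.card F = q) (hs0 : 0 < s)
    (hs : s < q) (c : Fin (s + 1) × Fin (s + 1) → F) (hc : c ≠ 0)
    (hN : (univ.filter fun p : Option F × Option F =>
        Ebi s c (Pt p.1) (Pt p.2) = 0).card = 2 * s * (q + 1) - s ^ 2) :
    ∃ (A B : Fin s ↪ Option F) (k : F), k ≠ 0 ∧
      ∀ v w : F × F, Ebi s c v w =
        k * (∏ m : Fin s, lf (A m) v) * (∏ m : Fin s, lf (B m) w) := by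
  classical
  have hOpt : Fintype.card (Option F) = q + 1 := by rw [Fintype.card_option, hq]
  set A : Finset (Option F) := univ.filter (fun a => Rv s c (Pt a) = 0) with hAdef
  set B : Finset (Option F) := univ.filter (fun b => Cw s c (Pt b) = 0) with hBdef
  -- A and B are small
  have hAle : A.card ≤ s := by
    by_contra hlt
    push_neg at hlt
    have hcj : ∀ j : Fin (s + 1), (fun i => c (i, j)) = 0 := by
      intro j
      by_contra hcj
      have hsub : A ⊆ univ.filter
          (fun a : Option F => ev s (fun i => c (i, j)) (Pt a) = 0) := by
        intro a ha
        rw [hAdef, Finset.mem_filter] at ha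
        rw [Finset.mem_filter]
        exact ⟨Finset.mem_univ a, congrFun ha.2 j⟩
      have h1 := card_zeros_le hs0 hcj
      have h2 := Finset.card_le_card hsub
      omega
    apply hc
    funext p
    obtain ⟨i, j⟩ := p
    exact congrFun (hcj j) i
  have hBle : B.card ≤ s := by
    by_contra hlt
    push_neg at hlt
    have hcj : ∀ i : Fin (s + 1), (fun j => c (i, j)) = 0 := by
      intro i
      by_contra hcj
      have hsub : B ⊆ univ.filter
          (fun b : Option F => ev s (fun j => c (i, j)) (Pt b) = 0) := by
        intro b hb
        rw [hBdef, Finset.mem_filter] at hb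
        rw [Finset.mem_filter]
        exact ⟨Finset.mem_univ b, congrFun hb.2 i⟩
      have h1 := card_zeros_le hs0 hcj
      have h2 := Finset.card_le_card hsub
      omega
    apply hc
    funext p
    obtain ⟨i, j⟩ := p
    exact congrFun (hcj i) j
  -- counting
  have hsq2 : s ^ 2 ≤ 2 * s * (q + 1) := by nlinarith
  have hNeq : (univ.filter fun p : Option F × Option F =>
      Ebi s c (Pt p.1) (Pt p.2) = 0).card + s ^ 2 = 2 * s * (q + 1) := by
    rw [hN]
    exact Nat.sub_add_cancel hsq2
  -- row counting to get A.card = s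
  have hAcard : A.card = s := by
    set n : Option F → ℕ :=
      fun a => (univ.filter fun b => Ebi s c (Pt a) (Pt b) = 0).card with hndef
    have hNsum : (univ.filter fun p : Option F × Option F =>
        Ebi s c (Pt p.1) (Pt p.2) = 0).card = ∑ a : Option F, n a :=
      card_filter_prod _
    have hsplit := Finset.sum_filter_add_sum_filter_not univ
      (fun a : Option F => Rv s c (Pt a) = 0) n
    have h_in : ∑ a ∈ A, n a = A.card * (q + 1) := by
      rw [Finset.sum_congr rfl (fun a ha => ?_), Finset.sum_const, smul_eq_mul]
      rw [hAdef, Finset.mem_filter] at ha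
      simp only [hndef]
      have : (univ.filter fun b => Ebi s c (Pt a) (Pt b) = 0) = univ := by
        refine Finset.filter_true_of_mem fun b _ => ?_
        rw [Ebi_eq_R, ha.2, ev_zero]
      rw [this, Finset.card_univ, hOpt]
    have h_out : ∑ a ∈ univ.filter (fun a : Option F => ¬ Rv s c (Pt a) = 0), n a
        ≤ (univ.filter (fun a : Option F => ¬ Rv s c (Pt a) = 0)).card * s := by
      rw [← smul_eq_mul]
      refine Finset.sum_le_card_nsmul _ _ s fun a ha => ?_
      rw [Finset.mem_filter] at ha
      have h1 := card_zeros_le hs0 ha.2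
      have h2 : (univ.filter fun b => Ebi s c (Pt a) (Pt b) = 0) =
          univ.filter (fun b : Option F => ev s (Rv s c (Pt a)) (Pt b) = 0) :=
        Finset.filter_congr fun b _ => by rw [Ebi_eq_R]
      simp only [hndef, h2]
      exact h1
    have hcards : A.card +
        (univ.filter (fun a : Option F => ¬ Rv s c (Pt a) = 0)).card = q + 1 := by
      rw [hAdef]
      rw [Finset.card_filter_add_card_filter_not, Finset.card_univ, hOpt]
    -- arithmetic
    set α := A.card
    set t := (univ.filter (fun a : Option F => ¬ Rv s c (Pt a) = 0)).card
    set S := ∑ a ∈ univ.filter (fun a : Option F => ¬ Rv s c (Pt a) = 0), n a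
    have key : α * (q + 1) + S + s ^ 2 = 2 * s * (q + 1) := by
      rw [← h_in]
      rw [hNsum] at hNeq
      rw [← hNeq, hsplit]
    have hZ1 : (α : ℤ) * (q + 1) + S + s ^ 2 = 2 * s * (q + 1) := by exact_mod_cast key
    have hZ2 : (S : ℤ) ≤ t * s := by exact_mod_cast h_out
    have hZ3 : (α : ℤ) + t = q + 1 := by exact_mod_cast hcards
    have hZ4 : (α : ℤ) ≤ s := by exact_mod_cast hAle
    have hZ5 : (s : ℤ) < q := by exact_mod_cast hs
    have hZ6 : (0 : ℤ) < s := by exact_mod_cast hs0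
    have e2 : (α : ℤ) * s + t * s = (q + 1) * s := by
      have := congrArg (· * (s : ℤ)) hZ3
      simpa [add_mul] using this
    have up : (α : ℤ) * (q + 1 - s) ≤ s * (q + 1 - s) :=
      mul_le_mul_of_nonneg_right hZ4 (by linarith)
    have down : (s : ℤ) * (q + 1 - s) ≤ α * (q + 1 - s) := by linarith [hZ1, hZ2, e2]
    have heq : (α : ℤ) * (q + 1 - s) = s * (q + 1 - s) := le_antisymm up down
    have hne : ((q : ℤ) + 1 - s) ≠ 0 := by linarith
    have : (α : ℤ) = s := mul_right_cancel₀ hne heq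
    exact_mod_cast this
  -- column counting to get B.card = s
  have hBcard : B.card = s := by
    set n : Option F → ℕ :=
      fun b => (univ.filter fun a => Ebi s c (Pt a) (Pt b) = 0).card with hndef
    have hNsum : (univ.filter fun p : Option F × Option F =>
        Ebi s c (Pt p.1) (Pt p.2) = 0).card = ∑ b : Option F, n b :=
      card_filter_prod' _
    have hsplit := Finset.sum_filter_add_sum_filter_not univ
      (fun b : Option F => Cw s c (Pt b) = 0) n
    have h_in : ∑ b ∈ B, n b = B.card * (q + 1) := by
      rw [Finset.sum_congr rfl (fun b hb => ?_), Finset.sum_const, smul_eq_mul]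
      rw [hBdef, Finset.mem_filter] at hb
      simp only [hndef]
      have : (univ.filter fun a => Ebi s c (Pt a) (Pt b) = 0) = univ := by
        refine Finset.filter_true_of_mem fun a _ => ?_
        rw [Ebi_eq_C, hb.2, ev_zero]
      rw [this, Finset.card_univ, hOpt]
    have h_out : ∑ b ∈ univ.filter (fun b : Option F => ¬ Cw s c (Pt b) = 0), n b
        ≤ (univ.filter (fun b : Option F => ¬ Cw s c (Pt b) = 0)).card * s := by
      rw [← smul_eq_mul]
      refine Finset.sum_le_card_nsmul _ _ s fun b hb => ?_
      rw [Finset.mem_filter] at hb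
      have h1 := card_zeros_le hs0 hb.2
      have h2 : (univ.filter fun a => Ebi s c (Pt a) (Pt b) = 0) =
          univ.filter (fun a : Option F => ev s (Cw s c (Pt b)) (Pt a) = 0) :=
        Finset.filter_congr fun a _ => by rw [Ebi_eq_C]
      simp only [hndef, h2]
      exact h1
    have hcards : B.card +
        (univ.filter (fun b : Option F => ¬ Cw s c (Pt b) = 0)).card = q + 1 := by
      rw [hBdef]
      rw [Finset.card_filter_add_card_filter_not, Finset.card_univ, hOpt]
    set α := B.card
    set t := (univ.filter (fun b : Option F => ¬ Cw s c (Pt b) = 0)).card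
    set S := ∑ b ∈ univ.filter (fun b : Option F => ¬ Cw s c (Pt b) = 0), n b
    have key : α * (q + 1) + S + s ^ 2 = 2 * s * (q + 1) := by
      rw [← h_in]
      rw [hNsum] at hNeq
      rw [← hNeq, hsplit]
    have hZ1 : (α : ℤ) * (q + 1) + S + s ^ 2 = 2 * s * (q + 1) := by exact_mod_cast key
    have hZ2 : (S : ℤ) ≤ t * s := by exact_mod_cast h_out
    have hZ3 : (α : ℤ) + t = q + 1 := by exact_mod_cast hcards
    have hZ4 : (α : ℤ) ≤ s := by exact_mod_cast hBle
    have hZ5 : (s : ℤ) < q := by exact_mod_cast hs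
    have hZ6 : (0 : ℤ) < s := by exact_mod_cast hs0
    have e2 : (α : ℤ) * s + t * s = (q + 1) * s := by
      have := congrArg (· * (s : ℤ)) hZ3
      simpa [add_mul] using this
    have up : (α : ℤ) * (q + 1 - s) ≤ s * (q + 1 - s) :=
      mul_le_mul_of_nonneg_right hZ4 (by linarith)
    have down : (s : ℤ) * (q + 1 - s) ≤ α * (q + 1 - s) := by linarith [hZ1, hZ2, e2]
    have heq : (α : ℤ) * (q + 1 - s) = s * (q + 1 - s) := le_antisymm up down
    have hne : ((q : ℤ) + 1 - s) ≠ 0 := by linarith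
    have : (α : ℤ) = s := mul_right_cancel₀ hne heq
    exact_mod_cast this
  -- pick points off A and B
  obtain ⟨a₀, ha₀⟩ : ∃ a₀, a₀ ∉ A := by
    by_contra h
    push_neg at h
    have : A = univ := Finset.eq_univ_iff_forall.mpr h
    rw [this, Finset.card_univ, hOpt] at hAcard
    omega
  obtain ⟨b₀, hb₀⟩ : ∃ b₀, b₀ ∉ B := by
    by_contra h
    push_neg at h
    have : B = univ := Finset.eq_univ_iff_forall.mpr h
    rw [this, Finset.card_univ, hOpt] at hBcard
    omega
  set g : F × F → F := fun v => ∏ a ∈ A, lf a v with hgdef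
  set h : F × F → F := fun w => ∏ b ∈ B, lf b w with hhdef
  -- row factorizations
  have hrow : ∀ a : Option F, a ∉ A → ∃ k : F, k ≠ 0 ∧
      ∀ w : F × F, ev s (Rv s c (Pt a)) w = k * h w := by
    intro a ha
    have hRa : Rv s c (Pt a) ≠ 0 := by
      intro h0
      exact ha (by rw [hAdef, Finset.mem_filter]; exact ⟨Finset.mem_univ a, h0⟩)
    have hvan : ∀ b ∈ B, ev s (Rv s c (Pt a)) (Pt b) = 0 := by
      intro b hb
      rw [hBdef, Finset.mem_filter] at hb
      rw [← Ebi_eq_R, Ebi_eq_C, hb.2, ev_zero]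
    obtain ⟨k, hk0, hk⟩ := factor hs0 hRa B hBcard hvan
    exact ⟨k, hk0, fun w => by rw [hk w]⟩
  choose! krow hkrow0 hkrow using hrow
  have hH : h (Pt b₀) ≠ 0 := by
    rw [hhdef]
    refine Finset.prod_ne_zero_iff.mpr fun b hb h0 => ?_
    rw [lf_eq_zero_iff] at h0
    exact hb₀ (h0 ▸ hb)
  -- column factorization at b₀
  have hCne : Cw s c (Pt b₀) ≠ 0 := by
    intro h0
    have h1 : Ebi s c (Pt a₀) (Pt b₀) = 0 := by rw [Ebi_eq_C, h0, ev_zero]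
    have h2 : Ebi s c (Pt a₀) (Pt b₀) = krow a₀ * h (Pt b₀) := by
      rw [Ebi_eq_R]; exact hkrow a₀ ha₀ (Pt b₀)
    rw [h2] at h1
    exact (mul_ne_zero (hkrow0 a₀ ha₀) hH) h1
  have hcolvan : ∀ a ∈ A, ev s (Cw s c (Pt b₀)) (Pt a) = 0 := by
    intro a ha
    rw [hAdef, Finset.mem_filter] at ha
    rw [← Ebi_eq_C, Ebi_eq_R, ha.2, ev_zero]
  obtain ⟨k', hk'0, hk'⟩ := factor hs0 hCne A hAcard hcolvan
  set K : F := k' * (h (Pt b₀))⁻¹ with hKdef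
  have hK0 : K ≠ 0 := mul_ne_zero hk'0 (inv_ne_zero hH)
  -- pointwise identity on lines
  have hmain1 : ∀ (a : Option F) (w : F × F),
      Ebi s c (Pt a) w = K * g (Pt a) * h w := by
    intro a w
    by_cases ha : a ∈ A
    · have hmem := ha
      rw [hAdef, Finset.mem_filter] at hmem
      rw [Ebi_eq_R, hmem.2, ev_zero]
      have hg0 : g (Pt a) = 0 := by
        rw [hgdef]
        exact Finset.prod_eq_zero ha ((lf_eq_zero_iff a a).mpr rfl)
      rw [hg0]
      ring
    · have h1 : Ebi s c (Pt a) w = krow a * h w := by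
        rw [Ebi_eq_R]; exact hkrow a ha w
      have h2 : krow a * h (Pt b₀) = k' * g (Pt a) := by
        have l : Ebi s c (Pt a) (Pt b₀) = krow a * h (Pt b₀) := by
          rw [Ebi_eq_R]; exact hkrow a ha (Pt b₀)
        have r : Ebi s c (Pt a) (Pt b₀) = k' * g (Pt a) := by
          rw [Ebi_eq_C]; exact hk' (Pt a)
        rw [← l, r]
      have h3 : krow a = K * g (Pt a) := by
        rw [hKdef]
        field_simp
        linear_combination h2
      rw [h1, h3]
  -- scaling of g
  have hg_smul : ∀ (t : F) (v : F × F), g (t * v.1, t * v.2) = t ^ s * g v := by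
    intro t v
    rw [hgdef]
    simp only
    rw [Finset.prod_congr rfl (fun a _ => lf_smul a t v), Finset.prod_mul_distrib,
      Finset.prod_const, hAcard]
  -- full identity
  have hmain : ∀ v w : F × F, Ebi s c v w = K * g v * h w := by
    rintro ⟨x, y⟩ w
    by_cases hx : x = 0
    · subst hx
      have e1 : ((0 : F), y) = (y * (Pt (none : Option F)).1, y * (Pt (none : Option F)).2) := by
        simp [Pt]
      rw [e1, Ebi_eq_C, ev_smul, hg_smul]
      have := hmain1 none w
      rw [Ebi_eq_C] at this
      rw [this]
      ring
    · have e1 : ((x : F), y) = (x * (Pt (some (y / x))).1, x * (Pt (some (y / x))).2) := by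
        simp [Pt]
        field_simp
      rw [e1, Ebi_eq_C, ev_smul, hg_smul]
      have := hmain1 (some (y / x)) w
      rw [Ebi_eq_C] at this
      rw [this]
      ring
  -- build embeddings
  have hAcard' : Fintype.card (↥A) = s := by rw [Fintype.card_coe, hAcard]
  have hBcard' : Fintype.card (↥B) = s := by rw [Fintype.card_coe, hBcard]
  set eA : ↥A ≃ Fin s := Fintype.equivFinOfCardEq hAcard' with heA
  set eB : ↥B ≃ Fin s := Fintype.equivFinOfCardEq hBcard' with heB
  refine ⟨⟨fun m => (eA.symm m : Option F),
      Subtype.val_injective.comp eA.symm.injective⟩,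
    ⟨fun m => (eB.symm m : Option F),
      Subtype.val_injective.comp eB.symm.injective⟩, K, hK0, ?_⟩
  intro v w
  have hprodA : ∏ m : Fin s, lf ((eA.symm m : Option F)) v = g v := by
    rw [hgdef]
    calc ∏ m : Fin s, lf ((eA.symm m : Option F)) v
        = ∏ a : ↥A, lf (a : Option F) v := Equiv.prod_comp eA.symm (fun a : ↥A => lf (a : Option F) v)
      _ = ∏ a ∈ A, lf a v := Finset.prod_coe_sort A (fun a => lf a v)
  have hprodB : ∏ m : Fin s, lf ((eB.symm m : Option F)) w = h w := by
    rw [hhdef]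
    calc ∏ m : Fin s, lf ((eB.symm m : Option F)) w
        = ∏ b : ↥B, lf (b : Option F) w := Equiv.prod_comp eB.symm (fun b : ↥B => lf (b : Option F) w)
      _ = ∏ b ∈ B, lf b w := Finset.prod_coe_sort B (fun b => lf b w)
  simp only [Function.Embedding.coeFn_mk]
  rw [hprodA, hprodB]
  exact hmain v w
end Stmt7

/-- A nonzero bihomogeneous form of bidegree `(s,s)` on `P¹ × P¹` over `F_q`
(with `0 < s < q`) has exactly `2s(q+1) - s²` rational zeros if and only if it
factors, up to a nonzero scalar, as `g(u₀,v₀)·h(u₁,v₁)` where `g` and `h` each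
split into `s` distinct linear factors over `F_q` (i.e. its zero locus is a
union of `s` lines of each ruling). -/
theorem stmt_7 (F : Type) [Field F] [Fintype F] (q s : ℕ)
    (hq : Fintype.card F = q) (hs0 : 0 < s) (hs : s < q)
    (c : Fin (s + 1) × Fin (s + 1) → F) (hc : c ≠ 0) :
    let pt : Option F → F × F := fun o => o.elim (0, 1) fun t => (1, t)
    let E : (F × F) → (F × F) → F := fun v w =>
      ∑ i : Fin (s + 1), ∑ j : Fin (s + 1), c (i, j) *
        (v.1 ^ (i : ℕ) * v.2 ^ (s - (i : ℕ)) * w.1 ^ (j : ℕ) * w.2 ^ (s - (j : ℕ)))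
    ({p : Option F × Option F | E (pt p.1) (pt p.2) = 0}.ncard
        = 2 * s * (q + 1) - s ^ 2 ↔
      ∃ (A B : Fin s ↪ Option F) (k : F), k ≠ 0 ∧
        ∀ v w : F × F, E v w =
          k * (∏ m : Fin s, ((pt (A m)).2 * v.1 - (pt (A m)).1 * v.2)) *
              (∏ m : Fin s, ((pt (B m)).2 * w.1 - (pt (B m)).1 * w.2))) := by
  classical
  intro pt E
  have hset : {p : Option F × Option F | E (pt p.1) (pt p.2) = 0} =
      ↑(Finset.univ.filter fun p : Option F × Option F =>
        Stmt7.Ebi s c (Stmt7.Pt p.1) (Stmt7.Pt p.2) = 0) := by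
    ext p
    simp only [Set.mem_setOf_eq, Finset.coe_filter, Finset.mem_univ, true_and]
    exact Iff.rfl
  rw [hset, Set.ncard_coe_finset]
  constructor
  · intro hN
    obtain ⟨A, B, k, hk, hfac⟩ := Stmt7.forward_dir hq hs0 hs c hc hN
    exact ⟨A, B, k, hk, fun v w => hfac v w⟩
  · rintro ⟨A, B, k, hk, hfac⟩
    exact Stmt7.reverse_dir hq hs0 hs c k A B hk (fun v w => hfac v w)
end

section
/- For 0 ≤ s ≤ q−2, the extended code B₀^{ext}(s) has length q²+1, dimension (s+1)², and minimum distance q²+1−s(q+1). -/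
set_option linter.unusedSectionVars false

open Polynomial Finset

namespace Stmt10Aux

variable {F K : Type} [Field F] [Field K] [Algebra F K] [Fintype F] [Fintype K] [DecidableEq K]

/-- exponent of the monomial indexed by `(a,b)` -/
def e (q s : ℕ) (ab : Fin (s+1) × Fin (s+1)) : ℕ := ab.1.val + q * ab.2.val

noncomputable def Pof (q s : ℕ) (lam : Fin (s+1) × Fin (s+1) → K) : K[X] :=
  ∑ ab : Fin (s+1) × Fin (s+1), monomial (e q s ab) (lam ab)

variable {q s : ℕ}

lemma Pof_add (x y : Fin (s+1) × Fin (s+1) → K) :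
    Pof q s (x + y) = Pof q s x + Pof q s y := by
  simp [Pof, ← Finset.sum_add_distrib, map_add]

lemma Pof_smul (c : K) (x : Fin (s+1) × Fin (s+1) → K) :
    Pof q s (c • x) = c • Pof q s x := by
  simp [Pof, Finset.smul_sum, Polynomial.smul_monomial]

lemma eval_Pof (lam : Fin (s+1) × Fin (s+1) → K) (t : K) :
    (Pof q s lam).eval t = ∑ ab : Fin (s+1) × Fin (s+1), lam ab * t ^ (e q s ab) := by
  simp [Pof, eval_finset_sum]

lemma e_inj (hsq : s < q) : Function.Injective (e q s) := by
  rintro ⟨a, b⟩ ⟨a', b'⟩ h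
  have hq0 : 0 < q := lt_of_le_of_lt (Nat.zero_le s) hsq
  have ha : (a : ℕ) < q := lt_of_lt_of_le a.isLt hsq
  have ha' : (a' : ℕ) < q := lt_of_lt_of_le a'.isLt hsq
  have hmod : ((a : ℕ) + q * b) % q = ((a' : ℕ) + q * b') % q := by rw [e] at h; rw [h]; rfl
  have hdiv : ((a : ℕ) + q * b) / q = ((a' : ℕ) + q * b') / q := by rw [e] at h; rw [h]; rfl
  rw [Nat.add_mul_mod_self_left, Nat.add_mul_mod_self_left, Nat.mod_eq_of_lt ha,
    Nat.mod_eq_of_lt ha'] at hmod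
  rw [Nat.add_mul_div_left _ _ hq0, Nat.add_mul_div_left _ _ hq0, Nat.div_eq_of_lt ha,
    Nat.div_eq_of_lt ha'] at hdiv
  rw [Nat.zero_add, Nat.zero_add] at hdiv
  exact Prod.ext (Fin.ext hmod) (Fin.ext hdiv)

lemma coeff_Pof (hsq : s < q) (lam : Fin (s+1) × Fin (s+1) → K) (ab : Fin (s+1) × Fin (s+1)) :
    (Pof q s lam).coeff (e q s ab) = lam ab := by
  rw [Pof, finset_sum_coeff]
  rw [Finset.sum_eq_single ab]
  · simp
  · intro b _ hb
    rw [coeff_monomial, if_neg]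
    exact fun h => hb (e_inj hsq h)
  · simp

lemma e_le (ab : Fin (s+1) × Fin (s+1)) : e q s ab ≤ s + q * s :=
  Nat.add_le_add (Nat.lt_succ_iff.mp ab.1.isLt)
    (Nat.mul_le_mul_left q (Nat.lt_succ_iff.mp ab.2.isLt))

lemma natDegree_Pof_le (lam : Fin (s+1) × Fin (s+1) → K) :
    (Pof q s lam).natDegree ≤ s + q * s := by
  refine natDegree_sum_le_of_forall_le _ _ fun ab _ => ?_
  exact le_trans (natDegree_monomial_le _) (e_le ab)

noncomputable def Tmap (q s : ℕ) : ((Fin (s+1) × Fin (s+1)) → K) →ₗ[K] (Option K → K) where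
  toFun lam := fun o => o.elim (lam (Fin.last s, Fin.last s)) fun t => (Pof q s lam).eval t
  map_add' x y := by
    funext o
    cases o with
    | none => rfl
    | some t => simp [Pof_add, Option.elim]
  map_smul' c x := by
    funext o
    cases o with
    | none => rfl
    | some t => simp [Pof_smul, Option.elim]

lemma Tmap_none (lam : Fin (s+1) × Fin (s+1) → K) :
    Tmap q s lam none = lam (Fin.last s, Fin.last s) := rfl

lemma Tmap_some (lam : Fin (s+1) × Fin (s+1) → K) (t : K) :
    Tmap q s lam (some t) = (Pof q s lam).eval t := rfl

lemma frob_add (hqF : Fintype.card F = q) (x y : K) : (x + y) ^ q = x ^ q + y ^ q := by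
  let p := ringChar F
  haveI : CharP F p := ringChar.charP F
  have hp : p.Prime := CharP.char_is_prime F p
  obtain ⟨n, -, hcard⟩ := FiniteField.card F p
  haveI : Fact p.Prime := ⟨hp⟩
  haveI : CharP K p := charP_of_injective_ringHom (algebraMap F K).injective p
  haveI : ExpChar K p := ExpChar.prime hp
  rw [← hqF, hcard]
  exact add_pow_char_pow x y p ↑n

lemma alg_pow_q (hqF : Fintype.card F = q) (c : F) :
    (algebraMap F K c) ^ q = algebraMap F K c := by
  rw [← map_pow, ← hqF, FiniteField.pow_card]

lemma pow_qsq (hqK : Fintype.card K = q ^ 2) (x : K) : (x ^ q) ^ q = x := by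
  rw [← pow_mul, ← sq, ← hqK]
  exact FiniteField.pow_card x

lemma powred (hqK : Fintype.card K = q ^ 2) (t : K) (a b : ℕ) :
    t ^ (q * (a + q * b)) = t ^ (b + q * a) := by
  have h1 : q * (a + q * b) = (q * q) * b + q * a := by ring
  have h2 : t ^ (q * q) = t := by
    rw [← sq, ← hqK]
    exact FiniteField.pow_card t
  rw [h1, pow_add, pow_mul, h2, ← pow_add]

lemma card_eval_zero_le (P : K[X]) (hP : P ≠ 0) :
    (univ.filter fun t : K => P.eval t = 0).card ≤ P.natDegree := by
  calc (univ.filter fun t : K => P.eval t = 0).card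
      ≤ P.roots.toFinset.card := by
        apply Finset.card_le_card
        intro t ht
        rw [Finset.mem_filter] at ht
        rw [Multiset.mem_toFinset, mem_roots hP]
        exact ht.2
    _ ≤ Multiset.card P.roots := Multiset.toFinset_card_le _
    _ ≤ P.natDegree := P.card_roots'

lemma mem_range_iff (hqF : Fintype.card F = q) (hq2 : 2 ≤ q) (x : K) :
    (∃ c : F, algebraMap F K c = x) ↔ x ^ q = x := by
  constructor
  · rintro ⟨c, rfl⟩
    exact alg_pow_q hqF c
  · intro hx
    have hRS : (univ.image (algebraMap F K)) ⊆ (univ.filter fun y : K => y ^ q = y) := by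
      intro y hy
      rw [Finset.mem_image] at hy
      obtain ⟨c, -, rfl⟩ := hy
      rw [Finset.mem_filter]
      exact ⟨Finset.mem_univ _, alg_pow_q hqF c⟩
    have hPne : (X ^ q - X : K[X]) ≠ 0 := by
      intro h
      have h2 := congrArg (fun P => Polynomial.coeff P q) h
      simp only [coeff_sub, coeff_X_pow, if_pos rfl, coeff_zero, Polynomial.coeff_X] at h2
      split_ifs at h2 <;> simp_all <;> omega
    have hcardS : (univ.filter fun y : K => y ^ q = y).card ≤ q := by
      have := card_eval_zero_le (X ^ q - X : K[X]) hPne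
      have hdeg : (X ^ q - X : K[X]).natDegree ≤ q := by
        apply le_trans (natDegree_sub_le _ _)
        simp only [natDegree_X_pow, natDegree_X, max_le_iff]
        omega
      refine le_trans (le_trans (le_of_eq ?_) this) (le_trans hdeg le_rfl)
      apply congrArg
      apply Finset.filter_congr
      intro y _
      simp [sub_eq_zero]
    have hcardR : (univ.image (algebraMap F K)).card = q := by
      rw [Finset.card_image_of_injective _ (algebraMap F K).injective, Finset.card_univ, hqF]
    have : (univ.image (algebraMap F K)) = (univ.filter fun y : K => y ^ q = y) :=
      Finset.eq_of_subset_of_card_le hRS (by rw [hcardR]; exact hcardS)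
    have hxS : x ∈ (univ.filter fun y : K => y ^ q = y) := by
      rw [Finset.mem_filter]; exact ⟨Finset.mem_univ _, hx⟩
    rw [← this, Finset.mem_image] at hxS
    obtain ⟨c, -, hc⟩ := hxS
    exact ⟨c, hc⟩

lemma Pof_single (p : Fin (s+1) × Fin (s+1)) :
    Pof q s (Pi.single p (1:K)) = monomial (e q s p) 1 := by
  rw [Pof, Finset.sum_eq_single p]
  · simp
  · intro b _ hb
    rw [Pi.single_apply, if_neg hb, monomial_zero_right]
  · simp

lemma Tmap_single_eq (hq1 : 1 ≤ q) {i j : ℕ} (hi : i ≤ s) (hj : j ≤ s) :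
    Tmap q s (Pi.single ((⟨s - i, by omega⟩ : Fin (s+1)), (⟨s - j, by omega⟩ : Fin (s+1))) (1:K))
      = fun p : Option K => (p.elim ((0:K),(1:K)) fun t => (1,t)).1 ^ (i + q * j) *
          (p.elim ((0:K),(1:K)) fun t => (1,t)).2 ^ ((s - i) + q * (s - j)) := by
  funext o
  cases o with
  | none =>
    rw [Tmap_none]
    simp only [Option.elim_none]
    rw [one_pow, mul_one, Pi.single_apply, zero_pow_eq]
    by_cases hij : i = 0 ∧ j = 0
    · obtain ⟨rfl, rfl⟩ := hij
      have hc1 : ((Fin.last s, Fin.last s) : Fin (s+1) × Fin (s+1))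
          = (⟨s - 0, by omega⟩, ⟨s - 0, by omega⟩) := by
        refine Prod.ext (Fin.ext ?_) (Fin.ext ?_) <;> simp
      rw [if_pos hc1, if_pos (by omega)]
    · rw [if_neg, if_neg]
      · intro hc
        rcases Nat.add_eq_zero.mp hc with ⟨h1, h2⟩
        rcases Nat.mul_eq_zero.mp h2 with h3 | h3 <;> omega
      · intro hc
        apply hij
        have h1 : (Fin.last s).val = s - i := congrArg Fin.val (congrArg Prod.fst hc)
        have h2 : (Fin.last s).val = s - j := congrArg Fin.val (congrArg Prod.snd hc)
        simp only [Fin.val_last] at h1 h2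
        omega
  | some t =>
    rw [Tmap_some]
    simp only [Option.elim_some]
    rw [Pof_single, eval_monomial, one_pow, one_mul]
    simp [e]

lemma range_Tmap (hq2 : 2 ≤ q) :
    LinearMap.range (Tmap q s (K := K)) = Submodule.span K
      {v : Option K → K | ∃ i j : ℕ, i ≤ s ∧ j ≤ s ∧
        v = fun p : Option K => (p.elim ((0:K),(1:K)) fun t => (1,t)).1 ^ (i + q * j) *
            (p.elim ((0:K),(1:K)) fun t => (1,t)).2 ^ ((s - i) + q * (s - j))} := by
  apply le_antisymm
  · rintro _ ⟨lam, rfl⟩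
    have hdec : Tmap q s lam
        = ∑ ab : Fin (s+1) × Fin (s+1), lam ab • Tmap q s (Pi.single ab 1) := by
      conv_lhs => rw [← Finset.univ_sum_single lam]
      rw [map_sum]
      apply Finset.sum_congr rfl
      intro ab _
      have hsm : Pi.single ab (lam ab)
          = lam ab • (Pi.single ab 1 : Fin (s+1) × Fin (s+1) → K) := by
        rw [← Pi.single_smul, smul_eq_mul, mul_one]
      rw [hsm, map_smul]
    rw [hdec]
    apply Submodule.sum_mem
    intro ab _
    apply Submodule.smul_mem
    apply Submodule.subset_span
    obtain ⟨a, b⟩ := ab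
    have ha := a.isLt
    have hb := b.isLt
    refine ⟨s - a.val, s - b.val, Nat.sub_le _ _, Nat.sub_le _ _, ?_⟩
    have hcast : (((⟨s - (s - a.val), by omega⟩ : Fin (s+1)),
        (⟨s - (s - b.val), by omega⟩ : Fin (s+1))) : Fin (s+1) × Fin (s+1)) = (a, b) := by
      refine Prod.ext (Fin.ext ?_) (Fin.ext ?_) <;> simp <;> omega
    rw [← Tmap_single_eq (q := q) (by omega) (Nat.sub_le s a.val) (Nat.sub_le s b.val), hcast]
  · rw [Submodule.span_le]
    rintro v ⟨i, j, hi, hj, rfl⟩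
    exact ⟨Pi.single _ 1, Tmap_single_eq (by omega) hi hj⟩

lemma frob_eval (hqF : Fintype.card F = q) (hqK : Fintype.card K = q ^ 2) (hq2 : 2 ≤ q)
    (lam : Fin (s+1) × Fin (s+1) → K) (t : K) :
    ((Pof q s lam).eval t) ^ q
      = (Pof q s (fun ab => lam ab.swap ^ q) : K[X]).eval t := by
  let φ : K →+* K :=
    { toFun := fun x => x ^ q
      map_one' := one_pow q
      map_mul' := fun x y => mul_pow x y q
      map_zero' := zero_pow (by omega)
      map_add' := frob_add hqF }
  have hφ : ∀ x : K, φ x = x ^ q := fun _ => rfl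
  rw [eval_Pof, eval_Pof, ← hφ, map_sum]
  apply Fintype.sum_equiv (Equiv.prodComm (Fin (s+1)) (Fin (s+1)))
  intro ab
  rw [map_mul, map_pow, hφ, hφ]
  have h1 : (t ^ q) ^ (e q s ab) = t ^ (e q s ab.swap) := by
    rw [← pow_mul]
    exact powred hqK t ab.1.val ab.2.val
  rw [h1]
  rfl

lemma deg_lt (hsq2 : s + 2 ≤ q) : s + q * s < q ^ 2 := by nlinarith

lemma Tmap_inj (hqK : Fintype.card K = q ^ 2) (hsq2 : s + 2 ≤ q) :
    Function.Injective (Tmap q s (K := K)) := by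
  have h0 : ∀ lam : Fin (s+1) × Fin (s+1) → K, Tmap q s lam = 0 → lam = 0 := by
    intro lam h
    have hP : Pof q s lam = 0 := by
      apply eq_zero_of_natDegree_lt_card_of_eval_eq_zero _ (f := (id : K → K))
        Function.injective_id
      · intro t
        have := congrFun h (some t)
        rw [Tmap_some] at this
        simpa using this
      · calc (Pof q s lam).natDegree ≤ s + q * s := natDegree_Pof_le _
          _ < q ^ 2 := deg_lt hsq2
          _ = Fintype.card K := hqK.symm
    funext ab
    rw [← coeff_Pof (q := q) (by omega) lam ab, hP, coeff_zero, Pi.zero_apply]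
  exact LinearMap.ker_eq_bot.mp (LinearMap.ker_eq_bot'.mpr h0)

lemma conj_of_mem_F (hqF : Fintype.card F = q) (hqK : Fintype.card K = q ^ 2)
    (hq2 : 2 ≤ q) (hsq2 : s + 2 ≤ q) (lam : Fin (s+1) × Fin (s+1) → K)
    (hF : ∀ o : Option K, ∃ c : F, algebraMap F K c = Tmap q s lam o) :
    ∀ ab : Fin (s+1) × Fin (s+1), lam ab.swap = lam ab ^ q := by
  have hq : ∀ t : K, (Pof q s (fun ab => lam ab.swap ^ q) : K[X]).eval t
      = (Pof q s lam).eval t := by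
    intro t
    rw [← frob_eval hqF hqK hq2]
    exact (mem_range_iff hqF hq2 _).mp (hF (some t))
  have hPQ : (Pof q s (fun ab => lam ab.swap ^ q) : K[X]) = Pof q s lam := by
    have hsub : (Pof q s (fun ab => lam ab.swap ^ q) : K[X]) - Pof q s lam = 0 := by
      apply eq_zero_of_natDegree_lt_card_of_eval_eq_zero _ (f := (id : K → K))
        Function.injective_id
      · intro t
        rw [id, eval_sub, hq, sub_self]
      · calc _ ≤ max (Pof q s (fun ab => lam ab.swap ^ q) : K[X]).natDegree
              (Pof q s lam).natDegree := natDegree_sub_le _ _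
          _ ≤ s + q * s := max_le (natDegree_Pof_le _) (natDegree_Pof_le _)
          _ < q ^ 2 := deg_lt hsq2
          _ = Fintype.card K := hqK.symm
    exact sub_eq_zero.mp hsub
  intro ab
  have h2 := congrArg (fun P => coeff P (e q s ab.swap)) hPQ
  rw [coeff_Pof (q := q) (by omega) _ ab.swap, coeff_Pof (q := q) (by omega) _ ab.swap] at h2
  rw [Prod.swap_swap] at h2
  exact h2.symm

lemma mem_F_of_conj (hqF : Fintype.card F = q) (hqK : Fintype.card K = q ^ 2)
    (hq2 : 2 ≤ q) (lam : Fin (s+1) × Fin (s+1) → K)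
    (hconj : ∀ ab : Fin (s+1) × Fin (s+1), lam ab.swap = lam ab ^ q) :
    ∀ o : Option K, ∃ c : F, algebraMap F K c = Tmap q s lam o := by
  have hlam : (fun ab : Fin (s+1) × Fin (s+1) => lam ab.swap ^ q) = lam := by
    funext ab
    have h := hconj ab.swap
    rw [Prod.swap_swap] at h
    exact h.symm
  intro o
  rw [mem_range_iff hqF hq2]
  cases o with
  | none =>
    rw [Tmap_none]
    exact (hconj (Fin.last s, Fin.last s)).symm
  | some t =>
    rw [Tmap_some, frob_eval hqF hqK hq2, hlam]

variable (F) in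
def Vsub (q s : ℕ) (hadd : ∀ x y : K, (x + y) ^ q = x ^ q + y ^ q)
    (halg : ∀ c : F, (algebraMap F K c) ^ q = algebraMap F K c) :
    Submodule F ((Fin (s+1) × Fin (s+1)) → K) where
  carrier := {lam | ∀ ab : Fin (s+1) × Fin (s+1), lam ab.swap = lam ab ^ q}
  add_mem' := by
    intro x y hx hy ab
    simp only [Pi.add_apply, hadd, hx ab, hy ab]
  zero_mem' := by
    intro ab
    have h0 := halg 0
    rw [map_zero] at h0
    show (0:K) = (0:K) ^ q
    exact h0.symm
  smul_mem' := by
    intro c x hx ab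
    simp only [Pi.smul_apply, Algebra.smul_def, mul_pow, halg c, hx ab]

lemma two_mul_card_pairs (s : ℕ) :
    2 * Fintype.card {p : Fin (s+1) × Fin (s+1) // p.1 < p.2} + (s+1) = (s+1)^2 := by
  classical
  set n := s + 1 with hn
  set a := univ.filter (fun p : Fin n × Fin n => p.1 < p.2) with ha
  set b := univ.filter (fun p : Fin n × Fin n => p.2 < p.1) with hb
  have hab : a.card = b.card := by
    apply Finset.card_nbij' (i := Prod.swap) (j := Prod.swap)
    · intro p hp
      rw [ha, Finset.mem_coe, Finset.mem_filter] at hp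
      rw [hb, Finset.mem_coe, Finset.mem_filter]
      exact ⟨Finset.mem_univ _, hp.2⟩
    · intro p hp
      rw [hb, Finset.mem_coe, Finset.mem_filter] at hp
      rw [ha, Finset.mem_coe, Finset.mem_filter]
      exact ⟨Finset.mem_univ _, hp.2⟩
    · intro p _
      exact Prod.swap_swap p
    · intro p _
      exact Prod.swap_swap p
  have hd : Disjoint a b := by
    rw [Finset.disjoint_left]
    intro p hp hp'
    rw [ha, Finset.mem_filter] at hp
    rw [hb, Finset.mem_filter] at hp'
    exact absurd hp'.2 (asymm hp.2)
  have hne : univ.filter (fun p : Fin n × Fin n => ¬ p.1 = p.2) = a ∪ b := by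
    ext p
    rw [Finset.mem_filter, Finset.mem_union, ha, Finset.mem_filter, hb, Finset.mem_filter]
    constructor
    · rintro ⟨-, hne⟩
      rcases lt_or_gt_of_ne hne with h | h
      · exact Or.inl ⟨Finset.mem_univ _, h⟩
      · exact Or.inr ⟨Finset.mem_univ _, h⟩
    · rintro (⟨-, h⟩ | ⟨-, h⟩)
      · exact ⟨Finset.mem_univ _, ne_of_lt h⟩
      · exact ⟨Finset.mem_univ _, (ne_of_lt h).symm⟩
  have heq : (univ.filter (fun p : Fin n × Fin n => p.1 = p.2)).card = n := by
    have himg : univ.filter (fun p : Fin n × Fin n => p.1 = p.2)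
        = univ.image (fun x : Fin n => (x, x)) := by
      ext p
      rw [Finset.mem_filter, Finset.mem_image]
      constructor
      · rintro ⟨-, h⟩
        exact ⟨p.1, Finset.mem_univ _, Prod.ext rfl h⟩
      · rintro ⟨x, -, rfl⟩
        exact ⟨Finset.mem_univ _, rfl⟩
    rw [himg, Finset.card_image_of_injective _ (fun x y h => (Prod.ext_iff.mp h).1),
      Finset.card_univ, Fintype.card_fin]
  have htot := Finset.card_filter_add_card_filter_not
    (s := (univ : Finset (Fin n × Fin n))) (fun p : Fin n × Fin n => p.1 = p.2)
  rw [Finset.card_univ, Fintype.card_prod, Fintype.card_fin] at htot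
  have hcardsub : Fintype.card {p : Fin n × Fin n // p.1 < p.2} = a.card := by
    rw [ha]
    exact Fintype.card_subtype _
  have hunion : (a ∪ b).card = a.card + b.card := Finset.card_union_of_disjoint hd
  rw [hcardsub]
  rw [hne, hunion] at htot
  have : n ^ 2 = n * n := sq n
  omega

variable (F) in
noncomputable def Gmap (q s : ℕ) (hadd : ∀ x y : K, (x + y) ^ q = x ^ q + y ^ q)
    (halg : ∀ c : F, (algebraMap F K c) ^ q = algebraMap F K c) :
    (({p : Fin (s+1) × Fin (s+1) // p.1 < p.2} → K) × (Fin (s+1) → F)) →ₗ[F]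
      ((Fin (s+1) × Fin (s+1)) → K) where
  toFun fd := fun ab =>
    if h : ab.1 < ab.2 then fd.1 ⟨ab, h⟩
    else if h' : ab.2 < ab.1 then fd.1 ⟨ab.swap, h'⟩ ^ q
    else algebraMap F K (fd.2 ab.1)
  map_add' x y := by
    funext ab
    by_cases h : ab.1 < ab.2
    · simp [h]
    · by_cases h' : ab.2 < ab.1
      · simp [h, h', hadd]
      · simp [h, h', map_add]
  map_smul' c x := by
    simp only [RingHom.id_apply]
    funext ab
    by_cases h : ab.1 < ab.2
    · simp [h]
    · by_cases h' : ab.2 < ab.1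
      · rw [Pi.smul_apply, dif_neg h, dif_pos h', dif_neg h, dif_pos h']
        show (c • x.1 ⟨ab.swap, h'⟩) ^ q = c • (x.1 ⟨ab.swap, h'⟩ ^ q)
        rw [Algebra.smul_def, Algebra.smul_def, mul_pow, halg c]
      · rw [Pi.smul_apply, dif_neg h, dif_neg h', dif_neg h, dif_neg h']
        show algebraMap F K (c • x.2 ab.1) = c • algebraMap F K (x.2 ab.1)
        rw [smul_eq_mul, map_mul, Algebra.smul_def]

lemma Gmap_mem_Vsub (hqK : Fintype.card K = q ^ 2)
    (hadd : ∀ x y : K, (x + y) ^ q = x ^ q + y ^ q)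
    (halg : ∀ c : F, (algebraMap F K c) ^ q = algebraMap F K c)
    (fd : ({p : Fin (s+1) × Fin (s+1) // p.1 < p.2} → K) × (Fin (s+1) → F)) :
    Gmap F q s hadd halg fd ∈ Vsub F q s hadd halg := by
  rintro ⟨a, b⟩
  show (if h : b < a then _ else if h' : a < b then _ else _)
      = (if h : a < b then _ else if h' : b < a then _ else _) ^ q
  rcases lt_trichotomy a b with h | h | h
  · rw [dif_neg (asymm h), dif_pos h, dif_pos h]
    rfl
  · subst h
    rw [dif_neg (lt_irrefl a), dif_neg (lt_irrefl a), dif_neg (lt_irrefl a),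
      dif_neg (lt_irrefl a), halg]
    rfl
  · rw [dif_pos h, dif_neg (asymm h), dif_pos h, pow_qsq hqK]

lemma finrank_Vsub (hqF : Fintype.card F = q) (hqK : Fintype.card K = q ^ 2) (hq2 : 2 ≤ q)
    (hadd : ∀ x y : K, (x + y) ^ q = x ^ q + y ^ q)
    (halg : ∀ c : F, (algebraMap F K c) ^ q = algebraMap F K c) :
    Module.finrank F (Vsub F q s hadd halg) = (s+1)^2 := by
  classical
  let G' := (Gmap F q s hadd halg).codRestrict (Vsub F q s hadd halg)
    (Gmap_mem_Vsub hqK hadd halg)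
  have hinj : Function.Injective G' := by
    intro fd fd' h
    have h2 : ∀ ab, Gmap F q s hadd halg fd ab = Gmap F q s hadd halg fd' ab := by
      intro ab
      exact congrFun (congrArg Subtype.val h) ab
    refine Prod.ext (funext fun p => ?_) (funext fun a => ?_)
    · have := h2 p.val
      rwa [show (Gmap F q s hadd halg fd) p.val = fd.1 p from by
          rw [Gmap]; simp [dif_pos p.2],
        show (Gmap F q s hadd halg fd') p.val = fd'.1 p from by
          rw [Gmap]; simp [dif_pos p.2]] at this
    · have := h2 (a, a)
      rw [show (Gmap F q s hadd halg fd) (a, a) = algebraMap F K (fd.2 a) from by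
          rw [Gmap]; simp,
        show (Gmap F q s hadd halg fd') (a, a) = algebraMap F K (fd'.2 a) from by
          rw [Gmap]; simp] at this
      exact (algebraMap F K).injective this
  have hsurj : Function.Surjective G' := by
    rintro ⟨lam, hlam⟩
    have hc : ∀ a : Fin (s+1), ∃ c : F, algebraMap F K c = lam (a, a) := by
      intro a
      exact (mem_range_iff hqF hq2 _).mpr (hlam (a, a)).symm
    refine ⟨(fun p => lam p.val, fun a => Classical.choose (hc a)), ?_⟩
    apply Subtype.ext
    show Gmap F q s hadd halg _ = lam
    funext ab
    obtain ⟨a, b⟩ := ab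
    show (if h : a < b then _ else if h' : b < a then _ else _) = lam (a, b)
    rcases lt_trichotomy a b with h | h | h
    · rw [dif_pos h]
    · subst h
      rw [dif_neg (lt_irrefl a), dif_neg (lt_irrefl a)]
      exact Classical.choose_spec (hc a)
    · rw [dif_neg (asymm h), dif_pos h]
      exact (hlam (b, a)).symm
  haveI : Module.Finite F K := Module.Finite.of_finite
  have hrkK : Module.finrank F K = 2 := by
    have hc := Module.card_eq_pow_finrank (K := F) (V := K)
    rw [hqF, hqK] at hc
    exact (Nat.pow_right_injective hq2 hc.symm)
  have heqv := (LinearEquiv.ofBijective G' ⟨hinj, hsurj⟩).finrank_eq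
  rw [← heqv]
  rw [Module.finrank_prod, Module.finrank_pi_fintype, Module.finrank_pi]
  simp only [hrkK, Finset.sum_const, smul_eq_mul, Finset.card_univ, Fintype.card_fin]
  rw [← two_mul_card_pairs s]
  ring

lemma norm_mem_F (hqK : Fintype.card K = q ^ 2) (t : K) :
    (t ^ (q + 1)) ^ q = t ^ (q + 1) := by
  have h2 : t ^ (q * q) = t := by
    rw [← sq, ← hqK]
    exact FiniteField.pow_card t
  rw [← pow_mul]
  have h3 : (q + 1) * q = q * q + q := by ring
  rw [h3, pow_add, h2, ← pow_succ']

lemma card_fiber (hqF : Fintype.card F = q) (hqK : Fintype.card K = q ^ 2) (hq2 : 2 ≤ q)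
    (β : F) (hβ : β ≠ 0) :
    (univ.filter fun t : K => t ^ (q + 1) = algebraMap F K β).card = q + 1 := by
  classical
  have hmem : ∀ t : K, ∃ c : F, algebraMap F K c = t ^ (q + 1) := fun t =>
    (mem_range_iff hqF hq2 _).mpr (norm_mem_F hqK t)
  let ρ : K → F := fun t => Classical.choose (hmem t)
  have hρ : ∀ t : K, algebraMap F K (ρ t) = t ^ (q + 1) := fun t => Classical.choose_spec (hmem t)
  set N : F → ℕ := fun β' => (univ.filter fun t : K => t ^ (q + 1) = algebraMap F K β').card
    with hN
  have hfib : ∀ β' : F, (univ.filter fun t : K => ρ t = β')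
      = (univ.filter fun t : K => t ^ (q + 1) = algebraMap F K β') := by
    intro β'
    ext t
    simp only [Finset.mem_filter, Finset.mem_univ, true_and]
    constructor
    · rintro rfl
      exact (hρ t).symm
    · intro h
      exact (algebraMap F K).injective (by rw [hρ t, h])
  have hsum : ∑ β' : F, N β' = q ^ 2 := by
    rw [← hqK, ← Finset.card_univ (α := K)]
    rw [Finset.card_eq_sum_card_fiberwise (f := ρ) (t := univ) (fun x _ => Finset.mem_univ _)]
    apply Finset.sum_congr rfl
    intro β' _
    exact congrArg Finset.card (hfib β').symm
  have hzero : N 0 = 1 := by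
    rw [hN]
    simp only [map_zero]
    have h1 : (univ.filter fun t : K => t ^ (q + 1) = (0:K)) = {0} := by
      ext t
      simp [pow_eq_zero_iff]
    rw [h1, Finset.card_singleton]
  have hle : ∀ β' : F, N β' ≤ q + 1 := by
    intro β'
    have hne : (X ^ (q + 1) - C (algebraMap F K β') : K[X]) ≠ 0 :=
      X_pow_sub_C_ne_zero (by omega) _
    have hc := card_eval_zero_le _ hne
    rw [natDegree_X_pow_sub_C] at hc
    refine le_trans (le_of_eq ?_) hc
    rw [hN]
    apply congrArg
    apply Finset.filter_congr
    intro t _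
    simp [sub_eq_zero]
  by_contra hlt
  have hlt' : N β < q + 1 := lt_of_le_of_ne (hle β) hlt
  have hmem0 : (0:F) ∈ (univ : Finset F) := Finset.mem_univ _
  have hsplit := Finset.add_sum_erase (univ : Finset F) N hmem0
  have hstrict : ∑ β' ∈ (univ : Finset F).erase 0, N β'
      < ∑ β' ∈ (univ : Finset F).erase 0, (q + 1) := by
    apply Finset.sum_lt_sum (fun i _ => hle i)
    exact ⟨β, Finset.mem_erase.mpr ⟨hβ, Finset.mem_univ _⟩, hlt'⟩
  rw [Finset.sum_const, smul_eq_mul, Finset.card_erase_of_mem hmem0,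
    Finset.card_univ, hqF] at hstrict
  have harith : (q - 1) * (q + 1) + 1 = q ^ 2 := by
    obtain ⟨k, rfl⟩ : ∃ k, q = k + 1 := ⟨q - 1, by omega⟩
    simp only [Nat.add_sub_cancel]
    ring
  omega

end Stmt10Aux

open Stmt10Aux in
/-- For `0 ≤ s ≤ q-2`, the extended BCH code `B₀^{ext}(s)` — the subfield subcode
over `F_q` of the `F_{q²}`-span of the evaluations at `P¹(F_{q²})` of the monomials
`x^{i+qj} y^{(s-i)+q(s-j)}`, `0 ≤ i,j ≤ s` — has length `q²+1`, dimension `(s+1)²`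
and minimum distance `q²+1-s(q+1)`. -/
theorem stmt_10 (F K : Type) [Field F] [Field K] [Algebra F K]
    [Fintype F] [Fintype K] [DecidableEq K] (q s : ℕ)
    (hqF : Fintype.card F = q) (hqK : Fintype.card K = q ^ 2) (hs : s ≤ q - 2) :
    let pt : Option K → K × K := fun o => o.elim (0, 1) fun t => (1, t)
    let Bext : Submodule K (Option K → K) := Submodule.span K
      {v | ∃ i j : ℕ, i ≤ s ∧ j ≤ s ∧
        v = fun p => (pt p).1 ^ (i + q * j) * (pt p).2 ^ ((s - i) + q * (s - j))}
    let B₀ : Submodule F (Option K → K) := Bext.restrictScalars F ⊓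
      Submodule.pi Set.univ fun _ => LinearMap.range (Algebra.linearMap F K)
    Fintype.card (Option K) = q ^ 2 + 1 ∧
    Module.finrank F B₀ = (s + 1) ^ 2 ∧
    (∃ c ∈ B₀, c ≠ 0 ∧ hammingNorm c = q ^ 2 + 1 - s * (q + 1)) ∧
    (∀ c ∈ B₀, c ≠ 0 → q ^ 2 + 1 - s * (q + 1) ≤ hammingNorm c) := by
  intro pt Bext B₀
  classical
  have hq2 : 2 ≤ q := by
    rw [← hqF]
    exact Fintype.one_lt_card
  have hsq2 : s + 2 ≤ q := by omega
  have hadd : ∀ x y : K, (x + y) ^ q = x ^ q + y ^ q := frob_add hqF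
  have halg : ∀ c : F, (algebraMap F K c) ^ q = algebraMap F K c := alg_pow_q hqF
  have hcardO : Fintype.card (Option K) = q ^ 2 + 1 := by
    rw [Fintype.card_option, hqK]
  have hBext : Bext = LinearMap.range (Tmap q s (K := K)) := by
    rw [range_Tmap hq2]
  have hmemB₀ : ∀ c : Option K → K, c ∈ B₀ ↔
      (c ∈ Bext ∧ ∀ o : Option K, ∃ d : F, algebraMap F K d = c o) := by
    intro c
    rw [Submodule.mem_inf, Submodule.restrictScalars_mem, Submodule.mem_pi]
    constructor
    · rintro ⟨h1, h2⟩
      refine ⟨h1, fun o => ?_⟩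
      obtain ⟨d, hd⟩ := h2 o trivial
      exact ⟨d, hd⟩
    · rintro ⟨h1, h2⟩
      refine ⟨h1, fun o _ => ?_⟩
      obtain ⟨d, hd⟩ := h2 o
      exact ⟨d, hd⟩
  have hB₀ : B₀ = Submodule.map ((Tmap q s (K := K)).restrictScalars F)
      (Vsub F q s hadd halg) := by
    ext c
    rw [hmemB₀ c, Submodule.mem_map]
    constructor
    · rintro ⟨hc1, hc2⟩
      rw [hBext, LinearMap.mem_range] at hc1
      obtain ⟨lam, rfl⟩ := hc1
      exact ⟨lam, conj_of_mem_F hqF hqK hq2 hsq2 lam hc2, rfl⟩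
    · rintro ⟨lam, hlamV, rfl⟩
      constructor
      · rw [hBext]
        exact ⟨lam, rfl⟩
      · exact mem_F_of_conj hqF hqK hq2 lam hlamV
  have hinjT : Function.Injective ((Tmap q s (K := K)).restrictScalars F) :=
    Tmap_inj hqK hsq2
  have hrank : Module.finrank F B₀ = (s + 1) ^ 2 := by
    rw [hB₀]
    have heq := (Submodule.equivMapOfInjective _ hinjT (Vsub F q s hadd halg)).finrank_eq
    rw [← heq]
    exact finrank_Vsub hqF hqK hq2 hadd halg
  -- norm of a codeword via its zero set
  have hnormeq : ∀ c : Option K → K,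
      hammingNorm c = (q ^ 2 + 1) - (univ.filter fun o : Option K => c o = 0).card := by
    intro c
    have h1 := Finset.card_filter_add_card_filter_not
      (s := (univ : Finset (Option K))) (fun o : Option K => c o = 0)
    rw [Finset.card_univ, hcardO] at h1
    have h2 : hammingNorm c = (univ.filter fun o : Option K => ¬ c o = 0).card := by
      unfold hammingNorm
      apply congrArg
      apply Finset.filter_congr
      intro o _
      rfl
    omega
  refine ⟨hcardO, hrank, ?_, ?_⟩
  · -- existence of a minimum weight codeword
    obtain ⟨ι⟩ : Nonempty (Fin s ↪ {x : F // x ≠ 0}) := by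
      apply Function.Embedding.nonempty_of_card_le
      have hcs : Fintype.card {x : F // x ≠ 0} = q - 1 := by
        simp only [ne_eq]
        rw [Fintype.card_subtype_compl, Fintype.card_subtype_eq, hqF]
      rw [hcs, Fintype.card_fin]
      omega
    set g : Polynomial F := ∏ k : Fin s, (X - C (ι k).val) with hg
    have hg_monic : g.Monic := monic_prod_of_monic _ _ (fun k _ => monic_X_sub_C _)
    have hg_deg : g.natDegree = s := by
      rw [hg, natDegree_prod _ _ (fun k _ => X_sub_C_ne_zero _)]
      simp [natDegree_X_sub_C]
    set lamstar : Fin (s+1) × Fin (s+1) → K :=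
      fun ab => if ab.1 = ab.2 then algebraMap F K (g.coeff ab.1) else 0 with hlamstar
    have hlamV : lamstar ∈ Vsub F q s hadd halg := by
      rintro ⟨a, b⟩
      simp only [hlamstar, Prod.swap_prod_mk]
      by_cases h : a = b
      · subst h
        simp only [if_pos rfl]
        exact (halg _).symm
      · rw [if_neg (fun hh => h hh.symm), if_neg h, zero_pow (by omega)]
    have hcnone : Tmap q s lamstar none = 1 := by
      rw [Tmap_none]
      have hco : g.coeff s = 1 := by
        have h2 := hg_monic.coeff_natDegree
        rwa [hg_deg] at h2
      simp [hlamstar, hco]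
    have hceval : ∀ t : K, Tmap q s lamstar (some t)
        = ∏ k : Fin s, (t ^ (q + 1) - algebraMap F K (ι k).val) := by
      intro t
      rw [Tmap_some, eval_Pof, Fintype.sum_prod_type]
      have hrow : ∀ a : Fin (s+1), ∑ b : Fin (s+1), lamstar (a, b) * t ^ (e q s (a, b))
          = algebraMap F K (g.coeff a) * (t ^ (q + 1)) ^ (a : ℕ) := by
        intro a
        rw [Finset.sum_eq_single a]
        · simp only [hlamstar, if_pos rfl]
          congr 1
          rw [← pow_mul]
          congr 1
          show (a : ℕ) + q * a = (q + 1) * a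
          ring
        · intro b _ hb
          simp only [hlamstar]
          rw [if_neg (fun hh => hb hh.symm), zero_mul]
        · simp
      rw [Finset.sum_congr rfl (fun a _ => hrow a)]
      have h1 : ∑ a : Fin (s+1), algebraMap F K (g.coeff a) * (t ^ (q + 1)) ^ (a : ℕ)
          = (g.map (algebraMap F K)).eval (t ^ (q + 1)) := by
        rw [eval_eq_sum_range' (n := s+1)
          (lt_of_le_of_lt natDegree_map_le (by rw [hg_deg]; omega))]
        rw [Fin.sum_univ_eq_sum_range (fun i => algebraMap F K (g.coeff i) * (t ^ (q+1)) ^ i)]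
        apply Finset.sum_congr rfl
        intro i _
        rw [coeff_map]
      rw [h1, hg, Polynomial.map_prod]
      simp only [Polynomial.map_sub, map_X, map_C, eval_prod, eval_sub, eval_X, eval_C]
    refine ⟨Tmap q s lamstar, ?_, ?_, ?_⟩
    · rw [hB₀]
      exact ⟨lamstar, hlamV, rfl⟩
    · intro h
      have := congrFun h none
      rw [hcnone] at this
      exact one_ne_zero this
    · rw [hnormeq]
      have hzset : (univ.filter fun o : Option K => Tmap q s lamstar o = 0)
          = (univ.filter fun t : K =>
              ∃ k : Fin s, t ^ (q + 1) = algebraMap F K (ι k).val).map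
            ⟨some, Option.some_injective K⟩ := by
        ext o
        cases o with
        | none =>
          simp only [Finset.mem_filter, Finset.mem_univ, true_and, Finset.mem_map,
            Function.Embedding.coeFn_mk]
          constructor
          · intro h
            rw [hcnone] at h
            exact absurd h one_ne_zero
          · rintro ⟨t, -, ht⟩
            exact absurd ht (by simp)
        | some t =>
          simp only [Finset.mem_filter, Finset.mem_univ, true_and, Finset.mem_map,
            Function.Embedding.coeFn_mk]
          rw [hceval t]
          rw [Finset.prod_eq_zero_iff]
          constructor
          · rintro ⟨k, -, hk⟩
            exact ⟨t, ⟨k, sub_eq_zero.mp hk⟩, rfl⟩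
          · rintro ⟨t', ⟨k, hk⟩, ht'⟩
            cases Option.some_injective K ht'
            exact ⟨k, Finset.mem_univ _, sub_eq_zero.mpr hk⟩
      rw [hzset, Finset.card_map]
      have hbi : (univ.filter fun t : K =>
            ∃ k : Fin s, t ^ (q + 1) = algebraMap F K (ι k).val)
          = univ.biUnion (fun k : Fin s =>
              univ.filter fun t : K => t ^ (q + 1) = algebraMap F K (ι k).val) := by
        ext t
        simp [Finset.mem_biUnion]
      rw [hbi, Finset.card_biUnion]
      · rw [Finset.sum_congr rfl
          (fun k _ => card_fiber hqF hqK hq2 (ι k).val (ι k).property)]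
        rw [Finset.sum_const, smul_eq_mul, Finset.card_univ, Fintype.card_fin]
      · intro k _ k' _ hkk
        rw [Function.onFun, Finset.disjoint_left]
        intro t ht ht'
        rw [Finset.mem_filter] at ht ht'
        apply hkk
        apply ι.injective
        apply Subtype.ext
        exact (algebraMap F K).injective (by rw [← ht.2, ← ht'.2])
  · -- lower bound on the weight
    intro c hc hc0
    rw [hB₀] at hc
    obtain ⟨lam, hlamV, rfl⟩ := hc
    have hTc : ((Tmap q s (K := K)).restrictScalars F) lam = Tmap q s lam := rfl
    rw [hTc] at hc0 ⊢
    have hPne : Pof q s lam ≠ 0 := by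
      intro hP
      apply hc0
      funext o
      cases o with
      | none =>
        by_contra hnone
        have hll : lam (Fin.last s, Fin.last s) ≠ 0 := by
          rw [Tmap_none] at hnone
          simpa using hnone
        have := coeff_Pof (q := q) (by omega) lam (Fin.last s, Fin.last s)
        rw [hP, coeff_zero] at this
        exact hll this.symm
      | some t =>
        rw [Tmap_some, hP]
        simp
    have hzsub : (univ.filter fun o : Option K => Tmap q s lam o = 0)
        ⊆ insert none ((univ.filter fun t : K => (Pof q s lam).eval t = 0).map
            ⟨some, Option.some_injective K⟩) := by
      intro o ho
      rw [Finset.mem_filter] at ho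
      cases o with
      | none => exact Finset.mem_insert_self _ _
      | some t =>
        apply Finset.mem_insert_of_mem
        rw [Finset.mem_map]
        refine ⟨t, ?_, rfl⟩
        rw [Finset.mem_filter]
        exact ⟨Finset.mem_univ _, by rw [← Tmap_some]; exact ho.2⟩
    have hzcard : (univ.filter fun o : Option K => Tmap q s lam o = 0).card ≤ s * (q + 1) := by
      by_cases hss : lam (Fin.last s, Fin.last s) = 0
      · -- degree drops by at least one
        have hdeglt : (Pof q s lam).natDegree < s + q * s := by
          have hle := natDegree_Pof_le (q := q) lam
          have hne2 : (Pof q s lam).natDegree ≠ s + q * s := by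
            intro hdeq
            have hlead := hPne
            rw [← leadingCoeff_ne_zero, leadingCoeff, hdeq] at hlead
            have hco := coeff_Pof (q := q) (by omega) lam (Fin.last s, Fin.last s)
            have hel : e q s (Fin.last s, Fin.last s) = s + q * s := rfl
            rw [hel] at hco
            rw [hco, hss] at hlead
            exact hlead rfl
          omega
        calc (univ.filter fun o : Option K => Tmap q s lam o = 0).card
            ≤ (insert none ((univ.filter fun t : K => (Pof q s lam).eval t = 0).map
                ⟨some, Option.some_injective K⟩)).card := Finset.card_le_card hzsub
          _ ≤ ((univ.filter fun t : K => (Pof q s lam).eval t = 0).map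
                ⟨some, Option.some_injective K⟩).card + 1 := Finset.card_insert_le _ _
          _ ≤ (Pof q s lam).natDegree + 1 := by
              rw [Finset.card_map]
              exact Nat.add_le_add_right (card_eval_zero_le _ hPne) 1
          _ ≤ s + q * s := by omega
          _ = s * (q + 1) := by ring
      · -- the point at infinity is not a zero
        have hzsub2 : (univ.filter fun o : Option K => Tmap q s lam o = 0)
            ⊆ (univ.filter fun t : K => (Pof q s lam).eval t = 0).map
              ⟨some, Option.some_injective K⟩ := by
          intro o ho
          rw [Finset.mem_filter] at ho
          cases o with
          | none =>
            rw [Tmap_none] at ho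
            exact absurd ho.2 hss
          | some t =>
            rw [Finset.mem_map]
            refine ⟨t, ?_, rfl⟩
            rw [Finset.mem_filter]
            exact ⟨Finset.mem_univ _, by rw [← Tmap_some]; exact ho.2⟩
        calc (univ.filter fun o : Option K => Tmap q s lam o = 0).card
            ≤ ((univ.filter fun t : K => (Pof q s lam).eval t = 0).map
                ⟨some, Option.some_injective K⟩).card := Finset.card_le_card hzsub2
          _ ≤ (Pof q s lam).natDegree := by
              rw [Finset.card_map]
              exact card_eval_zero_le _ hPne
          _ ≤ s + q * s := natDegree_Pof_le _
          _ = s * (q + 1) := by ring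
    rw [hnormeq]
    omega
end

section
/- The linear automorphism of P³ over F_q given by the matrix with rows (1,0,0,0), (0,0,−N(w),0), (0,1,Tr(w),0), (0,0,0,N(w)), where w is a primitive element of F_{q²}, maps the elliptic quadric E: x₀x₃ = Q(x₁,x₂) to itself, fixes the two rational points (1:0:0:0) and (0:0:0:1), and permutes the remaining q²−1 rational points of E in a single cycle. -/
/-- The linear automorphism of `P³` over `F_q` with matrix rows `(1,0,0,0)`,
`(0,0,-N(w),0)`, `(0,1,Tr(w),0)`, `(0,0,0,N(w))`, where `w` is a primitive element
of `F_{q²}`, maps the elliptic quadric `E : x₀x₃ = Q(x₁,x₂)` to itself, fixes the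
rational points `(1:0:0:0)` and `(0:0:0:1)`, and permutes the remaining `q²-1`
rational points of `E` in a single cycle. -/
theorem stmt_11 (F K : Type) [Field F] [Field K] [Algebra F K]
    [Fintype F] [Fintype K] (q : ℕ)
    (hqF : Fintype.card F = q) (hqK : Fintype.card K = q ^ 2)
    (w : K) (hw : ∀ z : K, z ≠ 0 → ∃ k : ℕ, z = w ^ k)
    (t n : F) (ht : algebraMap F K t = w + w ^ q)
    (hn : algebraMap F K n = w ^ (q + 1)) :
    let M : Matrix (Fin 4) (Fin 4) F :=
      !![1, 0, 0, 0; 0, 0, -n, 0; 0, 1, t, 0; 0, 0, 0, n]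
    let Qf : F → F → F := fun x y => x ^ 2 + t * x * y + n * y ^ 2
    -- rational points of E, with normalized coordinates
    let Epts : Set (Fin 4 → F) := {p | (∃ i, p i = 1 ∧ ∀ j < i, p j = 0) ∧
      p 0 * p 3 = Qf (p 1) (p 2)}
    let e0 : Fin 4 → F := ![1, 0, 0, 0]
    let e3 : Fin 4 → F := ![0, 0, 0, 1]
    -- E is mapped to itself
    (∀ p ∈ Epts, ∃ p' ∈ Epts, ∃ c : F, c ≠ 0 ∧ M.mulVec p = c • p') ∧
    -- the two points (1:0:0:0) and (0:0:0:1) are fixed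
    (∃ c : F, c ≠ 0 ∧ M.mulVec e0 = c • e0) ∧
    (∃ c : F, c ≠ 0 ∧ M.mulVec e3 = c • e3) ∧
    -- the remaining q²-1 rational points are shifted in a single cycle
    (∀ p ∈ Epts, p ≠ e0 → p ≠ e3 → ∀ p' ∈ Epts, p' ≠ e0 → p' ≠ e3 →
      ∃ k : ℕ, ∃ c : F, c ≠ 0 ∧ (M ^ k).mulVec p = c • p') := by
  intro M Qf Epts e0 e3
  classical
  set a := algebraMap F K with ha
  have hainj : Function.Injective a := RingHom.injective a
  have hq2 : 2 ≤ q := by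
    have := Fintype.one_lt_card (α := F)
    omega
  -- w ≠ 0
  have hw0 : w ≠ 0 := by
    intro h
    subst h
    have hcard : ∃ z : K, z ≠ 0 ∧ z ≠ 1 := by
      by_contra hc
      push_neg at hc
      have hsub : (Finset.univ : Finset K) ⊆ {0, 1} := by
        intro z _
        simp only [Finset.mem_insert, Finset.mem_singleton]
        by_cases h0 : z = 0
        · exact Or.inl h0
        · exact Or.inr (hc z h0)
      have h1 : Fintype.card K ≤ ({0, 1} : Finset K).card := by
        rw [← Finset.card_univ]
        exact Finset.card_le_card hsub
      have h2 : ({0, 1} : Finset K).card ≤ 2 := by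
        apply le_trans (Finset.card_insert_le _ _)
        simp
      rw [hqK, pow_two] at h1
      have h4 : 4 ≤ q * q := Nat.mul_le_mul hq2 hq2
      omega
    obtain ⟨z, hz0, hz1⟩ := hcard
    obtain ⟨k, hk⟩ := hw z hz0
    cases k with
    | zero => simp at hk; exact hz1 hk
    | succ m => rw [zero_pow (Nat.succ_ne_zero m)] at hk; exact hz0 hk
  -- order of w is q^2 - 1
  have hwr : ∀ y : F, a y ≠ w := by
    intro y hy
    have hy0 : y ≠ 0 := by
      intro h; rw [h, map_zero] at hy; exact hw0 hy.symm
    have hpow : w ^ (q - 1) = 1 := by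
      rw [← hy, ← map_pow, ← map_one a]
      congr 1
      rw [← hqF]
      exact FiniteField.pow_card_sub_one_eq_one y hy0
    set u : Kˣ := Units.mk0 w hw0 with hu
    have hgen : ∀ v : Kˣ, v ∈ Subgroup.zpowers u := by
      intro v
      obtain ⟨k, hk⟩ := hw (v : K) v.ne_zero
      exact ⟨k, Units.ext (by simp [hu, ← hk])⟩
    have hord : orderOf u = Nat.card Kˣ :=
      orderOf_eq_card_of_forall_mem_zpowers hgen
    have hcu : Nat.card Kˣ = q ^ 2 - 1 := by
      rw [Nat.card_eq_fintype_card, Fintype.card_units, hqK]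
    have hdvd : orderOf u ∣ q - 1 := by
      apply orderOf_dvd_of_pow_eq_one
      exact Units.ext (by simp [hu, hpow])
    rw [hord, hcu] at hdvd
    have hle : q ^ 2 - 1 ≤ q - 1 := Nat.le_of_dvd (by omega) hdvd
    rw [pow_two] at hle
    have h5 : q < q * q := by nlinarith
    omega
  have hwq : (w ^ q) ^ q = w := by
    rw [← pow_mul, ← pow_two, ← hqK]
    exact FiniteField.pow_card w
  have hur : ∀ y : F, a y ≠ w ^ q := by
    intro y hy
    apply hwr y
    calc a y = a (y ^ q) := by rw [← hqF, FiniteField.pow_card]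
    _ = (a y) ^ q := by rw [map_pow]
    _ = (w ^ q) ^ q := by rw [hy]
    _ = w := hwq
  -- injectivity of the basis representation
  have hinj : ∀ y1 y2 y1' y2' : F, a y1 + w * a y2 = a y1' + w * a y2' →
      y1 = y1' ∧ y2 = y2' := by
    intro y1 y2 y1' y2' h
    have h2 : y2 = y2' := by
      by_contra hne
      have hz : a y2 - a y2' ≠ 0 := by
        rw [← map_sub]
        simp only [ne_eq, map_eq_zero]
        exact fun hh => hne (sub_eq_zero.mp hh)
      apply hwr ((y1' - y1) * (y2 - y2')⁻¹)
      rw [map_mul, map_inv₀, map_sub, map_sub,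
        mul_inv_eq_iff_eq_mul₀ hz]
      linear_combination -h
    refine ⟨?_, h2⟩
    apply hainj
    rw [h2] at h
    linear_combination h
  have hsurj : ∀ z : K, ∃ y1 y2 : F, z = a y1 + w * a y2 := by
    have hbij : Function.Bijective (fun p : F × F => a p.1 + w * a p.2) := by
      rw [Fintype.bijective_iff_injective_and_card]
      constructor
      · intro p p' hpp
        have := hinj p.1 p.2 p'.1 p'.2 hpp
        exact Prod.ext this.1 this.2
      · rw [Fintype.card_prod, hqF, hqK, pow_two]
    intro z
    obtain ⟨p, hp⟩ := hbij.surjective z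
    exact ⟨p.1, p.2, hp.symm⟩
  -- the quadratic form is the norm
  have hQ : ∀ y1 y2 : F, a (Qf y1 y2) = (a y1 + w * a y2) * (a y1 + w ^ q * a y2) := by
    intro y1 y2
    simp only [Qf, map_add, map_mul, map_pow, ht, hn, pow_succ]
    ring
  have hQ0 : ∀ y1 y2 : F, Qf y1 y2 = 0 → y1 = 0 ∧ y2 = 0 := by
    intro y1 y2 h
    have h' : (a y1 + w * a y2) * (a y1 + w ^ q * a y2) = 0 := by
      rw [← hQ, h, map_zero]
    rcases mul_eq_zero.mp h' with hc | hc
    · have := hinj y1 y2 0 0 (by simpa using hc)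
      exact this
    · by_cases hy2 : y2 = 0
      · subst hy2
        simp only [map_zero, mul_zero, add_zero, map_eq_zero] at hc
        exact ⟨hc, rfl⟩
      · exfalso
        apply hur (-y1 * y2⁻¹)
        have hay2 : a y2 ≠ 0 := by simpa using hy2
        rw [map_mul, map_neg, map_inv₀, mul_inv_eq_iff_eq_mul₀ hay2]
        linear_combination -hc
    -- end hQ0
  have hn0 : n ≠ 0 := by
    intro h
    rw [h, map_zero] at hn
    exact hw0 ((pow_eq_zero_iff (Nat.succ_ne_zero q)).mp hn.symm)
  -- affine points of E
  set pt : F → F → (Fin 4 → F) := fun y1 y2 => ![1, y1, y2, Qf y1 y2] with hpt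
  have hptE : ∀ y1 y2 : F, pt y1 y2 ∈ Epts := by
    intro y1 y2
    refine ⟨⟨0, by simp [hpt], fun j hj => absurd hj (Fin.not_lt_zero j)⟩, ?_⟩
    simp [hpt]
  have he3E : e3 ∈ Epts := by
    refine ⟨⟨3, by simp [e3], ?_⟩, by simp [e3, Qf]⟩
    intro j hj
    fin_cases j
    · simp [e3]
    · simp [e3]
    · simp [e3]
    · exact absurd hj (by decide)
  have hE : ∀ p ∈ Epts, p = e3 ∨ p = pt (p 1) (p 2) := by
    rintro p ⟨⟨i, hi1, hi0⟩, heq⟩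
    fin_cases i
    · right
      have h01 : p 0 = 1 := hi1
      have h3 : p 3 = Qf (p 1) (p 2) := by rw [← heq, h01, one_mul]
      funext j
      fin_cases j
      · simpa [hpt] using h01
      · simp [hpt]
      · simp [hpt]
      · simpa [hpt] using h3
    · exfalso
      have h11 : p 1 = 1 := hi1
      have h0 : p 0 = 0 := hi0 0 (by decide)
      rw [h0, zero_mul] at heq
      have := (hQ0 (p 1) (p 2) heq.symm).1
      rw [h11] at this
      exact one_ne_zero this
    · exfalso
      have h21 : p 2 = 1 := hi1
      have h0 : p 0 = 0 := hi0 0 (by decide)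
      rw [h0, zero_mul] at heq
      have := (hQ0 (p 1) (p 2) heq.symm).2
      rw [h21] at this
      exact one_ne_zero this
    · left
      have h31 : p 3 = 1 := hi1
      funext j
      fin_cases j
      · simpa [e3] using hi0 0 (by decide)
      · simpa [e3] using hi0 1 (by decide)
      · simpa [e3] using hi0 2 (by decide)
      · simpa [e3] using h31
  -- the step computations
  have hzstep : ∀ y1 y2 : F, a (-n * y2) + w * a (y1 + t * y2)
      = w * (a y1 + w * a y2) := by
    intro y1 y2
    simp only [map_mul, map_add, map_neg, ht, hn, pow_succ]
    ring
  have hQmul : ∀ y1 y2 : F, Qf (-(n * y2)) (y1 + t * y2) = n * Qf y1 y2 := by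
    intro y1 y2
    apply hainj
    simp only [map_mul, hQ, map_add, map_neg, ht, hn, pow_succ]
    ring
  have hmul : ∀ v : Fin 4 → F, M.mulVec v =
      ![v 0, -n * v 2, v 1 + t * v 2, n * v 3] := by
    intro v
    funext i
    fin_cases i <;>
      simp [M, Matrix.mulVec, dotProduct, Fin.sum_univ_four]
  have hstep : ∀ y1 y2 : F, M.mulVec (pt y1 y2)
      = pt (-n * y2) (y1 + t * y2) := by
    intro y1 y2
    rw [hmul]
    funext j
    fin_cases j <;> simp [hpt, hQmul]
  have hiter : ∀ (k : ℕ) (y1 y2 : F), ∃ y1' y2',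
      (M ^ k).mulVec (pt y1 y2) = pt y1' y2' ∧
      a y1' + w * a y2' = w ^ k * (a y1 + w * a y2) := by
    intro k
    induction k with
    | zero =>
      intro y1 y2
      exact ⟨y1, y2, by rw [pow_zero, Matrix.one_mulVec], by rw [pow_zero, one_mul]⟩
    | succ m ih =>
      intro y1 y2
      obtain ⟨b1, b2, hb, hz⟩ := ih y1 y2
      refine ⟨-n * b2, b1 + t * b2, ?_, ?_⟩
      · rw [pow_succ', ← Matrix.mulVec_mulVec, hb, hstep]
      · rw [hzstep, hz, pow_succ']; ring
  have hpt00 : pt 0 0 = e0 := by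
    funext j
    fin_cases j <;> simp [hpt, e0, Qf]
  refine ⟨?_, ?_, ?_, ?_⟩
  · -- E maps to itself
    intro p hp
    rcases hE p hp with hpe | hpe
    · refine ⟨e3, he3E, n, hn0, ?_⟩
      rw [hpe]
      funext i
      fin_cases i <;>
        simp [M, e3, Matrix.mulVec, dotProduct, Fin.sum_univ_four]
    · refine ⟨pt (-n * p 2) (p 1 + t * p 2), hptE _ _, 1, one_ne_zero, ?_⟩
      rw [one_smul]
      conv_lhs => rw [hpe]
      exact hstep _ _
  · -- e0 fixed
    refine ⟨1, one_ne_zero, ?_⟩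
    rw [one_smul]
    funext i
    fin_cases i <;>
      simp [M, e0, Matrix.mulVec, dotProduct, Fin.sum_univ_four]
  · -- e3 fixed
    refine ⟨n, hn0, ?_⟩
    funext i
    fin_cases i <;>
      simp [M, e3, Matrix.mulVec, dotProduct, Fin.sum_univ_four]
  · -- single cycle
    intro p hp hp0 hp3 p' hp' hp'0 hp'3
    rcases hE p hp with hpe | hpe
    · exact absurd hpe hp3
    rcases hE p' hp' with hpe' | hpe'
    · exact absurd hpe' hp'3
    have hz0 : a (p 1) + w * a (p 2) ≠ 0 := by
      intro h
      apply hp0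
      have h00 := hinj (p 1) (p 2) 0 0 (by simpa using h)
      rw [hpe, h00.1, h00.2, hpt00]
    have hz'0 : a (p' 1) + w * a (p' 2) ≠ 0 := by
      intro h
      apply hp'0
      have h00 := hinj (p' 1) (p' 2) 0 0 (by simpa using h)
      rw [hpe', h00.1, h00.2, hpt00]
    obtain ⟨k, hk⟩ := hw _ (mul_ne_zero hz'0 (inv_ne_zero hz0))
    have hzz : a (p' 1) + w * a (p' 2) = w ^ k * (a (p 1) + w * a (p 2)) := by
      rw [← hk]
      field_simp
    obtain ⟨y1', y2', hM, hv⟩ := hiter k (p 1) (p 2)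
    have h00 := hinj y1' y2' (p' 1) (p' 2) (by rw [hv, ← hzz])
    refine ⟨k, 1, one_ne_zero, ?_⟩
    rw [one_smul]
    conv_lhs => rw [hpe]
    rw [hM, h00.1, h00.2, ← hpe']
end

section
/- The map P¹(F_{q²}) → E(F_q) induced by (x:y) ↦ μ_tw^{-1}(y^{q+1} : x y^q : x^q y : x^{q+1}) is a bijection between the q²+1 rational points of the projective line over F_{q²} and the q²+1 F_q-rational points of the elliptic quadric E. -/
/-- The map `P¹(F_{q²}) → E(F_q)` induced by
`(x:y) ↦ μ_tw⁻¹ (y^{q+1} : x y^q : x^q y : x^{q+1})` is a bijection between the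
`q²+1` rational points of the projective line over `F_{q²}` and the `q²+1`
`F_q`-rational points of the elliptic quadric `E : x₀x₃ = Q(x₁,x₂)`, where
`Q(u,v) = (u+ωv)(u+ω^q v)` and `μ_tw` has matrix rows
`(1,0,0,0),(0,1,ω,0),(0,1,ω^q,0),(0,0,0,1)`. -/
theorem stmt_12 (F K : Type) [Field F] [Field K] [Algebra F K]
    [Fintype F] [Fintype K] (q : ℕ)
    (hqF : Fintype.card F = q) (hqK : Fintype.card K = q ^ 2)
    (ω : K) (hω : ω ∉ Set.range (algebraMap F K))
    (t n : F) (ht : algebraMap F K t = ω + ω ^ q)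
    (hn : algebraMap F K n = ω ^ (q + 1)) :
    let A : Matrix (Fin 4) (Fin 4) K :=
      !![1, 0, 0, 0; 0, 1, ω, 0; 0, 1, ω ^ q, 0; 0, 0, 0, 1]
    -- the twisted embedding ψ on the points of P¹(F_{q²}): (x:1) and (1:0)
    let ψ : Option K → (Fin 4 → K) := fun o =>
      o.elim ![0, 0, 0, 1] fun x => ![1, x, x ^ q, x ^ (q + 1)]
    let Φ : Option K → (Fin 4 → K) := fun p => A⁻¹.mulVec (ψ p)
    let Qf : F → F → F := fun u v => u ^ 2 + t * u * v + n * v ^ 2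
    Function.Injective Φ ∧
    Set.range Φ = {pt : Fin 4 → K | ∃ u v : F, pt = ![1, algebraMap F K u,
        algebraMap F K v, algebraMap F K (Qf u v)]} ∪ {![0, 0, 0, 1]} := by
  intro A ψ Φ Qf
  classical
  have hinj : Function.Injective (algebraMap F K) := (algebraMap F K).injective
  have hq2 : 2 ≤ q := by
    have := Fintype.one_lt_card (α := F)
    omega
  -- Frobenius fixes the image of F
  have hfix : ∀ u : F, (algebraMap F K u) ^ q = algebraMap F K u := by
    intro u
    rw [← map_pow, ← hqF, FiniteField.pow_card]
  -- ω is not fixed by the q-power map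
  have hωq : ω ^ q ≠ ω := by
    intro hcon
    set f : Polynomial K := Polynomial.X ^ q - Polynomial.X with hf
    have hfd : f.natDegree = q := by
      have h1 : (Polynomial.X : Polynomial K).natDegree
          < (Polynomial.X ^ q : Polynomial K).natDegree := by
        rw [Polynomial.natDegree_X_pow, Polynomial.natDegree_X]; omega
      rw [hf, Polynomial.natDegree_sub_eq_left_of_natDegree_lt h1,
        Polynomial.natDegree_X_pow]
    have hf0 : f ≠ 0 := by
      intro h
      rw [h] at hfd
      simp at hfd
      omega
    set s : Finset K := insert ω (Finset.univ.image (algebraMap F K)) with hs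
    have hωs : ω ∉ Finset.univ.image (algebraMap F K) := by
      intro hm
      obtain ⟨a, _, ha⟩ := Finset.mem_image.mp hm
      exact hω ⟨a, ha⟩
    have hcard : s.card = q + 1 := by
      rw [hs, Finset.card_insert_of_notMem hωs,
        Finset.card_image_of_injective _ hinj, Finset.card_univ, hqF]
    have hsub : s.val ⊆ f.roots := by
      intro a ha
      rw [Finset.mem_val] at ha
      rw [Polynomial.mem_roots hf0]
      have haq : a ^ q = a := by
        rcases Finset.mem_insert.mp ha with rfl | hm
        · exact hcon
        · obtain ⟨b, _, rfl⟩ := Finset.mem_image.mp hm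
          exact hfix b
      simp [f, Polynomial.IsRoot, haq]
    have := Polynomial.card_le_degree_of_subset_roots hsub
    omega
  -- A is invertible
  have hdet : A.det = ω ^ q - ω := by
    simp [A, Matrix.det_succ_row_zero, Fin.sum_univ_succ]
    ring
  have hdu : IsUnit A.det := by
    rw [hdet]
    exact isUnit_iff_ne_zero.mpr (sub_ne_zero.mpr hωq)
  have hΦiff : ∀ o pt, Φ o = pt ↔ A.mulVec pt = ψ o := by
    intro o pt
    constructor
    · rintro rfl
      show A.mulVec (A⁻¹.mulVec _) = _
      rw [Matrix.mulVec_mulVec, Matrix.mul_nonsing_inv _ hdu, Matrix.one_mulVec]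
    · intro h
      show A⁻¹.mulVec _ = pt
      rw [← h, Matrix.mulVec_mulVec, Matrix.nonsing_inv_mul _ hdu, Matrix.one_mulVec]
  have hmul : ∀ w : Fin 4 → K,
      A.mulVec w = ![w 0, w 1 + ω * w 2, w 1 + ω ^ q * w 2, w 3] := by
    intro w
    funext i
    fin_cases i <;>
      simp [A, Matrix.mulVec, dotProduct, Fin.sum_univ_four]
  -- characteristic / additivity of the q-power map
  obtain ⟨p, hpch⟩ := CharP.exists F
  haveI : CharP F p := hpch
  obtain ⟨m, hp, hqp⟩ := FiniteField.card F p
  haveI : Fact p.Prime := ⟨hp⟩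
  haveI : CharP K p := charP_of_injective_algebraMap hinj p
  rw [hqF] at hqp
  have haddq : ∀ a b : K, (a + b) ^ q = a ^ q + b ^ q := by
    intro a b
    rw [hqp]
    exact add_pow_char_pow (p := p) a b (↑m)
  -- the key computation
  have hval : ∀ u v : F,
      Φ (some (algebraMap F K u + ω * algebraMap F K v)) =
        ![1, algebraMap F K u, algebraMap F K v, algebraMap F K (Qf u v)] := by
    intro u v
    rw [hΦiff, hmul]
    set x : K := algebraMap F K u + ω * algebraMap F K v with hx
    have hxq : x ^ q = algebraMap F K u + ω ^ q * algebraMap F K v := by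
      rw [hx, haddq, mul_pow, hfix, hfix]
    show _ = ![1, x, x ^ q, x ^ (q + 1)]
    funext i
    fin_cases i
    · simp
    · simp [hx]
    · simp [hxq]
    · show algebraMap F K (Qf u v) = x ^ (q + 1)
      rw [pow_succ, hxq, hx]
      show algebraMap F K (u ^ 2 + t * u * v + n * v ^ 2) = _
      rw [map_add, map_add, map_mul, map_mul, map_mul, map_pow, map_pow, ht, hn,
        pow_succ]
      ring
    -- spanning: every element of K is u + ω v
  have hfinrank : Module.finrank F K = 2 := by
    have hc : Fintype.card K = Fintype.card F ^ Module.finrank F K :=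
      Module.card_eq_pow_finrank
    rw [hqF, hqK] at hc
    exact (Nat.pow_right_injective hq2 hc.symm)
  have li : LinearIndependent F ![(1 : K), ω] := by
    rw [LinearIndependent.pair_iff]
    intro s u hsu
    by_cases hu : u = 0
    · subst hu
      simp only [zero_smul, add_zero, smul_eq_mul, mul_one] at hsu
      refine ⟨?_, rfl⟩
      have : algebraMap F K s = 0 := by rwa [Algebra.smul_def, mul_one] at hsu
      exact hinj (by simpa using this)
    · exfalso
      apply hω
      refine ⟨-s / u, ?_⟩
      rw [Algebra.smul_def, mul_one, Algebra.smul_def] at hsu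
      field_simp
      have h0 : algebraMap F K u ≠ 0 := fun h => hu (hinj (by simpa using h))
      rw [map_neg, map_div₀, ← neg_div, div_eq_iff h0]
      linear_combination -hsu
  have hspan : ∀ x : K, ∃ u v : F,
      x = algebraMap F K u + ω * algebraMap F K v := by
    intro x
    let B := basisOfLinearIndependentOfCardEqFinrank li (by simp [hfinrank])
    have hB : ⇑B = ![(1 : K), ω] := coe_basisOfLinearIndependentOfCardEqFinrank li _
    refine ⟨B.repr x 0, B.repr x 1, ?_⟩
    have := B.sum_repr x
    rw [Fin.sum_univ_two, hB] at this
    conv_lhs => rw [← this]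
    simp [Algebra.smul_def]
    ring
  -- injectivity of ψ, hence of Φ
  have hψ : Function.Injective ψ := by
    intro a b hab
    match a, b with
    | Option.none, Option.none => rfl
    | Option.none, Option.some y =>
      exact absurd (congrFun hab 0) (by simp [ψ])
    | Option.some x, Option.none =>
      exact absurd (congrFun hab 0) (by simp [ψ])
    | Option.some x, Option.some y =>
      have := congrFun hab 1
      simp only [ψ, Option.elim] at this
      simp only [Matrix.cons_val_one, Matrix.head_cons] at this
      exact congrArg _ this
  constructor
  · intro a b hab
    apply hψ
    have h1 : A.mulVec (Φ b) = ψ a := (hΦiff a (Φ b)).mp hab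
    have h2 : A.mulVec (Φ b) = ψ b := (hΦiff b (Φ b)).mp rfl
    rw [h1] at h2
    exact h2
  · ext pt
    constructor
    · rintro ⟨o, rfl⟩
      match o with
      | Option.none =>
        right
        have : Φ Option.none = ![0, 0, 0, 1] := by
          rw [hΦiff, hmul]
          show _ = ![0, 0, 0, 1]
          funext i
          fin_cases i <;> simp
        simp [this]
      | Option.some x =>
        left
        obtain ⟨u, v, hx⟩ := hspan x
        exact ⟨u, v, by rw [hx]; exact hval u v⟩
    · rintro (⟨u, v, rfl⟩ | h)
      · exact ⟨some (algebraMap F K u + ω * algebraMap F K v), hval u v⟩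
      · refine ⟨Option.none, ?_⟩
        simp only [Set.mem_singleton_iff] at h
        rw [h, hΦiff, hmul]
        show _ = ![0, 0, 0, 1]
        funext i
        fin_cases i <;> simp
end
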